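/- arXiv:0711.1143 — 5 statements merged into one kernel-verified Lean document; each statement's English description precedes it below -/
import Mathlib

section
/- Let λ = (λ_1,...,λ_T) ∈ ℝ_+^T \ {0}. (a) If (X_t)_{t∈𝕋} ∈ A(W) solves Problem P_λ (i.e. maximizes ∑_{t∈𝕋} λ_t E[u_t(Ỹ_t)] over (Y_t) ∈ A(W)), then (λ_t u_t'(X̃_t))_{t∈𝕋} is an (F_t)-martingale. (b) If Problem P_λ has a solution, then λ_t > 0 for every t ∈ 𝕋. -/
open MeasureTheory Finset Real

noncomputable section

/-- `A(W)`: the set of admissible intertemporal allocations of the risk `W`: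
adapted processes `(Y_t)_{t∈𝕋}` with each `Y_t` essentially bounded and
`∑_{t∈𝕋} Y_t/B_t = W` a.s. -/
def IsAlloc {Ω : Type*} [mΩ : MeasurableSpace Ω] (μ : Measure Ω) (T : ℕ)
    (ℱ : ℕ → MeasurableSpace Ω) (B : ℕ → Ω → ℝ) (W : Ω → ℝ) (Y : ℕ → Ω → ℝ) : Prop :=
  (∀ t ∈ Finset.Icc 1 T, Measurable[ℱ t] (Y t) ∧ ∃ C : ℝ, ∀ᵐ ω ∂μ, |Y t ω| ≤ C) ∧
  ∀ᵐ ω ∂μ, ∑ t ∈ Finset.Icc 1 T, Y t ω / B t ω = W ω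

/-- The integrated expected utility `∑_{t∈𝕋} E[u_t(Ỹ_t)]` of an allocation. -/
def allocVal {Ω : Type*} [mΩ : MeasurableSpace Ω] (μ : Measure Ω) (T : ℕ)
    (u : ℕ → ℝ → ℝ) (B : ℕ → Ω → ℝ) (Y : ℕ → Ω → ℝ) : ℝ :=
  ∑ t ∈ Finset.Icc 1 T, ∫ ω, u t (Y t ω / B t ω) ∂μ

/-- The utility functional `U(W) = sup { ∑_t E[u_t(Ỹ_t)] : Y ∈ A(W) }`. -/
def Util {Ω : Type*} [mΩ : MeasurableSpace Ω] (μ : Measure Ω) (T : ℕ)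
    (ℱ : ℕ → MeasurableSpace Ω) (u : ℕ → ℝ → ℝ) (B : ℕ → Ω → ℝ) (W : Ω → ℝ) : ℝ :=
  sSup {s : ℝ | ∃ Y, IsAlloc μ T ℱ B W Y ∧ s = allocVal μ T u B Y}

set_option linter.unusedSectionVars false
set_option linter.unusedVariables false
set_option maxHeartbeats 1000000

section Aux
variable {Ω : Type*} [mΩ : MeasurableSpace Ω]

lemma aux_int_of_bdd (μ : Measure Ω) [IsFiniteMeasure μ] {f : Ω → ℝ}
    (hf : AEStronglyMeasurable f μ) {C : ℝ} (h : ∀ᵐ ω ∂μ, |f ω| ≤ C) : Integrable f μ := by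
  refine Integrable.mono' (integrable_const C) hf ?_
  simpa [Real.norm_eq_abs] using h

lemma aux_B_one_le {T : ℕ} {r : ℕ → Ω → ℝ}
    (hr_nonneg : ∀ t ∈ Finset.Icc 1 T, ∀ ω, 0 ≤ r t ω)
    {B : ℕ → Ω → ℝ} (hB : ∀ t ω, B t ω = ∏ k ∈ Finset.Icc 1 t, (1 + r k ω))
    {t : ℕ} (htT : t ≤ T) (ω : Ω) : 1 ≤ B t ω := by
  rw [hB]
  have h1 : (1:ℝ) = ∏ _k ∈ Finset.Icc 1 t, (1:ℝ) := by simp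
  rw [h1]
  refine Finset.prod_le_prod (fun k hk => zero_le_one) (fun k hk => ?_)
  have hk' : k ∈ Finset.Icc 1 T := by
    simp only [Finset.mem_Icc] at hk ⊢; exact ⟨hk.1, hk.2.trans htT⟩
  have := hr_nonneg k hk' ω
  linarith

lemma aux_B_bdd {T : ℕ} {r : ℕ → Ω → ℝ}
    (hr_nonneg : ∀ t ∈ Finset.Icc 1 T, ∀ ω, 0 ≤ r t ω)
    (hr_bdd : ∀ t ∈ Finset.Icc 1 T, ∃ C : ℝ, ∀ ω, r t ω ≤ C)
    {B : ℕ → Ω → ℝ} (hB : ∀ t ω, B t ω = ∏ k ∈ Finset.Icc 1 t, (1 + r k ω))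
    {t : ℕ} (htT : t ≤ T) : ∃ D : ℝ, ∀ ω, B t ω ≤ D := by
  classical
  set C : ℕ → ℝ := fun k => if h : k ∈ Finset.Icc 1 T then (hr_bdd k h).choose else 0 with hC
  refine ⟨∏ k ∈ Finset.Icc 1 t, (1 + max (C k) 0), fun ω => ?_⟩
  rw [hB]
  refine Finset.prod_le_prod (fun k hk => ?_) (fun k hk => ?_)
  · have hk' : k ∈ Finset.Icc 1 T := by
      simp only [Finset.mem_Icc] at hk ⊢; exact ⟨hk.1, hk.2.trans htT⟩
    have := hr_nonneg k hk' ω; linarith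
  · have hk' : k ∈ Finset.Icc 1 T := by
      simp only [Finset.mem_Icc] at hk ⊢; exact ⟨hk.1, hk.2.trans htT⟩
    have h1 : r k ω ≤ C k := by
      simp only [hC, dif_pos hk']
      exact (hr_bdd k hk').choose_spec ω
    have := le_max_left (C k) 0
    linarith

lemma aux_B_meas {T : ℕ} {ℱ : ℕ → MeasurableSpace Ω} (hℱmono : Monotone ℱ)
    {r : ℕ → Ω → ℝ} (hr_meas : ∀ t ∈ Finset.Icc 1 T, Measurable[ℱ (t - 1)] (r t))
    {B : ℕ → Ω → ℝ} (hB : ∀ t ω, B t ω = ∏ k ∈ Finset.Icc 1 t, (1 + r k ω))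
    {t : ℕ} (htT : t ≤ T) : Measurable[ℱ t] (B t) := by
  have : B t = fun ω => ∏ k ∈ Finset.Icc 1 t, (1 + r k ω) := funext (hB t)
  rw [this]
  refine Finset.measurable_prod _ fun k hk => ?_
  have hk' : k ∈ Finset.Icc 1 T := by
    simp only [Finset.mem_Icc] at hk ⊢; exact ⟨hk.1, hk.2.trans htT⟩
  have hkt : k ≤ t := (Finset.mem_Icc.mp hk).2
  have hle : ℱ (k - 1) ≤ ℱ t := hℱmono (by omega)
  exact measurable_const.add ((hr_meas k hk').mono hle le_rfl)

lemma aux_hasDeriv (μ : Measure Ω) [IsProbabilityMeasure μ] {uv : ℝ → ℝ}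
    (huv : ContDiff ℝ 1 uv) {g Z' : Ω → ℝ} (hg : Measurable g) (hZ'm : Measurable Z')
    (hZ'b : ∀ ω, |Z' ω| ≤ 1) {M : ℝ} (hM0 : 0 ≤ M) (hgb : ∀ᵐ ω ∂μ, |g ω| ≤ M) :
    HasDerivAt (fun ε : ℝ => ∫ ω, uv (g ω + ε * Z' ω) ∂μ)
      (∫ ω, deriv uv (g ω) * Z' ω ∂μ) 0 := by
  have hcv : Continuous uv := huv.continuous
  have hcv' : Continuous (deriv uv) := huv.continuous_deriv le_rfl
  obtain ⟨K, hK⟩ := (isCompact_Icc (a := -(M+1)) (b := M+1)).exists_bound_of_continuousOn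
    hcv'.continuousOn
  obtain ⟨K0, hK0⟩ := (isCompact_Icc (a := -M) (b := M)).exists_bound_of_continuousOn
    hcv.continuousOn
  have harg : ∀ ε : ℝ, Measurable fun ω => g ω + ε * Z' ω :=
    fun ε => hg.add (hZ'm.const_mul ε)
  have key := hasDerivAt_integral_of_dominated_loc_of_deriv_le
    (F := fun ε ω => uv (g ω + ε * Z' ω))
    (F' := fun ε ω => deriv uv (g ω + ε * Z' ω) * Z' ω)
    (x₀ := 0) (bound := fun _ => K) (s := Metric.ball 0 1) (μ := μ) (Metric.ball_mem_nhds 0 zero_lt_one)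
    (Filter.Eventually.of_forall fun ε =>
      ((hcv.measurable.comp (harg ε)).aestronglyMeasurable))
    ?_ ?_ ?_ (integrable_const K) ?_
  · have := key.2
    simpa only [zero_mul, add_zero] using this
  · -- integrability of F 0
    refine aux_int_of_bdd μ ((hcv.measurable.comp (harg 0)).aestronglyMeasurable) (C := K0) ?_
    filter_upwards [hgb] with ω hω
    simp only [zero_mul, add_zero]
    have : g ω ∈ Set.Icc (-M) M := by constructor <;> [linarith [abs_le.mp hω];
      exact (abs_le.mp hω).2]
    simpa [Real.norm_eq_abs] using hK0 _ this
  · exact ((hcv'.measurable.comp (harg 0)).mul hZ'm).aestronglyMeasurable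
  · -- bound
    filter_upwards [hgb] with ω hω
    intro ε hε
    have hεb : |ε| < 1 := by simpa [Real.dist_eq] using Metric.mem_ball.mp hε
    have hmem : g ω + ε * Z' ω ∈ Set.Icc (-(M+1)) (M+1) := by
      have h1 : |ε * Z' ω| ≤ 1 := by
        rw [abs_mul]
        have := mul_le_mul hεb.le (hZ'b ω) (abs_nonneg _) zero_le_one
        linarith
      have h2 := abs_le.mp hω
      have h3 := abs_le.mp h1
      constructor <;> [linarith; linarith]
    have hKb := hK _ hmem
    rw [Real.norm_eq_abs] at hKb ⊢
    rw [abs_mul]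
    have := mul_le_mul hKb (hZ'b ω) (abs_nonneg _) (le_trans (abs_nonneg _) hKb)
    linarith
  · -- differentiability
    refine Filter.Eventually.of_forall fun ω => fun ε _ => ?_
    have h1 : HasDerivAt (fun ε : ℝ => g ω + ε * Z' ω) (Z' ω) ε := by
      simpa using ((hasDerivAt_id ε).mul_const (Z' ω)).const_add (g ω)
    have h2 : HasDerivAt uv (deriv uv (g ω + ε * Z' ω)) (g ω + ε * Z' ω) :=
      ((huv.differentiable one_ne_zero) _).hasDerivAt
    exact h2.comp ε h1

lemma aux_key (μ : Measure Ω) [IsProbabilityMeasure μ] (T : ℕ)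
    (ℱ : ℕ → MeasurableSpace Ω) (hℱmono : Monotone ℱ) (hℱle : ∀ t, ℱ t ≤ mΩ)
    (r : ℕ → Ω → ℝ)
    (hr_meas : ∀ t ∈ Finset.Icc 1 T, Measurable[ℱ (t - 1)] (r t))
    (hr_nonneg : ∀ t ∈ Finset.Icc 1 T, ∀ ω, 0 ≤ r t ω)
    (hr_bdd : ∀ t ∈ Finset.Icc 1 T, ∃ C : ℝ, ∀ ω, r t ω ≤ C)
    (B : ℕ → Ω → ℝ) (hB : ∀ t ω, B t ω = ∏ k ∈ Finset.Icc 1 t, (1 + r k ω))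
    (u : ℕ → ℝ → ℝ)
    (hu_diff : ∀ t ∈ Finset.Icc 1 T, ContDiff ℝ 1 (u t))
    (W : Ω → ℝ) (lam : ℕ → ℝ)
    (X : ℕ → Ω → ℝ) (hX : IsAlloc μ T ℱ B W X)
    (hXopt : ∀ Y, IsAlloc μ T ℱ B W Y →
      ∑ t ∈ Finset.Icc 1 T, lam t * ∫ ω, u t (Y t ω / B t ω) ∂μ ≤
        ∑ t ∈ Finset.Icc 1 T, lam t * ∫ ω, u t (X t ω / B t ω) ∂μ)
    (s t : ℕ) (hs : s ∈ Finset.Icc 1 T) (ht : t ∈ Finset.Icc 1 T) (hst : s ≤ t)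
    (A : Set Ω) (hA : MeasurableSet[ℱ s] A) :
    lam s * ∫ ω in A, deriv (u s) (X s ω / B s ω) ∂μ
      = lam t * ∫ ω in A, deriv (u t) (X t ω / B t ω) ∂μ := by
  rcases eq_or_lt_of_le hst with rfl | hlt
  · rfl
  have hts : t ≠ s := (Nat.ne_of_lt hlt).symm
  have hsT := (Finset.mem_Icc.mp hs).2
  have htT := (Finset.mem_Icc.mp ht).2
  have hAm : MeasurableSet A := hℱle s _ hA
  classical
  set Z : Ω → ℝ := A.indicator (fun _ => (1:ℝ)) with hZ
  have hZmeasS : Measurable[ℱ s] Z := measurable_const.indicator hA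
  have hZmeasT : Measurable[ℱ t] Z := hZmeasS.mono (hℱmono hst) le_rfl
  have hZmeas : Measurable Z := hZmeasS.mono (hℱle s) le_rfl
  have hZb : ∀ ω, |Z ω| ≤ 1 := fun ω => by
    by_cases h : ω ∈ A <;>
      simp [hZ, Set.indicator_of_mem, Set.indicator_of_notMem, h]
  have hB1s : ∀ ω, 1 ≤ B s ω := fun ω => aux_B_one_le hr_nonneg hB hsT ω
  have hB1t : ∀ ω, 1 ≤ B t ω := fun ω => aux_B_one_le hr_nonneg hB htT ω
  obtain ⟨Ds, hDs⟩ := aux_B_bdd hr_nonneg hr_bdd hB hsT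
  obtain ⟨Dt, hDt⟩ := aux_B_bdd hr_nonneg hr_bdd hB htT
  have hBmeasS : Measurable[ℱ s] (B s) := aux_B_meas hℱmono hr_meas hB hsT
  have hBmeasT : Measurable[ℱ t] (B t) := aux_B_meas hℱmono hr_meas hB htT
  have hXmeasS : Measurable (X s) := (hX.1 s hs).1.mono (hℱle s) le_rfl
  have hXmeasT : Measurable (X t) := (hX.1 t ht).1.mono (hℱle t) le_rfl
  have hgS : Measurable (fun ω => X s ω / B s ω) :=
    hXmeasS.div (hBmeasS.mono (hℱle s) le_rfl)
  have hgT : Measurable (fun ω => X t ω / B t ω) :=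
    hXmeasT.div (hBmeasT.mono (hℱle t) le_rfl)
  obtain ⟨Ms, hMs⟩ := (hX.1 s hs).2
  obtain ⟨Mt, hMt⟩ := (hX.1 t ht).2
  set M : ℝ := max (max Ms Mt) 0 with hMdef
  have hM0 : 0 ≤ M := le_max_right _ _
  have hMsb : ∀ᵐ ω ∂μ, |X s ω / B s ω| ≤ M := by
    filter_upwards [hMs] with ω hω
    have h1 : |X s ω / B s ω| = |X s ω| / B s ω := by
      rw [abs_div, abs_of_pos (lt_of_lt_of_le zero_lt_one (hB1s ω))]
    have h2 : |X s ω| / B s ω ≤ |X s ω| := div_le_self (abs_nonneg _) (hB1s ω)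
    have h3 : Ms ≤ M := le_trans (le_max_left _ _) (le_max_left _ _)
    linarith [h1 ▸ h2]
  have hMtb : ∀ᵐ ω ∂μ, |X t ω / B t ω| ≤ M := by
    filter_upwards [hMt] with ω hω
    have h1 : |X t ω / B t ω| = |X t ω| / B t ω := by
      rw [abs_div, abs_of_pos (lt_of_lt_of_le zero_lt_one (hB1t ω))]
    have h2 : |X t ω| / B t ω ≤ |X t ω| := div_le_self (abs_nonneg _) (hB1t ω)
    have h3 : Mt ≤ M := le_trans (le_max_right _ _) (le_max_left _ _)
    linarith [h1 ▸ h2]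
  have hdS := aux_hasDeriv μ (hu_diff s hs) hgS hZmeas hZb hM0 hMsb
  have hdT := aux_hasDeriv μ (hu_diff t ht) hgT hZmeas.neg
    (fun ω => by simpa using hZb ω) hM0 hMtb
  set φ : ℝ → ℝ := fun ε => lam s * ∫ ω, u s (X s ω / B s ω + ε * Z ω) ∂μ
      + lam t * ∫ ω, u t (X t ω / B t ω + ε * -Z ω) ∂μ with hφ
  have hφd : HasDerivAt φ (lam s * ∫ ω, deriv (u s) (X s ω / B s ω) * Z ω ∂μ
      + lam t * ∫ ω, deriv (u t) (X t ω / B t ω) * -Z ω ∂μ) 0 :=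
    (hdS.const_mul (lam s)).add (hdT.const_mul (lam t))
  have hmax : ∀ ε : ℝ, φ ε ≤ φ 0 := by
    intro ε
    set Y : ℕ → Ω → ℝ := fun k ω => if k = s then X s ω + ε * (B s ω * Z ω)
        else if k = t then X t ω - ε * (B t ω * Z ω) else X k ω with hY
    have hYalloc : IsAlloc μ T ℱ B W Y := by
      constructor
      · intro k hk
        by_cases hks : k = s
        · subst hks
          have hYk : Y k = fun ω => X k ω + ε * (B k ω * Z ω) := funext fun ω => by
            simp [hY]
          constructor
          · rw [hYk]
            exact (hX.1 k hk).1.add ((hBmeasS.mul hZmeasS).const_mul ε)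
          · refine ⟨Ms + |ε| * Ds, ?_⟩
            filter_upwards [hMs] with ω hω
            rw [hYk]
            have hb1 : (0:ℝ) ≤ B k ω := le_trans zero_le_one (hB1s ω)
            have hb2 : B k ω ≤ Ds := hDs ω
            have hz := hZb ω
            have h2 : |ε * (B k ω * Z ω)| ≤ |ε| * Ds := by
              rw [abs_mul, abs_mul, abs_of_nonneg hb1]
              have h3 : B k ω * |Z ω| ≤ Ds := by nlinarith [abs_nonneg (Z ω)]
              nlinarith [abs_nonneg ε]
            have := abs_add_le (X k ω) (ε * (B k ω * Z ω))
            simp only []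
            linarith
        · by_cases hkt : k = t
          · subst hkt
            have hYk : Y k = fun ω => X k ω - ε * (B k ω * Z ω) := funext fun ω => by
              simp [hY, hks]
            constructor
            · rw [hYk]
              exact (hX.1 k hk).1.sub ((hBmeasT.mul hZmeasT).const_mul ε)
            · refine ⟨Mt + |ε| * Dt, ?_⟩
              filter_upwards [hMt] with ω hω
              rw [hYk]
              have hb1 : (0:ℝ) ≤ B k ω := le_trans zero_le_one (hB1t ω)
              have hb2 : B k ω ≤ Dt := hDt ω
              have hz := hZb ω
              have h2 : |ε * (B k ω * Z ω)| ≤ |ε| * Dt := by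
                rw [abs_mul, abs_mul, abs_of_nonneg hb1]
                have h3 : B k ω * |Z ω| ≤ Dt := by nlinarith [abs_nonneg (Z ω)]
                nlinarith [abs_nonneg ε]
              have := abs_sub (X k ω) (ε * (B k ω * Z ω))
              simp only []
              linarith
          · have hYk : Y k = X k := funext fun ω => by simp [hY, hks, hkt]
            rw [hYk]
            exact hX.1 k hk
      · filter_upwards [hX.2] with ω hω
        have hsplit : ∀ k ∈ Finset.Icc 1 T, Y k ω / B k ω
            = X k ω / B k ω + ((if k = s then ε * Z ω else 0)
              + (if k = t then -(ε * Z ω) else 0)) := by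
          intro k hk
          have hne : B k ω ≠ 0 := by
            have := aux_B_one_le hr_nonneg hB (Finset.mem_Icc.mp hk).2 ω
            linarith
          by_cases hks : k = s
          · subst hks
            simp only [hY, if_pos rfl, if_neg hlt.ne, if_true]
            field_simp
            ring
          · by_cases hkt : k = t
            · subst hkt
              simp only [hY, if_neg hks, if_pos rfl, if_true]
              field_simp
              ring
            · simp [hY, hks, hkt]
        calc ∑ k ∈ Finset.Icc 1 T, Y k ω / B k ω
            = ∑ k ∈ Finset.Icc 1 T, (X k ω / B k ω + ((if k = s then ε * Z ω else 0)
              + (if k = t then -(ε * Z ω) else 0))) := Finset.sum_congr rfl hsplit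
          _ = W ω := by
              rw [Finset.sum_add_distrib, Finset.sum_add_distrib,
                Finset.sum_ite_eq' (Finset.Icc 1 T) s, Finset.sum_ite_eq' (Finset.Icc 1 T) t,
                if_pos hs, if_pos ht, hω]
              ring
    have hopt := hXopt Y hYalloc
    have hEs : ∫ ω, u s (Y s ω / B s ω) ∂μ
        = ∫ ω, u s (X s ω / B s ω + ε * Z ω) ∂μ := by
      refine integral_congr_ae (Filter.Eventually.of_forall fun ω => ?_)
      have hne : B s ω ≠ 0 := by have := hB1s ω; linarith
      simp only [hY, if_pos rfl]
      congr 1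
      field_simp
    have hEt : ∫ ω, u t (Y t ω / B t ω) ∂μ
        = ∫ ω, u t (X t ω / B t ω + ε * -Z ω) ∂μ := by
      refine integral_congr_ae (Filter.Eventually.of_forall fun ω => ?_)
      have hne : B t ω ≠ 0 := by have := hB1t ω; linarith
      simp only [hY, if_neg hts, if_pos rfl, if_true]
      congr 1
      field_simp
      ring
    have htmem : t ∈ (Finset.Icc 1 T).erase s := Finset.mem_erase.mpr ⟨hts, ht⟩
    have hrw : ∀ f : ℕ → ℝ, ∑ k ∈ Finset.Icc 1 T, f k
        = f s + (f t + ∑ k ∈ ((Finset.Icc 1 T).erase s).erase t, f k) := by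
      intro f
      rw [← Finset.add_sum_erase _ f hs, ← Finset.add_sum_erase _ f htmem]
    rw [hrw (fun k => lam k * ∫ ω, u k (Y k ω / B k ω) ∂μ),
      hrw (fun k => lam k * ∫ ω, u k (X k ω / B k ω) ∂μ)] at hopt

    have hrest : ∑ k ∈ ((Finset.Icc 1 T).erase s).erase t,
        lam k * ∫ ω, u k (Y k ω / B k ω) ∂μ
        = ∑ k ∈ ((Finset.Icc 1 T).erase s).erase t,
        lam k * ∫ ω, u k (X k ω / B k ω) ∂μ := by
      refine Finset.sum_congr rfl fun k hk => ?_
      have hkt : k ≠ t := (Finset.mem_erase.mp hk).1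
      have hks : k ≠ s := (Finset.mem_erase.mp (Finset.mem_erase.mp hk).2).1
      have hYk : Y k = X k := funext fun ω => by simp [hY, hks, hkt]
      rw [hYk]
    rw [hrest, hEs, hEt] at hopt
    simp only [hφ]
    simp only [zero_mul, add_zero]
    linarith
  have hlm : IsLocalMax φ 0 := Filter.Eventually.of_forall hmax
  have hD := hlm.hasDerivAt_eq_zero hφd
  have hindS : ∫ ω, deriv (u s) (X s ω / B s ω) * Z ω ∂μ
      = ∫ ω in A, deriv (u s) (X s ω / B s ω) ∂μ := by
    rw [← integral_indicator hAm]
    refine integral_congr_ae (Filter.Eventually.of_forall fun ω => ?_)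
    by_cases h : ω ∈ A <;>
      simp [hZ, Set.indicator_of_mem, Set.indicator_of_notMem, h]
  have hindT : ∫ ω, deriv (u t) (X t ω / B t ω) * -Z ω ∂μ
      = -∫ ω in A, deriv (u t) (X t ω / B t ω) ∂μ := by
    rw [← integral_indicator hAm, ← integral_neg]
    refine integral_congr_ae (Filter.Eventually.of_forall fun ω => ?_)
    by_cases h : ω ∈ A <;>
      simp [hZ, Set.indicator_of_mem, Set.indicator_of_notMem, h]
  rw [hindS, hindT] at hD
  linarith

end Aux

/-- Lemma 2.11: if `λ ∈ ℝ₊^T \ {0}` and `(X_t) ∈ A(W)` solves Problem `P_λ`, then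
(a) `(λ_t u_t'(X̃_t))` is an `(F_t)`-martingale, and (b) every `λ_t` is positive. -/
theorem problemLambda_solution_martingale_and_pos
    {Ω : Type*} [mΩ : MeasurableSpace Ω] (μ : Measure Ω) [IsProbabilityMeasure μ]
    (T : ℕ) (hT : 1 ≤ T)
    (ℱ : ℕ → MeasurableSpace Ω) (hℱmono : Monotone ℱ) (hℱle : ∀ t, ℱ t ≤ mΩ)
    (r : ℕ → Ω → ℝ)
    (hr_meas : ∀ t ∈ Finset.Icc 1 T, Measurable[ℱ (t - 1)] (r t))
    (hr_nonneg : ∀ t ∈ Finset.Icc 1 T, ∀ ω, 0 ≤ r t ω)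
    (hr_bdd : ∀ t ∈ Finset.Icc 1 T, ∃ C : ℝ, ∀ ω, r t ω ≤ C)
    (B : ℕ → Ω → ℝ) (hB : ∀ t ω, B t ω = ∏ k ∈ Finset.Icc 1 t, (1 + r k ω))
    (u : ℕ → ℝ → ℝ)
    (hu_conc : ∀ t ∈ Finset.Icc 1 T, StrictConcaveOn ℝ (Set.univ : Set ℝ) (u t))
    (hu_diff : ∀ t ∈ Finset.Icc 1 T, ContDiff ℝ 1 (u t))
    (hu_deriv : ∀ t ∈ Finset.Icc 1 T, ∀ x : ℝ, 0 < deriv (u t) x)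
    (W : Ω → ℝ) (hWmeas : Measurable[ℱ T] W) (hWbdd : ∃ C : ℝ, ∀ᵐ ω ∂μ, |W ω| ≤ C)
    (lam : ℕ → ℝ)
    (hlam_nonneg : ∀ t ∈ Finset.Icc 1 T, 0 ≤ lam t)
    (hlam_ne : ∃ t ∈ Finset.Icc 1 T, lam t ≠ 0)
    (X : ℕ → Ω → ℝ) (hX : IsAlloc μ T ℱ B W X)
    (hXopt : ∀ Y, IsAlloc μ T ℱ B W Y →
      ∑ t ∈ Finset.Icc 1 T, lam t * ∫ ω, u t (Y t ω / B t ω) ∂μ ≤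
        ∑ t ∈ Finset.Icc 1 T, lam t * ∫ ω, u t (X t ω / B t ω) ∂μ) :
    (∀ s ∈ Finset.Icc 1 T, ∀ t ∈ Finset.Icc 1 T, s ≤ t →
      μ[(fun ω => lam t * deriv (u t) (X t ω / B t ω)) | ℱ s]
        =ᵐ[μ] fun ω => lam s * deriv (u s) (X s ω / B s ω)) ∧
    (∀ t ∈ Finset.Icc 1 T, 0 < lam t) := by
  have hEint : ∀ k ∈ Finset.Icc 1 T,
      Integrable (fun ω => deriv (u k) (X k ω / B k ω)) μ ∧
      0 < ∫ ω, deriv (u k) (X k ω / B k ω) ∂μ := by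
    intro k hk
    have hkT := (Finset.mem_Icc.mp hk).2
    have hB1 : ∀ ω, 1 ≤ B k ω := fun ω => aux_B_one_le hr_nonneg hB hkT ω
    have hBmeas : Measurable (B k) := (aux_B_meas hℱmono hr_meas hB hkT).mono (hℱle k) le_rfl
    have hXmeas : Measurable (X k) := (hX.1 k hk).1.mono (hℱle k) le_rfl
    have hg : Measurable (fun ω => X k ω / B k ω) := hXmeas.div hBmeas
    obtain ⟨Mk, hMk⟩ := (hX.1 k hk).2
    set M : ℝ := max Mk 0 with hM
    have hM0 : (0:ℝ) ≤ M := le_max_right _ _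
    have hgb : ∀ᵐ ω ∂μ, X k ω / B k ω ∈ Set.Icc (-M) M := by
      filter_upwards [hMk] with ω hω
      have h1 : |X k ω / B k ω| = |X k ω| / B k ω := by
        rw [abs_div, abs_of_pos (lt_of_lt_of_le zero_lt_one (hB1 ω))]
      have h2 : |X k ω| / B k ω ≤ |X k ω| := div_le_self (abs_nonneg _) (hB1 ω)
      have h3 : |X k ω / B k ω| ≤ M := by
        rw [h1]; exact h2.trans (hω.trans (le_max_left _ _))
      exact Set.mem_Icc.mpr (abs_le.mp h3)
    have hc' : Continuous (deriv (u k)) := (hu_diff k hk).continuous_deriv le_rfl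
    obtain ⟨K, hK⟩ := (isCompact_Icc (a := -M) (b := M)).exists_bound_of_continuousOn
      hc'.continuousOn
    have hmeas : Measurable fun ω => deriv (u k) (X k ω / B k ω) := hc'.measurable.comp hg
    have hint : Integrable (fun ω => deriv (u k) (X k ω / B k ω)) μ := by
      refine aux_int_of_bdd μ hmeas.aestronglyMeasurable (C := K) ?_
      filter_upwards [hgb] with ω hω
      simpa [Real.norm_eq_abs] using hK _ hω
    refine ⟨hint, ?_⟩
    obtain ⟨x0, hx0mem, hx0min⟩ := (isCompact_Icc (a := -M) (b := M)).exists_isMinOn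
      ⟨0, Set.mem_Icc.mpr ⟨by linarith, hM0⟩⟩ hc'.continuousOn
    have hm : 0 < deriv (u k) x0 := hu_deriv k hk x0
    have hle : ∀ᵐ ω ∂μ, deriv (u k) x0 ≤ deriv (u k) (X k ω / B k ω) := by
      filter_upwards [hgb] with ω hω; exact hx0min hω
    have hmono := integral_mono_ae (integrable_const (deriv (u k) x0)) hint hle
    rw [integral_const] at hmono
    simp only [probReal_univ, measure_univ, ENNReal.toReal_one, one_smul, smul_eq_mul, one_mul] at hmono
    linarith
  obtain ⟨t0, ht0, hlt0⟩ := hlam_ne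
  have hl0 : 0 < lam t0 := lt_of_le_of_ne (hlam_nonneg t0 ht0) (Ne.symm hlt0)
  have hposall : ∀ k ∈ Finset.Icc 1 T, 0 < lam k := by
    intro k hk
    rcases le_total k t0 with h | h
    · have hkey := aux_key μ T ℱ hℱmono hℱle r hr_meas hr_nonneg hr_bdd B hB u hu_diff
        W lam X hX hXopt k t0 hk ht0 h Set.univ MeasurableSet.univ
      rw [setIntegral_univ, setIntegral_univ] at hkey
      have h1 : 0 < lam t0 * ∫ ω, deriv (u t0) (X t0 ω / B t0 ω) ∂μ :=
        mul_pos hl0 (hEint t0 ht0).2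
      rw [← hkey] at h1
      nlinarith [(hEint k hk).2]
    · have hkey := aux_key μ T ℱ hℱmono hℱle r hr_meas hr_nonneg hr_bdd B hB u hu_diff
        W lam X hX hXopt t0 k ht0 hk h Set.univ MeasurableSet.univ
      rw [setIntegral_univ, setIntegral_univ] at hkey
      have h1 : 0 < lam t0 * ∫ ω, deriv (u t0) (X t0 ω / B t0 ω) ∂μ :=
        mul_pos hl0 (hEint t0 ht0).2
      rw [hkey] at h1
      nlinarith [(hEint k hk).2]
  refine ⟨?_, hposall⟩
  intro s hs t ht hst
  have hf_int : Integrable (fun ω => lam t * deriv (u t) (X t ω / B t ω)) μ :=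
    (hEint t ht).1.const_mul _
  have hg_int : Integrable (fun ω => lam s * deriv (u s) (X s ω / B s ω)) μ :=
    (hEint s hs).1.const_mul _
  have hgm : AEStronglyMeasurable[ℱ s] (fun ω => lam s * deriv (u s) (X s ω / B s ω)) μ := by
    refine StronglyMeasurable.aestronglyMeasurable (Measurable.stronglyMeasurable ?_)
    have hc' : Continuous (deriv (u s)) := (hu_diff s hs).continuous_deriv le_rfl
    have hdiv : Measurable[ℱ s] (fun ω => X s ω / B s ω) :=
      (hX.1 s hs).1.div (aux_B_meas hℱmono hr_meas hB (Finset.mem_Icc.mp hs).2)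
    exact (hc'.measurable.comp hdiv).const_mul _
  have heq : ∀ A : Set Ω, MeasurableSet[ℱ s] A → μ A < ⊤ →
      ∫ ω in A, lam s * deriv (u s) (X s ω / B s ω) ∂μ
        = ∫ ω in A, lam t * deriv (u t) (X t ω / B t ω) ∂μ := by
    intro A hA _
    rw [integral_const_mul, integral_const_mul]
    exact aux_key μ T ℱ hℱmono hℱle r hr_meas hr_nonneg hr_bdd B hB u hu_diff
      W lam X hX hXopt s t hs ht hst A hA
  exact (ae_eq_condExp_of_forall_setIntegral_eq (hℱle s) hf_int
    (fun A hA _ => hg_int.integrableOn) heq hgm).symm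
end
end

section
/- Second welfare theorem analogue: for W ∈ L^∞ and (X_t)_{t∈𝕋} ∈ A(W), the allocation (X_t) is Pareto optimal if and only if there exists λ ∈ (0,∞)^T such that (X_t) solves Problem P_λ, i.e. maximizes ∑_{t∈𝕋} λ_t E[u_t(Ỹ_t)] over (Y_t) ∈ A(W). -/
open MeasureTheory Finset Real

noncomputable section

section AuxWelfare

variable {Ω : Type*} [mΩ : MeasurableSpace Ω] {μ : Measure Ω} [IsProbabilityMeasure μ]

/-- integrability of bounded utility composition -/
lemma integrable_u_comp_aux (u : ℝ → ℝ) (hu : Continuous u)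
    (Y Bf : Ω → ℝ) (hY : Measurable Y) (hBf : Measurable Bf) (hB1 : ∀ ω, 1 ≤ Bf ω)
    {C : ℝ} (hC : ∀ᵐ ω ∂μ, |Y ω| ≤ C) :
    Integrable (fun ω => u (Y ω / Bf ω)) μ := by
  have hmeas : AEStronglyMeasurable (fun ω => u (Y ω / Bf ω)) μ :=
    (hu.measurable.comp (hY.div hBf)).aestronglyMeasurable
  obtain ⟨D, hD⟩ := (isCompact_Icc (a := -C) (b := C)).exists_bound_of_continuousOn
    hu.continuousOn
  refine (integrable_const D).mono' hmeas ?_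
  filter_upwards [hC] with ω hω
  have hq : |Y ω / Bf ω| ≤ C := by
    rw [abs_div]
    calc |Y ω| / |Bf ω| ≤ |Y ω| := div_le_self (abs_nonneg _)
          (le_trans (hB1 ω) (le_abs_self _))
      _ ≤ C := hω
  exact hD _ (abs_le.mp hq)

lemma integral_lt_integral_aux (f g : Ω → ℝ) (hf : Integrable f μ) (hg : Integrable g μ)
    (h : ∀ ω, f ω < g ω) : ∫ ω, f ω ∂μ < ∫ ω, g ω ∂μ := by
  by_contra hle
  push_neg at hle
  have hnn : 0 ≤ᵐ[μ] fun ω => g ω - f ω := ae_of_all _ fun ω => by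
    have := h ω; simp only [Pi.zero_apply]; linarith
  have h0 : ∫ ω, (g ω - f ω) ∂μ ≤ 0 := by
    rw [integral_sub hg hf]; linarith
  have hz := (integral_eq_zero_iff_of_nonneg_ae hnn (hg.sub hf)).mp
    (le_antisymm h0 (integral_nonneg_of_ae hnn))
  have hne : (ae μ).NeBot := ae_neBot.mpr (IsProbabilityMeasure.ne_zero μ)
  obtain ⟨ω, hω⟩ := hz.exists
  have := h ω
  simp only [Pi.zero_apply] at hω
  linarith

end AuxWelfare

/-- Second welfare theorem analogue (Theorem 2.13): `(X_t) ∈ A(W)` is Pareto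
optimal iff it solves Problem `P_λ` for some `λ ∈ (0,∞)^T`. -/
theorem paretoOptimal_iff_solves_problemLambda
    {Ω : Type*} [mΩ : MeasurableSpace Ω] (μ : Measure Ω) [IsProbabilityMeasure μ]
    (T : ℕ) (hT : 1 ≤ T)
    (ℱ : ℕ → MeasurableSpace Ω) (hℱmono : Monotone ℱ) (hℱle : ∀ t, ℱ t ≤ mΩ)
    (r : ℕ → Ω → ℝ)
    (hr_meas : ∀ t ∈ Finset.Icc 1 T, Measurable[ℱ (t - 1)] (r t))
    (hr_nonneg : ∀ t ∈ Finset.Icc 1 T, ∀ ω, 0 ≤ r t ω)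
    (hr_bdd : ∀ t ∈ Finset.Icc 1 T, ∃ C : ℝ, ∀ ω, r t ω ≤ C)
    (B : ℕ → Ω → ℝ) (hB : ∀ t ω, B t ω = ∏ k ∈ Finset.Icc 1 t, (1 + r k ω))
    (u : ℕ → ℝ → ℝ)
    (hu_conc : ∀ t ∈ Finset.Icc 1 T, StrictConcaveOn ℝ (Set.univ : Set ℝ) (u t))
    (hu_diff : ∀ t ∈ Finset.Icc 1 T, ContDiff ℝ 1 (u t))
    (hu_deriv : ∀ t ∈ Finset.Icc 1 T, ∀ x : ℝ, 0 < deriv (u t) x)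
    (W : Ω → ℝ) (hWmeas : Measurable[ℱ T] W) (hWbdd : ∃ C : ℝ, ∀ᵐ ω ∂μ, |W ω| ≤ C)
    (X : ℕ → Ω → ℝ) (hX : IsAlloc μ T ℱ B W X) :
    (¬ ∃ Y, IsAlloc μ T ℱ B W Y ∧
        (∀ t ∈ Finset.Icc 1 T,
          ∫ ω, u t (X t ω / B t ω) ∂μ ≤ ∫ ω, u t (Y t ω / B t ω) ∂μ) ∧
        (∃ t₀ ∈ Finset.Icc 1 T,
          ∫ ω, u t₀ (X t₀ ω / B t₀ ω) ∂μ < ∫ ω, u t₀ (Y t₀ ω / B t₀ ω) ∂μ)) ↔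
    (∃ lam : ℕ → ℝ, (∀ t ∈ Finset.Icc 1 T, 0 < lam t) ∧
      ∀ Y, IsAlloc μ T ℱ B W Y →
        ∑ t ∈ Finset.Icc 1 T, lam t * ∫ ω, u t (Y t ω / B t ω) ∂μ ≤
          ∑ t ∈ Finset.Icc 1 T, lam t * ∫ ω, u t (X t ω / B t ω) ∂μ) := by
  classical
  constructor
  · -- hard direction: Pareto optimal ⇒ ∃ λ > 0 solving P_λ
    intro hP
    -- basic facts about B
    have hB1 : ∀ t, t ≤ T → ∀ ω, 1 ≤ B t ω := by
      intro t ht ω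
      rw [hB t ω]
      calc (1 : ℝ) = ∏ _k ∈ Finset.Icc 1 t, (1 : ℝ) := (Finset.prod_const_one).symm
        _ ≤ ∏ k ∈ Finset.Icc 1 t, (1 + r k ω) := by
            refine Finset.prod_le_prod (fun k _ => zero_le_one) (fun k hk => ?_)
            rw [Finset.mem_Icc] at hk
            have := hr_nonneg k (Finset.mem_Icc.mpr ⟨hk.1, hk.2.trans ht⟩) ω
            linarith
    have hBmeasF : ∀ t, t ≤ T → Measurable[ℱ t] (B t) := by
      intro t ht
      have hBe : B t = fun ω => ∏ k ∈ Finset.Icc 1 t, (1 + r k ω) := funext fun ω => hB t ω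
      rw [hBe]
      refine Finset.measurable_prod _ fun k hk => ?_
      rw [Finset.mem_Icc] at hk
      have hkT : k ∈ Finset.Icc 1 T := Finset.mem_Icc.mpr ⟨hk.1, hk.2.trans ht⟩
      exact (measurable_const.add (hr_meas k hkT)).mono
        (hℱmono (le_trans (Nat.sub_le k 1) hk.2)) le_rfl
    have hBmeas : ∀ t, t ≤ T → Measurable (B t) :=
      fun t ht => (hBmeasF t ht).mono (hℱle t) le_rfl
    choose Cr hCr using hr_bdd
    have hBbd : ∀ t, t ≤ T → ∃ M, ∀ ω, B t ω ≤ M := by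
      intro t ht
      refine ⟨∏ k ∈ Finset.Icc 1 t,
        (1 + (if h : k ∈ Finset.Icc 1 T then max (Cr k h) 0 else 0)), fun ω => ?_⟩
      rw [hB t ω]
      refine Finset.prod_le_prod (fun k hk => ?_) (fun k hk => ?_)
      · rw [Finset.mem_Icc] at hk
        have := hr_nonneg k (Finset.mem_Icc.mpr ⟨hk.1, hk.2.trans ht⟩) ω
        linarith
      · rw [Finset.mem_Icc] at hk
        have hkT : k ∈ Finset.Icc 1 T := Finset.mem_Icc.mpr ⟨hk.1, hk.2.trans ht⟩
        rw [dif_pos hkT]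
        have h1 := hCr k hkT ω
        have h2 : Cr k hkT ≤ max (Cr k hkT) 0 := le_max_left _ _
        linarith
    have hucont : ∀ t ∈ Finset.Icc 1 T, Continuous (u t) :=
      fun t ht => (hu_diff t ht).continuous
    have hInt : ∀ Y, IsAlloc μ T ℱ B W Y → ∀ t ∈ Finset.Icc 1 T,
        Integrable (fun ω => u t (Y t ω / B t ω)) μ := by
      intro Y hY t ht
      obtain ⟨hm, C, hC⟩ := hY.1 t ht
      have htT : t ≤ T := (Finset.mem_Icc.mp ht).2
      exact integrable_u_comp_aux (u t) (hucont t ht) (Y t) (B t)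
        (hm.mono (hℱle t) le_rfl) (hBmeas t htT) (hB1 t htT) hC
    -- the utility vector of X (zero off the time horizon)
    set vecX : ℕ → ℝ :=
      fun t => if t ∈ Finset.Icc 1 T then ∫ ω, u t (X t ω / B t ω) ∂μ else 0 with hvecX
    have hxvt : ∀ t ∈ Finset.Icc 1 T, vecX t = ∫ ω, u t (X t ω / B t ω) ∂μ :=
      fun t ht => by simp only [hvecX]; exact if_pos ht
    have hvec0 : ∀ t ∉ Finset.Icc 1 T, vecX t = 0 :=
      fun t ht => by simp only [hvecX]; exact if_neg ht
    -- convex sets to separate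
    set V : Set (ℕ → ℝ) := {v | (∀ t ∉ Finset.Icc 1 T, v t = 0) ∧
      ∃ Y, IsAlloc μ T ℱ B W Y ∧
        ∀ t ∈ Finset.Icc 1 T, v t ≤ ∫ ω, u t (Y t ω / B t ω) ∂μ} with hV
    set O : Set (ℕ → ℝ) := {v | ∀ t ∈ Finset.Icc 1 T, vecX t < v t} with hO
    have hVconv : Convex ℝ V := by
      rw [hV]
      rintro v ⟨hv0, Y, hY, hvY⟩ w ⟨hw0, Z, hZ, hwZ⟩ a b ha hb hab
      have hYZ : IsAlloc μ T ℱ B W (fun t ω => a * Y t ω + b * Z t ω) := by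
        constructor
        · intro t ht
          obtain ⟨hYm, CY, hCY⟩ := hY.1 t ht
          obtain ⟨hZm, CZ, hCZ⟩ := hZ.1 t ht
          refine ⟨(hYm.const_mul a).add (hZm.const_mul b), |a| * CY + |b| * CZ, ?_⟩
          filter_upwards [hCY, hCZ] with ω h1 h2
          calc |a * Y t ω + b * Z t ω| ≤ |a * Y t ω| + |b * Z t ω| := abs_add_le _ _
            _ = |a| * |Y t ω| + |b| * |Z t ω| := by rw [abs_mul, abs_mul]
            _ ≤ |a| * CY + |b| * CZ :=
                add_le_add (mul_le_mul_of_nonneg_left h1 (abs_nonneg a))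
                  (mul_le_mul_of_nonneg_left h2 (abs_nonneg b))
        · filter_upwards [hY.2, hZ.2] with ω h1 h2
          have key : ∀ t ∈ Finset.Icc 1 T,
              (a * Y t ω + b * Z t ω) / B t ω
                = a * (Y t ω / B t ω) + b * (Z t ω / B t ω) := by
            intro t _
            rw [add_div, mul_div_assoc, mul_div_assoc]
          rw [Finset.sum_congr rfl key, Finset.sum_add_distrib, ← Finset.mul_sum,
            ← Finset.mul_sum, h1, h2]
          calc a * W ω + b * W ω = (a + b) * W ω := by ring
            _ = W ω := by rw [hab, one_mul]
      refine ⟨fun t ht => ?_, ⟨fun t ω => a * Y t ω + b * Z t ω, hYZ, fun t ht => ?_⟩⟩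
      · simp only [Pi.add_apply, Pi.smul_apply, smul_eq_mul, hv0 t ht, hw0 t ht,
          mul_zero, add_zero]
      · have hIY := hInt Y hY t ht
        have hIZ := hInt Z hZ t ht
        have hIC := hInt _ hYZ t ht
        have hpt : ∀ ω, a * u t (Y t ω / B t ω) + b * u t (Z t ω / B t ω)
            ≤ u t ((a * Y t ω + b * Z t ω) / B t ω) := by
          intro ω
          have hc := (hu_conc t ht).concaveOn.2 (Set.mem_univ (Y t ω / B t ω))
            (Set.mem_univ (Z t ω / B t ω)) ha hb hab
          simp only [smul_eq_mul] at hc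
          calc a * u t (Y t ω / B t ω) + b * u t (Z t ω / B t ω)
              ≤ u t (a * (Y t ω / B t ω) + b * (Z t ω / B t ω)) := hc
            _ = u t ((a * Y t ω + b * Z t ω) / B t ω) := by
                rw [add_div, mul_div_assoc, mul_div_assoc]
        have hmono2 : a * (∫ ω, u t (Y t ω / B t ω) ∂μ)
            + b * (∫ ω, u t (Z t ω / B t ω) ∂μ)
            ≤ ∫ ω, u t ((a * Y t ω + b * Z t ω) / B t ω) ∂μ := by
          rw [← integral_const_mul, ← integral_const_mul,
            ← integral_add (hIY.const_mul a) (hIZ.const_mul b)]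
          exact integral_mono ((hIY.const_mul a).add (hIZ.const_mul b)) hIC hpt
        have h1 := hvY t ht
        have h2 := hwZ t ht
        simp only [Pi.add_apply, Pi.smul_apply, smul_eq_mul]
        calc a * v t + b * w t
            ≤ a * (∫ ω, u t (Y t ω / B t ω) ∂μ) + b * (∫ ω, u t (Z t ω / B t ω) ∂μ) :=
              add_le_add (mul_le_mul_of_nonneg_left h1 ha)
                (mul_le_mul_of_nonneg_left h2 hb)
          _ ≤ _ := hmono2
    have hOconv : Convex ℝ O := by
      rw [hO]
      rintro v hv w hw a b ha hb hab t ht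
      have h1 := hv t ht
      have h2 := hw t ht
      simp only [Pi.add_apply, Pi.smul_apply, smul_eq_mul]
      rcases eq_or_lt_of_le ha with ha0 | ha0
      · have hb1 : b = 1 := by linarith
        rw [← ha0, hb1]
        simpa using h2
      · calc vecX t = a * vecX t + b * vecX t := by rw [← add_mul, hab, one_mul]
          _ < a * v t + b * w t := by
            have h3 := mul_lt_mul_of_pos_left h1 ha0
            have h4 := mul_le_mul_of_nonneg_left (le_of_lt h2) hb
            linarith
    have hOopen : IsOpen O := by
      have hOeq : O = ⋂ t ∈ Finset.Icc 1 T, {v : ℕ → ℝ | vecX t < v t} := by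
        rw [hO]; ext v; simp [Set.mem_iInter]
      rw [hOeq]
      exact isOpen_biInter_finset fun t _ =>
        isOpen_lt continuous_const (continuous_apply t)
    have hdisj : Disjoint O V := by
      rw [Set.disjoint_left]
      rintro v hvO ⟨hv0, Y, hY, hvY⟩
      rw [hO] at hvO
      refine hP ⟨Y, hY, fun t ht => ?_, ⟨1, Finset.mem_Icc.mpr ⟨le_refl 1, hT⟩, ?_⟩⟩
      · have h1 := hvO t ht
        have h2 := hvY t ht
        rw [hxvt t ht] at h1
        linarith
      · have h1 := hvO 1 (Finset.mem_Icc.mpr ⟨le_refl 1, hT⟩)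
        have h2 := hvY 1 (Finset.mem_Icc.mpr ⟨le_refl 1, hT⟩)
        rw [hxvt 1 (Finset.mem_Icc.mpr ⟨le_refl 1, hT⟩)] at h1
        linarith
    obtain ⟨f, c, hfO, hfV⟩ := geometric_hahn_banach_open hOconv hOopen hVconv hdisj
    set sing : ℕ → ℕ → ℝ := fun t => (Pi.single t (1 : ℝ) : ℕ → ℝ) with hsing
    have hsing_apply : ∀ t t', sing t t' = if t' = t then 1 else 0 := by
      intro t t'
      simp only [hsing]
      exact Pi.single_apply t (1 : ℝ) t'
    set lam : ℕ → ℝ := fun t => -f (sing t) with hlam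
    -- evaluation of f against vectors supported on the horizon
    have hfeval : ∀ v : ℕ → ℝ, (∀ t ∉ Finset.Icc 1 T, v t = 0) →
        f v = -∑ t ∈ Finset.Icc 1 T, v t * lam t := by
      intro v hv
      have hrepr : v = ∑ t ∈ Finset.Icc 1 T, v t • sing t := by
        funext s
        rw [Finset.sum_apply]
        by_cases hs : s ∈ Finset.Icc 1 T
        · symm
          rw [Finset.sum_eq_single s
            (fun t _ hts => by simp [hsing_apply, Ne.symm hts])
            (fun h => absurd hs h)]
          simp [hsing_apply]
        · rw [hv s hs]
          exact (Finset.sum_eq_zero fun t htI => by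
            simp [hsing_apply, show s ≠ t from fun h => hs (h ▸ htI)]).symm
      calc f v = f (∑ t ∈ Finset.Icc 1 T, v t • sing t) := by rw [← hrepr]
        _ = ∑ t ∈ Finset.Icc 1 T, v t * f (sing t) := by
            rw [map_sum]
            simp only [_root_.map_smul, smul_eq_mul]
        _ = -∑ t ∈ Finset.Icc 1 T, v t * lam t := by
            simp only [hlam, mul_neg, Finset.sum_neg_distrib, neg_neg]
    have hxv_mem : vecX ∈ V := by
      rw [hV]
      exact ⟨hvec0, X, hX, fun t ht => le_of_eq (hxvt t ht)⟩
    have hc_le : c ≤ f vecX := hfV _ hxv_mem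
    -- nonnegativity of the multipliers
    have hlam0 : ∀ t ∈ Finset.Icc 1 T, 0 ≤ lam t := by
      intro t ht
      by_contra hneg
      push_neg at hneg
      have hFpos : 0 < f (sing t) := by
        simp only [hlam] at hneg; linarith
      set s0 : ℝ := (f vecX - c) / f (sing t) + 1 with hs0
      have hs0pos : 0 ≤ s0 := by
        rw [hs0]
        have h5 : 0 ≤ (f vecX - c) / f (sing t) :=
          div_nonneg (by linarith) hFpos.le
        linarith
      have hmem : (vecX - s0 • sing t) ∈ V := by
        rw [hV]
        refine ⟨fun t' ht' => ?_, X, hX, fun t' ht' => ?_⟩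
        · have h0 : sing t t' = 0 := by
            have hne : t' ≠ t := fun h => ht' (h ▸ ht)
            simp [hsing_apply, hne]
          simp only [Pi.sub_apply, Pi.smul_apply, h0, smul_eq_mul, mul_zero, sub_zero]
          exact hvec0 t' ht'
        · have h0 : (0 : ℝ) ≤ s0 * sing t t' := by
            refine mul_nonneg hs0pos ?_
            by_cases h : t' = t <;> simp [hsing_apply, h]
          have h1 := hxvt t' ht'
          simp only [Pi.sub_apply, Pi.smul_apply, smul_eq_mul]
          rw [← h1]
          exact sub_le_self _ h0
      have hfc := hfV _ hmem
      rw [map_sub, _root_.map_smul, smul_eq_mul] at hfc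
      have hkey : s0 * f (sing t) = (f vecX - c) + f (sing t) := by
        rw [hs0, add_mul, one_mul, div_mul_cancel₀ _ (ne_of_gt hFpos)]
      linarith
    -- the indicator of the horizon
    set oneI : ℕ → ℝ := fun t => if t ∈ Finset.Icc 1 T then 1 else 0 with honeI
    have hone0 : ∀ t ∉ Finset.Icc 1 T, oneI t = 0 :=
      fun t ht => by simp only [honeI]; exact if_neg ht
    have hone1 : ∀ t ∈ Finset.Icc 1 T, oneI t = 1 :=
      fun t ht => by simp only [honeI]; exact if_pos ht
    have hfoneI : f oneI = -∑ t ∈ Finset.Icc 1 T, oneI t * lam t := hfeval oneI hone0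
    have hKnn : 0 ≤ ∑ t ∈ Finset.Icc 1 T, oneI t * lam t :=
      Finset.sum_nonneg fun t ht =>
        mul_nonneg (by rw [hone1 t ht]; norm_num) (hlam0 t ht)
    -- f vecX ≤ c
    have hfx_le : f vecX ≤ c := by
      by_contra hgt
      push_neg at hgt
      set K := ∑ t ∈ Finset.Icc 1 T, oneI t * lam t with hK
      set ε := (f vecX - c) / (K + 1) with hε
      have hεpos : 0 < ε := by rw [hε]; exact div_pos (by linarith) (by linarith)
      have hmemO : (vecX + ε • oneI) ∈ O := by
        rw [hO, Set.mem_setOf_eq]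
        intro t ht
        simp only [Pi.add_apply, Pi.smul_apply, smul_eq_mul]
        rw [hone1 t ht]
        linarith
      have hlt := hfO _ hmemO
      rw [map_add, _root_.map_smul, smul_eq_mul, hfoneI] at hlt
      have hεK : ε * (K + 1) = f vecX - c := by
        rw [hε, div_mul_cancel₀ _ (by linarith : K + (1:ℝ) ≠ 0)]
      linarith
    -- some multiplier is positive
    have hex : ∃ s ∈ Finset.Icc 1 T, 0 < lam s := by
      by_contra hno
      push_neg at hno
      have hz : ∀ s ∈ Finset.Icc 1 T, lam s = 0 :=
        fun s hs => le_antisymm (hno s hs) (hlam0 s hs)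
      have h1 : f vecX = 0 := by
        rw [hfeval vecX hvec0,
          Finset.sum_eq_zero fun t ht => by rw [hz t ht, mul_zero]]
        exact neg_zero
      have h2 : f (vecX + oneI) = 0 := by
        rw [hfeval _ (fun t ht => by
          simp only [Pi.add_apply]
          rw [hvec0 t ht, hone0 t ht, add_zero]),
          Finset.sum_eq_zero fun t ht => by rw [hz t ht, mul_zero]]
        exact neg_zero
      have h3 : (vecX + oneI) ∈ O := by
        rw [hO, Set.mem_setOf_eq]
        intro t ht
        simp only [Pi.add_apply]
        rw [hone1 t ht]
        linarith
      have h4 := hfO _ h3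
      rw [h2] at h4
      rw [h1] at hc_le
      linarith
    -- all multipliers are positive, via the transfer argument
    have hall : ∀ t₀ ∈ Finset.Icc 1 T, 0 < lam t₀ := by
      obtain ⟨s, hsI, hspos⟩ := hex
      intro t₀ ht₀
      rcases (hlam0 t₀ ht₀).lt_or_eq with hpos | hzero
      · exact hpos
      exfalso
      have hlamt₀ : lam t₀ = 0 := hzero.symm
      have hts : t₀ ≠ s := by
        intro he
        rw [← he, hlamt₀] at hspos
        exact lt_irrefl 0 hspos
      have hsT : s ≤ T := (Finset.mem_Icc.mp hsI).2
      have ht₀T : t₀ ≤ T := (Finset.mem_Icc.mp ht₀).2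
      obtain ⟨Ms, hMs⟩ := hBbd s hsT
      obtain ⟨Mt, hMt⟩ := hBbd t₀ ht₀T
      set Y : ℕ → Ω → ℝ := fun t ω =>
        if t = t₀ then X t ω - B t ω else if t = s then X t ω + B t ω else X t ω with hYdef
      have hYt₀ : Y t₀ = fun ω => X t₀ ω - B t₀ ω := by
        funext ω; simp [hYdef]
      have hYs : Y s = fun ω => X s ω + B s ω := by
        funext ω; simp [hYdef, Ne.symm hts]
      have hYo : ∀ t, t ≠ t₀ → t ≠ s → Y t = X t := by
        intro t h1 h2; funext ω; simp [hYdef, h1, h2]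
      have hYalloc : IsAlloc μ T ℱ B W Y := by
        constructor
        · intro t ht
          obtain ⟨hXm, CX, hCX⟩ := hX.1 t ht
          by_cases h1 : t = t₀
          · subst h1
            refine ⟨?_, CX + Mt, ?_⟩
            · simp only [hYt₀]
              exact hXm.sub (hBmeasF t ht₀T)
            · filter_upwards [hCX] with ω hω
              have hb1 := hB1 t ht₀T ω
              have hb2 := hMt ω
              simp only [hYt₀]
              calc |X t ω - B t ω| ≤ |X t ω| + |B t ω| := abs_sub _ _
                _ = |X t ω| + B t ω := by rw [abs_of_pos (by linarith : (0:ℝ) < B t ω)]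
                _ ≤ CX + Mt := add_le_add hω hb2
          · by_cases h2 : t = s
            · subst h2
              refine ⟨?_, CX + Ms, ?_⟩
              · simp only [hYs]
                exact hXm.add (hBmeasF t hsT)
              · filter_upwards [hCX] with ω hω
                have hb1 := hB1 t hsT ω
                have hb2 := hMs ω
                simp only [hYs]
                calc |X t ω + B t ω| ≤ |X t ω| + |B t ω| := abs_add_le _ _
                  _ = |X t ω| + B t ω := by rw [abs_of_pos (by linarith : (0:ℝ) < B t ω)]
                  _ ≤ CX + Ms := add_le_add hω hb2
            · rw [hYo t h1 h2]
              exact ⟨hXm, CX, hCX⟩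
        · filter_upwards [hX.2] with ω hω
          have key : ∀ t ∈ Finset.Icc 1 T, Y t ω / B t ω
              = X t ω / B t ω + ((if t = t₀ then (-1 : ℝ) else 0)
                + (if t = s then (1 : ℝ) else 0)) := by
            intro t ht
            have hBne : B t ω ≠ 0 := by
              have := hB1 t (Finset.mem_Icc.mp ht).2 ω; linarith
            by_cases h1 : t = t₀
            · rw [h1] at hBne ⊢
              simp only [hYt₀]
              rw [if_pos trivial, if_neg hts, sub_div, div_self hBne]
              ring
            · by_cases h2 : t = s
              · rw [h2] at hBne ⊢
                simp only [hYs]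
                rw [if_pos trivial, add_div, div_self hBne, if_neg (Ne.symm hts)]
                ring
              · rw [hYo t h1 h2, if_neg h1, if_neg h2]
                ring
          rw [Finset.sum_congr rfl key, Finset.sum_add_distrib, hω,
            Finset.sum_add_distrib,
            Finset.sum_ite_eq' (Finset.Icc 1 T) t₀ (fun _ => (-1 : ℝ)),
            Finset.sum_ite_eq' (Finset.Icc 1 T) s (fun _ => (1 : ℝ)),
            if_pos ht₀, if_pos hsI]
          ring
      -- strict improvement at time s
      have hIs := hInt X hX s hsI
      have hIYs := hInt Y hYalloc s hsI
      have hpt : ∀ ω, u s (X s ω / B s ω) < u s (Y s ω / B s ω) := by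
        intro ω
        have hBne : B s ω ≠ 0 := by
          have := hB1 s hsT ω; linarith
        have heq : Y s ω / B s ω = X s ω / B s ω + 1 := by
          simp only [hYs]
          rw [add_div, div_self hBne]
        rw [heq]
        exact (strictMono_of_deriv_pos (hu_deriv s hsI))
          (by linarith : X s ω / B s ω < X s ω / B s ω + 1)
      have hint_lt : ∫ ω, u s (X s ω / B s ω) ∂μ < ∫ ω, u s (Y s ω / B s ω) ∂μ :=
        integral_lt_integral_aux _ _ hIs hIYs hpt
      -- compare the weighted sums
      have hterm : ∀ t ∈ Finset.Icc 1 T,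
          (∫ ω, u t (Y t ω / B t ω) ∂μ) * lam t
            = (∫ ω, u t (X t ω / B t ω) ∂μ) * lam t
              + (if t = s then ((∫ ω, u s (Y s ω / B s ω) ∂μ)
                  - ∫ ω, u s (X s ω / B s ω) ∂μ) * lam s else 0) := by
        intro t _
        by_cases h2 : t = s
        · subst h2
          rw [if_pos rfl]; ring
        · rw [if_neg h2, add_zero]
          by_cases h1 : t = t₀
          · subst h1
            rw [hlamt₀, mul_zero, mul_zero]
          · rw [hYo t h1 h2]
      have hsum : ∑ t ∈ Finset.Icc 1 T, (∫ ω, u t (Y t ω / B t ω) ∂μ) * lam t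
          = ∑ t ∈ Finset.Icc 1 T, (∫ ω, u t (X t ω / B t ω) ∂μ) * lam t
            + ((∫ ω, u s (Y s ω / B s ω) ∂μ) - ∫ ω, u s (X s ω / B s ω) ∂μ) * lam s := by
        rw [Finset.sum_congr rfl hterm, Finset.sum_add_distrib,
          Finset.sum_ite_eq' (Finset.Icc 1 T) s
            (fun _ => ((∫ ω, u s (Y s ω / B s ω) ∂μ)
              - ∫ ω, u s (X s ω / B s ω) ∂μ) * lam s),
          if_pos hsI]
      have hmemY : (fun t => if t ∈ Finset.Icc 1 T
          then ∫ ω, u t (Y t ω / B t ω) ∂μ else 0) ∈ V := by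
        rw [hV]
        exact ⟨fun t ht => if_neg ht, Y, hYalloc, fun t ht => le_of_eq (if_pos ht)⟩
      have h1 := hfV _ hmemY
      rw [hfeval _ (fun t ht => if_neg ht)] at h1
      have h2 : -∑ t ∈ Finset.Icc 1 T, vecX t * lam t ≤ c := by
        rw [← hfeval vecX hvec0]; exact hfx_le
      have h3 : ∑ t ∈ Finset.Icc 1 T,
          (if t ∈ Finset.Icc 1 T then ∫ ω, u t (Y t ω / B t ω) ∂μ else 0) * lam t
          = ∑ t ∈ Finset.Icc 1 T, (∫ ω, u t (Y t ω / B t ω) ∂μ) * lam t :=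
        Finset.sum_congr rfl fun t ht => by rw [if_pos ht]
      have h4 : ∑ t ∈ Finset.Icc 1 T, vecX t * lam t
          = ∑ t ∈ Finset.Icc 1 T, (∫ ω, u t (X t ω / B t ω) ∂μ) * lam t :=
        Finset.sum_congr rfl fun t ht => by rw [hxvt t ht]
      have hd : 0 < ((∫ ω, u s (Y s ω / B s ω) ∂μ)
          - ∫ ω, u s (X s ω / B s ω) ∂μ) * lam s :=
        mul_pos (by linarith) hspos
      linarith
    -- conclusion
    refine ⟨lam, hall, fun Y hY => ?_⟩
    have hmemY : (fun t => if t ∈ Finset.Icc 1 T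
        then ∫ ω, u t (Y t ω / B t ω) ∂μ else 0) ∈ V := by
      rw [hV]
      exact ⟨fun t ht => if_neg ht, Y, hY, fun t ht => le_of_eq (if_pos ht)⟩
    have h1 := hfV _ hmemY
    rw [hfeval _ (fun t ht => if_neg ht)] at h1
    have h2 : -∑ t ∈ Finset.Icc 1 T, vecX t * lam t ≤ c := by
      rw [← hfeval vecX hvec0]; exact hfx_le
    have h3 : ∑ t ∈ Finset.Icc 1 T,
        (if t ∈ Finset.Icc 1 T then ∫ ω, u t (Y t ω / B t ω) ∂μ else 0) * lam t
        = ∑ t ∈ Finset.Icc 1 T, lam t * ∫ ω, u t (Y t ω / B t ω) ∂μ :=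
      Finset.sum_congr rfl fun t ht => by rw [if_pos ht, mul_comm]
    have h4 : ∑ t ∈ Finset.Icc 1 T, vecX t * lam t
        = ∑ t ∈ Finset.Icc 1 T, lam t * ∫ ω, u t (X t ω / B t ω) ∂μ :=
      Finset.sum_congr rfl fun t ht => by rw [hxvt t ht, mul_comm]
    linarith
  · -- easy direction
    rintro ⟨lam, hlampos, hmax⟩ ⟨Y, hY, hge, t₀, ht₀, hgt⟩
    have h1 := hmax Y hY
    have h2 : ∑ t ∈ Finset.Icc 1 T, lam t * ∫ ω, u t (X t ω / B t ω) ∂μ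
        < ∑ t ∈ Finset.Icc 1 T, lam t * ∫ ω, u t (Y t ω / B t ω) ∂μ :=
      Finset.sum_lt_sum
        (fun t ht => mul_le_mul_of_nonneg_left (hge t ht) (hlampos t ht).le)
        ⟨t₀, ht₀, mul_lt_mul_of_pos_left hgt (hlampos t₀ ht₀)⟩
    linarith
end
end

section
/- Characterization of Pareto optimality by a first order condition: for W ∈ L^∞ and (X_t)_{t∈𝕋} ∈ A(W), the allocation (X_t) is Pareto optimal if and only if there exists (λ_1,...,λ_T) ∈ (0,∞)^T such that the process (λ_t u_t'(X̃_t))_{t∈𝕋} is an (F_t)-martingale. -/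
open MeasureTheory Finset Real
open Filter Topology

noncomputable section

section Helpers

lemma tangent_le {f : ℝ → ℝ} (hconc : ConcaveOn ℝ Set.univ f) (hd : Differentiable ℝ f)
    (x y : ℝ) : f y ≤ f x + deriv f x * (y - x) := by
  rcases lt_trichotomy x y with h | h | h
  · have h1 := hconc.slope_le_deriv (Set.mem_univ x) (Set.mem_univ y) h (hd x)
    rw [slope_def_field] at h1
    have h2 : y - x > 0 := by linarith
    rw [div_le_iff₀ h2] at h1
    linarith
  · subst h; simp
  · have h1 := hconc.deriv_le_slope (Set.mem_univ y) (Set.mem_univ x) h (hd x)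
    rw [slope_def_field] at h1
    have h2 : x - y > 0 := by linarith
    rw [le_div_iff₀ h2] at h1
    have : deriv f x * (y - x) = -(deriv f x * (x - y)) := by ring
    linarith

lemma cont_bound {g : ℝ → ℝ} (hg : Continuous g) (C : ℝ) :
    ∃ M : ℝ, 0 ≤ M ∧ ∀ x : ℝ, |x| ≤ C → |g x| ≤ M := by
  by_cases hC : 0 ≤ C
  · obtain ⟨x₀, -, hx₀⟩ := isCompact_Icc.exists_isMaxOn (Set.nonempty_Icc.2 (by linarith : -C ≤ C))
      ((hg.abs).continuousOn)
    exact ⟨|g x₀|, abs_nonneg _, fun x hx => hx₀ (Set.mem_Icc.2 (abs_le.1 hx))⟩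
  · exact ⟨0, le_refl 0, fun x hx => absurd ((abs_nonneg x).trans hx) hC⟩

lemma cont_pos_lb {g : ℝ → ℝ} (hg : Continuous g) (hpos : ∀ x, 0 < g x) (C : ℝ) :
    ∃ δ : ℝ, 0 < δ ∧ ∀ x : ℝ, |x| ≤ C → δ ≤ g x := by
  by_cases hC : 0 ≤ C
  · obtain ⟨x₀, -, hx₀⟩ := isCompact_Icc.exists_isMinOn (Set.nonempty_Icc.2 (by linarith : -C ≤ C))
      hg.continuousOn
    exact ⟨g x₀, hpos x₀, fun x hx => hx₀ (Set.mem_Icc.2 (abs_le.1 hx))⟩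
  · exact ⟨1, one_pos, fun x hx => absurd ((abs_nonneg x).trans hx) hC⟩

lemma integrable_of_bdd {Ω : Type*} [MeasurableSpace Ω] {μ : Measure Ω} [IsProbabilityMeasure μ]
    {h : Ω → ℝ} (hm : AEStronglyMeasurable h μ) {C : ℝ} (hb : ∀ᵐ ω ∂μ, |h ω| ≤ C) :
    Integrable h μ :=
  (integrable_const C).mono' hm (by simpa [Real.norm_eq_abs] using hb)

lemma eventually_integral_gt {Ω : Type*} [MeasurableSpace Ω] {μ : Measure Ω}
    [IsProbabilityMeasure μ] {f : ℝ → ℝ} (hf : ContDiff ℝ 1 f)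
    (hconc : ConcaveOn ℝ Set.univ f)
    {V Z : Ω → ℝ} (hV : AEStronglyMeasurable V μ) {C K : ℝ} (hC : 0 ≤ C) (hK : 0 ≤ K)
    (hVb : ∀ᵐ ω ∂μ, |V ω| ≤ C) (hZm : AEStronglyMeasurable Z μ) (hZb : ∀ᵐ ω ∂μ, |Z ω| ≤ K)
    (hpos : 0 < ∫ ω, deriv f (V ω) * Z ω ∂μ) :
    ∀ᶠ ε in 𝓝[>] (0:ℝ), ∫ ω, f (V ω) ∂μ < ∫ ω, f (V ω + ε * Z ω) ∂μ := by
  have hd : Differentiable ℝ f := hf.differentiable one_ne_zero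
  have hd' : Continuous (deriv f) := hf.continuous_deriv le_rfl
  obtain ⟨M, hM0, hM⟩ := cont_bound hd' (C + K)
  obtain ⟨Mf, hMf0, hMf⟩ := cont_bound hf.continuous (C + K)
  -- dominated convergence for ε ↦ ∫ deriv f (V + εZ) * Z
  have hVZm : ∀ ε : ℝ, AEStronglyMeasurable (fun ω => V ω + ε * Z ω) μ :=
    fun ε => hV.add (hZm.const_mul ε)
  have hbd : ∀ ε : ℝ, |ε| ≤ 1 → ∀ᵐ ω ∂μ, |V ω + ε * Z ω| ≤ C + K := by
    intro ε hε
    filter_upwards [hVb, hZb] with ω h1 h2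
    calc |V ω + ε * Z ω| ≤ |V ω| + |ε * Z ω| := abs_add_le _ _
      _ ≤ C + K := by
        have h3 : |ε * Z ω| ≤ K := by
          rw [abs_mul]
          nlinarith [abs_nonneg (Z ω), abs_nonneg ε]
        linarith
  have htend : Tendsto (fun ε : ℝ => ∫ ω, deriv f (V ω + ε * Z ω) * Z ω ∂μ) (𝓝[>] 0)
      (𝓝 (∫ ω, deriv f (V ω) * Z ω ∂μ)) := by
    apply tendsto_integral_filter_of_dominated_convergence (fun _ => M * K)
    · filter_upwards with ε
      exact ((hd'.comp_aestronglyMeasurable (hVZm ε)).mul hZm)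
    · have : Set.Ioc (0:ℝ) 1 ∈ 𝓝[>] (0:ℝ) := Ioc_mem_nhdsGT_of_mem ⟨le_refl _, one_pos⟩
      filter_upwards [this] with ε hε
      filter_upwards [hbd ε (by rw [abs_of_pos hε.1]; exact hε.2), hZb] with ω h1 h2
      rw [Real.norm_eq_abs, abs_mul]
      exact mul_le_mul (hM _ h1) h2 (abs_nonneg _) hM0
    · exact integrable_const _
    · filter_upwards with ω
      have hcont : Continuous (fun ε : ℝ => deriv f (V ω + ε * Z ω) * Z ω) := by
        exact (hd'.comp (continuous_const.add (continuous_id.mul continuous_const))).mul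
          continuous_const
      have := hcont.tendsto 0
      simpa using this.mono_left nhdsWithin_le_nhds
  have hev : ∀ᶠ ε in 𝓝[>] (0:ℝ), 0 < ∫ ω, deriv f (V ω + ε * Z ω) * Z ω ∂μ :=
    htend.eventually (eventually_gt_nhds hpos)
  have hsmall : Set.Ioc (0:ℝ) 1 ∈ 𝓝[>] (0:ℝ) := Ioc_mem_nhdsGT_of_mem ⟨le_refl _, one_pos⟩
  filter_upwards [hev, hsmall] with ε hε hεmem
  -- tangent inequality: f(V) ≤ f(V+εZ) - ε * deriv f(V+εZ) * Z
  have habs : |ε| ≤ 1 := by rw [abs_of_pos hεmem.1]; exact hεmem.2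
  have hptwise : ∀ᵐ ω ∂μ, f (V ω) ≤ f (V ω + ε * Z ω)
      - ε * (deriv f (V ω + ε * Z ω) * Z ω) := by
    filter_upwards with ω
    have := tangent_le hconc hd (V ω + ε * Z ω) (V ω)
    have heq : V ω - (V ω + ε * Z ω) = -(ε * Z ω) := by ring
    rw [heq] at this
    nlinarith [this]
  have hint1 : Integrable (fun ω => f (V ω)) μ :=
    integrable_of_bdd (hf.continuous.comp_aestronglyMeasurable hV)
      (by filter_upwards [hVb] with ω h; exact hMf _ (by linarith [abs_nonneg (V ω)]))
  have hint2 : Integrable (fun ω => f (V ω + ε * Z ω)) μ :=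
    integrable_of_bdd (hf.continuous.comp_aestronglyMeasurable (hVZm ε))
      (by filter_upwards [hbd ε habs] with ω h; exact hMf _ h)
  have hint3 : Integrable (fun ω => deriv f (V ω + ε * Z ω) * Z ω) μ :=
    integrable_of_bdd ((hd'.comp_aestronglyMeasurable (hVZm ε)).mul hZm)
      (by filter_upwards [hbd ε habs, hZb] with ω h1 h2
          rw [abs_mul]
          exact mul_le_mul (hM _ h1) h2 (abs_nonneg _) hM0)
  have hint4 : Integrable (fun ω => f (V ω + ε * Z ω)
      - ε * (deriv f (V ω + ε * Z ω) * Z ω)) μ := hint2.sub (hint3.const_mul ε)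
  have := integral_mono_ae hint1 hint4 hptwise
  rw [integral_sub hint2 (hint3.const_mul ε), MeasureTheory.integral_const_mul] at this
  nlinarith [mul_pos hεmem.1 hε]

end Helpers

/-- Characterization of Pareto optimality by a first order condition (Theorem 2.14):
`(X_t) ∈ A(W)` is Pareto optimal iff there is `λ ∈ (0,∞)^T` such that
`(λ_t u_t'(X̃_t))` is an `(F_t)`-martingale. -/
theorem paretoOptimal_iff_firstOrderCondition
    {Ω : Type*} [mΩ : MeasurableSpace Ω] (μ : Measure Ω) [IsProbabilityMeasure μ]
    (T : ℕ) (hT : 1 ≤ T)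
    (ℱ : ℕ → MeasurableSpace Ω) (hℱmono : Monotone ℱ) (hℱle : ∀ t, ℱ t ≤ mΩ)
    (r : ℕ → Ω → ℝ)
    (hr_meas : ∀ t ∈ Finset.Icc 1 T, Measurable[ℱ (t - 1)] (r t))
    (hr_nonneg : ∀ t ∈ Finset.Icc 1 T, ∀ ω, 0 ≤ r t ω)
    (hr_bdd : ∀ t ∈ Finset.Icc 1 T, ∃ C : ℝ, ∀ ω, r t ω ≤ C)
    (B : ℕ → Ω → ℝ) (hB : ∀ t ω, B t ω = ∏ k ∈ Finset.Icc 1 t, (1 + r k ω))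
    (u : ℕ → ℝ → ℝ)
    (hu_conc : ∀ t ∈ Finset.Icc 1 T, StrictConcaveOn ℝ (Set.univ : Set ℝ) (u t))
    (hu_diff : ∀ t ∈ Finset.Icc 1 T, ContDiff ℝ 1 (u t))
    (hu_deriv : ∀ t ∈ Finset.Icc 1 T, ∀ x : ℝ, 0 < deriv (u t) x)
    (W : Ω → ℝ) (hWmeas : Measurable[ℱ T] W) (hWbdd : ∃ C : ℝ, ∀ᵐ ω ∂μ, |W ω| ≤ C)
    (X : ℕ → Ω → ℝ) (hX : IsAlloc μ T ℱ B W X) :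
    (¬ ∃ Y, IsAlloc μ T ℱ B W Y ∧
        (∀ t ∈ Finset.Icc 1 T,
          ∫ ω, u t (X t ω / B t ω) ∂μ ≤ ∫ ω, u t (Y t ω / B t ω) ∂μ) ∧
        (∃ t₀ ∈ Finset.Icc 1 T,
          ∫ ω, u t₀ (X t₀ ω / B t₀ ω) ∂μ < ∫ ω, u t₀ (Y t₀ ω / B t₀ ω) ∂μ)) ↔
    (∃ lam : ℕ → ℝ, (∀ t ∈ Finset.Icc 1 T, 0 < lam t) ∧
      ∀ s ∈ Finset.Icc 1 T, ∀ t ∈ Finset.Icc 1 T, s ≤ t →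
        μ[(fun ω => lam t * deriv (u t) (X t ω / B t ω)) | ℱ s]
          =ᵐ[μ] fun ω => lam s * deriv (u s) (X s ω / B s ω)) := by
  classical

  have hB1 : ∀ t ∈ Finset.Icc 1 T, ∀ ω, 1 ≤ B t ω := by
    intro t ht ω
    rw [hB]
    have h1 : (1:ℝ) = ∏ _k ∈ Finset.Icc 1 t, (1:ℝ) := by simp
    rw [h1]
    apply Finset.prod_le_prod (fun k _ => by norm_num)
    intro k hk
    have hkT : k ∈ Finset.Icc 1 T := by
      simp only [Finset.mem_Icc] at *
      omega
    nlinarith [hr_nonneg k hkT ω]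
  have hBpos : ∀ t ∈ Finset.Icc 1 T, ∀ ω, 0 < B t ω :=
    fun t ht ω => lt_of_lt_of_le one_pos (hB1 t ht ω)
  have hBne : ∀ t ∈ Finset.Icc 1 T, ∀ ω, B t ω ≠ 0 :=
    fun t ht ω => ne_of_gt (hBpos t ht ω)
  have hBmeas : ∀ t ∈ Finset.Icc 1 T, Measurable[ℱ t] (B t) := by
    intro t ht
    have hBe : B t = fun ω => ∏ k ∈ Finset.Icc 1 t, (1 + r k ω) := funext (hB t)
    rw [hBe]
    apply Finset.measurable_prod
    intro k hk
    have hkT : k ∈ Finset.Icc 1 T := by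
      simp only [Finset.mem_Icc] at *
      omega
    have hk1 : k - 1 ≤ t := by
      simp only [Finset.mem_Icc] at hk
      omega
    exact measurable_const.add ((hr_meas k hkT).mono (hℱmono hk1) le_rfl)
  have hBbd : ∀ t ∈ Finset.Icc 1 T, ∃ CB : ℝ, ∀ ω, B t ω ≤ CB := by
    intro t ht
    have htT : t ≤ T := (Finset.mem_Icc.1 ht).2
    refine ⟨∏ k ∈ Finset.Icc 1 t,
      (1 + if h : k ∈ Finset.Icc 1 T then max (Classical.choose (hr_bdd k h)) 0 else 0), fun ω => ?_⟩
    rw [hB]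
    apply Finset.prod_le_prod
    · intro k hk
      have hkT : k ∈ Finset.Icc 1 T := by
        simp only [Finset.mem_Icc] at *; omega
      nlinarith [hr_nonneg k hkT ω]
    · intro k hk
      have hkT : k ∈ Finset.Icc 1 T := by
        simp only [Finset.mem_Icc] at *; omega
      simp only [hkT, dif_pos]
      have := Classical.choose_spec (hr_bdd k hkT) ω
      have h2 : Classical.choose (hr_bdd k hkT) ≤ max (Classical.choose (hr_bdd k hkT)) 0 :=
        le_max_left _ _
      linarith
  have hmeas_til : ∀ V : ℕ → Ω → ℝ, IsAlloc μ T ℱ B W V → ∀ t ∈ Finset.Icc 1 T,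
      Measurable[ℱ t] fun ω => V t ω / B t ω :=
    fun V hV t ht => ((hV.1 t ht).1).div (hBmeas t ht)
  have haesm_til : ∀ V : ℕ → Ω → ℝ, IsAlloc μ T ℱ B W V → ∀ t ∈ Finset.Icc 1 T,
      AEStronglyMeasurable (fun ω => V t ω / B t ω) μ :=
    fun V hV t ht => ((hmeas_til V hV t ht).mono (hℱle t) le_rfl).aestronglyMeasurable
  have hbdd_til : ∀ V : ℕ → Ω → ℝ, IsAlloc μ T ℱ B W V → ∀ t ∈ Finset.Icc 1 T,
      ∃ C : ℝ, 0 ≤ C ∧ ∀ᵐ ω ∂μ, |V t ω / B t ω| ≤ C := by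
    intro V hV t ht
    obtain ⟨C, hC⟩ := (hV.1 t ht).2
    refine ⟨max C 0, le_max_right _ _, ?_⟩
    filter_upwards [hC] with ω hω
    rw [abs_div, abs_of_pos (hBpos t ht ω)]
    calc |V t ω| / B t ω ≤ |V t ω| := by
          apply div_le_self (abs_nonneg _) (hB1 t ht ω)
      _ ≤ max C 0 := le_trans hω (le_max_left _ _)
  have hu_contin : ∀ t ∈ Finset.Icc 1 T, Continuous (u t) :=
    fun t ht => (hu_diff t ht).continuous
  have hderiv_cont : ∀ t ∈ Finset.Icc 1 T, Continuous (deriv (u t)) :=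
    fun t ht => (hu_diff t ht).continuous_deriv le_rfl
  have hu_diffble : ∀ t ∈ Finset.Icc 1 T, Differentiable ℝ (u t) :=
    fun t ht => (hu_diff t ht).differentiable one_ne_zero
  have hu_concave : ∀ t ∈ Finset.Icc 1 T, ConcaveOn ℝ Set.univ (u t) :=
    fun t ht => (hu_conc t ht).concaveOn
  have hint_u : ∀ V : ℕ → Ω → ℝ, IsAlloc μ T ℱ B W V → ∀ t ∈ Finset.Icc 1 T,
      Integrable (fun ω => u t (V t ω / B t ω)) μ := by
    intro V hV t ht
    obtain ⟨C, hC0, hC⟩ := hbdd_til V hV t ht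
    obtain ⟨M, hM0, hM⟩ := cont_bound (hu_contin t ht) C
    exact integrable_of_bdd ((hu_contin t ht).comp_aestronglyMeasurable (haesm_til V hV t ht))
      (by filter_upwards [hC] with ω hω; exact hM _ hω)
  have ha_meas : ∀ t ∈ Finset.Icc 1 T, Measurable[ℱ t] fun ω => deriv (u t) (X t ω / B t ω) :=
    fun t ht => (hderiv_cont t ht).measurable.comp (hmeas_til X hX t ht)
  have ha_aesm : ∀ t ∈ Finset.Icc 1 T,
      AEStronglyMeasurable (fun ω => deriv (u t) (X t ω / B t ω)) μ :=
    fun t ht => ((ha_meas t ht).mono (hℱle t) le_rfl).aestronglyMeasurable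
  have ha_bdd : ∀ t ∈ Finset.Icc 1 T, ∃ C : ℝ, 0 ≤ C ∧
      ∀ᵐ ω ∂μ, |deriv (u t) (X t ω / B t ω)| ≤ C := by
    intro t ht
    obtain ⟨C, hC0, hC⟩ := hbdd_til X hX t ht
    obtain ⟨M, hM0, hM⟩ := cont_bound (hderiv_cont t ht) C
    exact ⟨M, hM0, by filter_upwards [hC] with ω hω; exact hM _ hω⟩
  have ha_int : ∀ t ∈ Finset.Icc 1 T,
      Integrable (fun ω => deriv (u t) (X t ω / B t ω)) μ := by
    intro t ht
    obtain ⟨C, hC0, hC⟩ := ha_bdd t ht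
    exact integrable_of_bdd (ha_aesm t ht) hC
  have ha_intpos : ∀ t ∈ Finset.Icc 1 T, 0 < ∫ ω, deriv (u t) (X t ω / B t ω) ∂μ := by
    intro t ht
    obtain ⟨C, hC0, hC⟩ := hbdd_til X hX t ht
    obtain ⟨δ, hδ0, hδ⟩ := cont_pos_lb (hderiv_cont t ht) (fun x => hu_deriv t ht x) C
    have hlb : ∀ᵐ ω ∂μ, δ ≤ deriv (u t) (X t ω / B t ω) := by
      filter_upwards [hC] with ω hω; exact hδ _ hω
    have h1 : δ ≤ ∫ ω, deriv (u t) (X t ω / B t ω) ∂μ := by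
      have := integral_mono_ae (integrable_const δ) (ha_int t ht) hlb
      simpa using this
    linarith

  constructor
  · -- forward direction
    intro hPO
    refine ⟨fun t => (∫ ω, deriv (u t) (X t ω / B t ω) ∂μ)⁻¹, fun t ht => inv_pos.2 (ha_intpos t ht), ?_⟩
    intro s hs t ht hst
    haveI : SigmaFinite (μ.trim (hℱle s)) := by
      have : IsFiniteMeasure (μ.trim (hℱle s)) := isFiniteMeasure_trim _
      infer_instance
    rcases eq_or_lt_of_le hst with rfl | hslt
    · -- s = t : conditional expectation of an ℱ s-measurable function
      refine Filter.EventuallyEq.of_eq ?_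
      exact condExp_of_stronglyMeasurable (hℱle s)
        (((ha_meas s hs).const_mul _).stronglyMeasurable) ((ha_int s hs).const_mul _)
    -- s < t
    -- key sign restriction coming from Pareto optimality
    have key : ∀ Z : Ω → ℝ, Measurable[ℱ s] Z → (∃ K : ℝ, 0 ≤ K ∧ ∀ ω, |Z ω| ≤ K) →
        ¬(0 < (∫ ω, deriv (u s) (X s ω / B s ω) * Z ω ∂μ) ∧
          (∫ ω, deriv (u t) (X t ω / B t ω) * Z ω ∂μ) < 0) := by
      rintro Z hZmeas ⟨K, hK0, hKb⟩ ⟨hpos_s, hneg_t⟩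
      obtain ⟨Cs, hCs0, hCs⟩ := hbdd_til X hX s hs
      obtain ⟨Ct, hCt0, hCt⟩ := hbdd_til X hX t ht
      have hZaesm : AEStronglyMeasurable Z μ :=
        ((hZmeas.mono (hℱle s) le_rfl)).aestronglyMeasurable
      have hZae : ∀ᵐ ω ∂μ, |Z ω| ≤ K := Filter.Eventually.of_forall hKb
      have hev1 := eventually_integral_gt (hu_diff s hs) (hu_concave s hs)
        (haesm_til X hX s hs) hCs0 hK0 hCs hZaesm hZae hpos_s
      have hpos_t' : 0 < ∫ ω, deriv (u t) (X t ω / B t ω) * (-Z ω) ∂μ := by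
        have : (∫ ω, deriv (u t) (X t ω / B t ω) * (-Z ω) ∂μ) =
            - ∫ ω, deriv (u t) (X t ω / B t ω) * Z ω ∂μ := by
          rw [← integral_neg]; congr 1; ext ω; ring
        rw [this]; linarith
      have hev2 := eventually_integral_gt (Z := fun ω => -Z ω) (hu_diff t ht) (hu_concave t ht)
        (haesm_til X hX t ht) hCt0 hK0 hCt hZaesm.neg
        (by filter_upwards [hZae] with ω h; simpa using h) hpos_t'
      obtain ⟨ε, ⟨hε1, hε2⟩, hεpos⟩ := ((hev1.and hev2).and self_mem_nhdsWithin).exists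
      have hεpos' : (0:ℝ) < ε := hεpos
      have hsne : s ≠ t := ne_of_lt hslt
      set Ynew : ℕ → Ω → ℝ := fun q => if q = s then (fun ω => X s ω + ε * (B s ω * Z ω))
        else if q = t then (fun ω => X t ω - ε * (B t ω * Z ω)) else X q with hYnewdef
      have hYs : ∀ ω, Ynew s ω / B s ω = X s ω / B s ω + ε * Z ω := by
        intro ω
        have hb := hBne s hs ω
        simp only [Ynew, if_pos rfl]
        field_simp
      have hYt : ∀ ω, Ynew t ω / B t ω = X t ω / B t ω - ε * Z ω := by
        intro ω
        have hb := hBne t ht ω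
        simp only [Ynew, if_neg (Ne.symm hsne), if_pos rfl, if_true]
        field_simp
      have hYother : ∀ q, q ≠ s → q ≠ t → Ynew q = X q := by
        intro q h1 h2
        simp [Ynew, h1, h2]
      apply hPO
      refine ⟨Ynew, ⟨?_, ?_⟩, ?_, s, hs, ?_⟩
      · -- measurability and boundedness
        intro q hq
        by_cases h1 : q = s
        · subst h1
          constructor
          · rw [show Ynew q = fun ω => X q ω + ε * (B q ω * Z ω) by
              simp only [Ynew, if_pos rfl]]
            exact (hX.1 q hq).1.add (measurable_const.mul ((hBmeas q hq).mul hZmeas))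
          · obtain ⟨CX, hCX⟩ := (hX.1 q hq).2
            obtain ⟨CB, hCB⟩ := hBbd q hq
            refine ⟨CX + ε * (CB * K), ?_⟩
            filter_upwards [hCX] with ω h
            rw [show Ynew q ω = X q ω + ε * (B q ω * Z ω) by simp only [Ynew, if_pos rfl]]
            have h1 : |X q ω + ε * (B q ω * Z ω)| ≤ |X q ω| + |ε * (B q ω * Z ω)| :=
              abs_add_le _ _
            have h2 : |ε * (B q ω * Z ω)| = ε * (B q ω * |Z ω|) := by
              rw [abs_mul, abs_mul, abs_of_pos hεpos', abs_of_pos (hBpos q hq ω)]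
            have h3 := hKb ω
            have h4 := hCB ω
            have h5 := hBpos q hq ω
            have h6 : B q ω * |Z ω| ≤ CB * K :=
              mul_le_mul h4 h3 (abs_nonneg _) (le_trans h5.le h4)
            have h7 := mul_le_mul_of_nonneg_left h6 hεpos'.le
            linarith
        · by_cases h2 : q = t
          · subst h2
            constructor
            · rw [show Ynew q = fun ω => X q ω - ε * (B q ω * Z ω) by
                simp [Ynew, h1]]
              exact (hX.1 q hq).1.sub (measurable_const.mul ((hBmeas q hq).mul
                (hZmeas.mono (hℱmono hslt.le) le_rfl)))
            · obtain ⟨CX, hCX⟩ := (hX.1 q hq).2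
              obtain ⟨CB, hCB⟩ := hBbd q hq
              refine ⟨CX + ε * (CB * K), ?_⟩
              filter_upwards [hCX] with ω h
              rw [show Ynew q ω = X q ω - ε * (B q ω * Z ω) by
                simp [Ynew, h1]]
              have hh1 : |X q ω - ε * (B q ω * Z ω)| ≤ |X q ω| + |ε * (B q ω * Z ω)| :=
                abs_sub _ _
              have hh2 : |ε * (B q ω * Z ω)| = ε * (B q ω * |Z ω|) := by
                rw [abs_mul, abs_mul, abs_of_pos hεpos', abs_of_pos (hBpos q hq ω)]
              have h3 := hKb ω
              have h4 := hCB ω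
              have h5 := hBpos q hq ω
              have h6 : B q ω * |Z ω| ≤ CB * K :=
                mul_le_mul h4 h3 (abs_nonneg _) (le_trans h5.le h4)
              have h7 := mul_le_mul_of_nonneg_left h6 hεpos'.le
              linarith
          · rw [hYother q h1 h2]
            exact hX.1 q hq
      · -- sum condition
        filter_upwards [hX.2] with ω hω
        have hterm : ∀ q ∈ Finset.Icc 1 T, Ynew q ω / B q ω = X q ω / B q ω +
            ((if q = s then ε * Z ω else 0) + (if q = t then -(ε * Z ω) else 0)) := by
          intro q hq
          by_cases h1 : q = s
          · subst h1
            rw [hYs ω, if_pos rfl, if_neg hsne]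
            ring
          · by_cases h2 : q = t
            · subst h2
              rw [hYt ω, if_neg h1, if_pos rfl]
              ring
            · rw [hYother q h1 h2, if_neg h1, if_neg h2]
              ring
        rw [Finset.sum_congr rfl hterm, Finset.sum_add_distrib, Finset.sum_add_distrib,
          Finset.sum_ite_eq' (Finset.Icc 1 T) s (fun _ => ε * Z ω),
          Finset.sum_ite_eq' (Finset.Icc 1 T) t (fun _ => -(ε * Z ω)),
          if_pos hs, if_pos ht, hω]
        ring
      · -- weak improvement everywhere
        intro q hq
        by_cases h1 : q = s
        · subst h1
          rw [show (fun ω => u q (Ynew q ω / B q ω)) = fun ω => u q (X q ω / B q ω + ε * Z ω)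
            from funext fun ω => by rw [hYs ω]]
          exact le_of_lt hε1
        · by_cases h2 : q = t
          · subst h2
            rw [show (fun ω => u q (Ynew q ω / B q ω)) =
                fun ω => u q (X q ω / B q ω + ε * -Z ω)
              from funext fun ω => by rw [hYt ω]; ring_nf]
            exact le_of_lt hε2
          · rw [hYother q h1 h2]
      · -- strict improvement at s
        rw [show (fun ω => u s (Ynew s ω / B s ω)) = fun ω => u s (X s ω / B s ω + ε * Z ω)
          from funext fun ω => by rw [hYs ω]]
        exact hε1
    -- use `key` to show proportionality of conditional expectations
    obtain ⟨Ca, hCa0, hCa⟩ := ha_bdd s hs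
    obtain ⟨Cb, hCb0, hCb⟩ := ha_bdd t ht
    have hIa := ha_intpos s hs
    have hIb := ha_intpos t ht
    -- integrability of products with bounded Z
    have hmulint : ∀ q ∈ Finset.Icc 1 T, ∀ Z : Ω → ℝ, Measurable[ℱ s] Z →
        (∃ K : ℝ, 0 ≤ K ∧ ∀ ω, |Z ω| ≤ K) →
        Integrable (fun ω => deriv (u q) (X q ω / B q ω) * Z ω) μ := by
      rintro q hq Z hZm ⟨K, hK0, hKb⟩
      obtain ⟨Cq, hCq0, hCq⟩ := ha_bdd q hq
      apply integrable_of_bdd (C := Cq * K)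
      · exact (ha_aesm q hq).mul ((hZm.mono (hℱle s) le_rfl)).aestronglyMeasurable
      · filter_upwards [hCq] with ω h
        rw [abs_mul]
        exact mul_le_mul h (hKb ω) (abs_nonneg _) hCq0
    -- claim: if ∫ a_s Z = 0 then ¬ (∫ a_t Z < 0)
    have claim1 : ∀ Z : Ω → ℝ, Measurable[ℱ s] Z → (∃ K : ℝ, 0 ≤ K ∧ ∀ ω, |Z ω| ≤ K) →
        (∫ ω, deriv (u s) (X s ω / B s ω) * Z ω ∂μ) = 0 →
        ¬((∫ ω, deriv (u t) (X t ω / B t ω) * Z ω ∂μ) < 0) := by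
      rintro Z hZm ⟨K, hK0, hKb⟩ h0 hlt
      set δ : ℝ := (-(∫ ω, deriv (u t) (X t ω / B t ω) * Z ω ∂μ)) /
        (2 * ∫ ω, deriv (u t) (X t ω / B t ω) ∂μ) with hδdef
      have hδpos : 0 < δ := div_pos (by linarith) (by linarith)
      apply key (fun ω => Z ω + δ) (hZm.add measurable_const)
        ⟨K + δ, by linarith, fun ω => (abs_add_le _ _).trans (by
          rw [abs_of_pos hδpos]; exact add_le_add (hKb ω) le_rfl)⟩
      have hint1 := hmulint s hs Z hZm ⟨K, hK0, hKb⟩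
      have hint2 := hmulint t ht Z hZm ⟨K, hK0, hKb⟩
      have expand : ∀ q ∈ Finset.Icc 1 T,
          (∫ ω, deriv (u q) (X q ω / B q ω) * (Z ω + δ) ∂μ) =
          (∫ ω, deriv (u q) (X q ω / B q ω) * Z ω ∂μ) +
            δ * ∫ ω, deriv (u q) (X q ω / B q ω) ∂μ := by
        intro q hq
        have e : (fun ω => deriv (u q) (X q ω / B q ω) * (Z ω + δ)) =
            fun ω => deriv (u q) (X q ω / B q ω) * Z ω +
              δ * deriv (u q) (X q ω / B q ω) := by
          ext ω; ring
        rw [e, integral_add (hmulint q hq Z hZm ⟨K, hK0, hKb⟩) ((ha_int q hq).const_mul δ),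
          MeasureTheory.integral_const_mul]
      constructor
      · rw [expand s hs, h0]
        nlinarith [mul_pos hδpos hIa]
      · rw [expand t ht]
        have hIbne : (∫ ω, deriv (u t) (X t ω / B t ω) ∂μ) ≠ 0 := ne_of_gt hIb
        have hδIb : δ * ∫ ω, deriv (u t) (X t ω / B t ω) ∂μ =
            (-(∫ ω, deriv (u t) (X t ω / B t ω) * Z ω ∂μ)) / 2 := by
          rw [hδdef]
          field_simp
        rw [hδIb]
        linarith
    -- consequence: ∫ a_s Z = 0 → ∫ a_t Z = 0
    have hzero : ∀ Z : Ω → ℝ, Measurable[ℱ s] Z → (∃ K : ℝ, 0 ≤ K ∧ ∀ ω, |Z ω| ≤ K) →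
        (∫ ω, deriv (u s) (X s ω / B s ω) * Z ω ∂μ) = 0 →
        (∫ ω, deriv (u t) (X t ω / B t ω) * Z ω ∂μ) = 0 := by
      rintro Z hZm ⟨K, hK0, hKb⟩ h0
      by_contra hne
      rcases lt_or_gt_of_ne hne with hlt | hgt
      · exact claim1 Z hZm ⟨K, hK0, hKb⟩ h0 hlt
      · have hnegint : ∀ q, (∫ ω, deriv (u q) (X q ω / B q ω) * (-Z ω) ∂μ) =
            -(∫ ω, deriv (u q) (X q ω / B q ω) * Z ω ∂μ) := by
          intro q
          rw [← integral_neg]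
          congr 1; ext ω; ring
        refine claim1 (fun ω => -Z ω) hZm.neg
          ⟨K, hK0, fun ω => by rw [abs_neg]; exact hKb ω⟩ ?_ ?_
        · rw [hnegint s, h0, neg_zero]
        · rw [hnegint t]; linarith
    -- set-integral equality on ℱ s-measurable sets
    have hseteq : ∀ A : Set Ω, MeasurableSet[ℱ s] A →
        (∫ ω in A, deriv (u t) (X t ω / B t ω) ∂μ) =
          ((∫ ω in A, deriv (u s) (X s ω / B s ω) ∂μ) /
            (∫ ω, deriv (u s) (X s ω / B s ω) ∂μ)) *
            ∫ ω, deriv (u t) (X t ω / B t ω) ∂μ := by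
      intro A hA
      have hAm : MeasurableSet A := hℱle s A hA
      set c : ℝ := (∫ ω in A, deriv (u s) (X s ω / B s ω) ∂μ) /
        (∫ ω, deriv (u s) (X s ω / B s ω) ∂μ) with hcdef
      set Z : Ω → ℝ := fun ω => A.indicator (fun _ => (1:ℝ)) ω - c with hZdef
      have hZm : Measurable[ℱ s] Z :=
        (measurable_const.indicator hA).sub measurable_const
      have hZb : ∃ K : ℝ, 0 ≤ K ∧ ∀ ω, |Z ω| ≤ K := by
        refine ⟨1 + |c|, by positivity, fun ω => ?_⟩
        have h1 : |A.indicator (fun _ => (1:ℝ)) ω| ≤ 1 := by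
          by_cases h : ω ∈ A <;> simp [h]
        calc |Z ω| ≤ |A.indicator (fun _ => (1:ℝ)) ω| + |c| := abs_sub _ _
          _ ≤ 1 + |c| := add_le_add h1 le_rfl
      have hindint : ∀ q ∈ Finset.Icc 1 T,
          (∫ ω, deriv (u q) (X q ω / B q ω) * A.indicator (fun _ => (1:ℝ)) ω ∂μ) =
          ∫ ω in A, deriv (u q) (X q ω / B q ω) ∂μ := by
        intro q hq
        have e : (fun ω => deriv (u q) (X q ω / B q ω) * A.indicator (fun _ => (1:ℝ)) ω) =
            A.indicator fun ω => deriv (u q) (X q ω / B q ω) := by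
          ext ω
          by_cases h : ω ∈ A <;> simp [h]
        rw [e, integral_indicator hAm]
      have hexp : ∀ q ∈ Finset.Icc 1 T,
          (∫ ω, deriv (u q) (X q ω / B q ω) * Z ω ∂μ) =
          (∫ ω in A, deriv (u q) (X q ω / B q ω) ∂μ) -
            c * ∫ ω, deriv (u q) (X q ω / B q ω) ∂μ := by
        intro q hq
        have e : (fun ω => deriv (u q) (X q ω / B q ω) * Z ω) =
            fun ω => deriv (u q) (X q ω / B q ω) * A.indicator (fun _ => (1:ℝ)) ω -
              c * deriv (u q) (X q ω / B q ω) := by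
          ext ω; simp only [Z]; ring
        rw [e, integral_sub ?_ ((ha_int q hq).const_mul c), hindint q hq,
          MeasureTheory.integral_const_mul]
        · have hint := hmulint q hq (fun ω => A.indicator (fun _ => (1:ℝ)) ω)
            (measurable_const.indicator hA)
            ⟨1, zero_le_one, fun ω => by by_cases h : ω ∈ A <;> simp [h]⟩
          exact hint
      have h0 : (∫ ω, deriv (u s) (X s ω / B s ω) * Z ω ∂μ) = 0 := by
        rw [hexp s hs, hcdef]
        field_simp
        simp
      have h1 := hzero Z hZm hZb h0
      rw [hexp t ht] at h1
      linarith
    -- conclude with uniqueness of conditional expectation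
    refine (ae_eq_condExp_of_forall_setIntegral_eq (hℱle s)
      ((ha_int t ht).const_mul _)
      (fun A _ _ => ((ha_int s hs).const_mul _).integrableOn)
      (fun A hA _ => ?_)
      (((ha_meas s hs).const_mul _).stronglyMeasurable.aestronglyMeasurable)).symm
    rw [MeasureTheory.integral_const_mul, MeasureTheory.integral_const_mul, hseteq A hA]
    field_simp
  · rintro ⟨lam, hlam, hmart⟩ ⟨Y, hY, hge, t₀, ht₀, hgt⟩
    have hTmem : T ∈ Finset.Icc 1 T := Finset.mem_Icc.2 ⟨hT, le_rfl⟩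
    -- D t = Ỹ_t - X̃_t ; M t = lam t * u_t'(X̃_t)
    have hD_meas : ∀ t ∈ Finset.Icc 1 T,
        Measurable[ℱ t] fun ω => Y t ω / B t ω - X t ω / B t ω :=
      fun t ht => (hmeas_til Y hY t ht).sub (hmeas_til X hX t ht)
    have hD_bdd : ∀ t ∈ Finset.Icc 1 T, ∃ C : ℝ, 0 ≤ C ∧
        ∀ᵐ ω ∂μ, |Y t ω / B t ω - X t ω / B t ω| ≤ C := by
      intro t ht
      obtain ⟨C1, hC10, hC1⟩ := hbdd_til Y hY t ht
      obtain ⟨C2, hC20, hC2⟩ := hbdd_til X hX t ht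
      refine ⟨C1 + C2, by linarith, ?_⟩
      filter_upwards [hC1, hC2] with ω h1 h2
      calc |Y t ω / B t ω - X t ω / B t ω| ≤ |Y t ω / B t ω| + |X t ω / B t ω| := abs_sub _ _
        _ ≤ C1 + C2 := add_le_add h1 h2
    have hMT_bdd : ∃ C : ℝ, 0 ≤ C ∧
        ∀ᵐ ω ∂μ, |lam T * deriv (u T) (X T ω / B T ω)| ≤ C := by
      obtain ⟨C, hC0, hC⟩ := ha_bdd T hTmem
      refine ⟨|lam T| * C, by positivity, ?_⟩
      filter_upwards [hC] with ω hω
      rw [abs_mul]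
      exact mul_le_mul_of_nonneg_left hω (abs_nonneg _)
    have hMT_int : Integrable (fun ω => lam T * deriv (u T) (X T ω / B T ω)) μ :=
      (ha_int T hTmem).const_mul _
    -- Step A: lam t * (∫u(Ỹ)-∫u(X̃)) ≤ ∫ (lam t * a_t) * D t
    have stepA : ∀ t ∈ Finset.Icc 1 T,
        lam t * ((∫ ω, u t (Y t ω / B t ω) ∂μ) - ∫ ω, u t (X t ω / B t ω) ∂μ) ≤
          ∫ ω, (lam t * deriv (u t) (X t ω / B t ω)) *
            (Y t ω / B t ω - X t ω / B t ω) ∂μ := by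
      intro t ht
      obtain ⟨Ca, hCa0, hCa⟩ := ha_bdd t ht
      obtain ⟨Cd, hCd0, hCd⟩ := hD_bdd t ht
      have haD_int : Integrable
          (fun ω => deriv (u t) (X t ω / B t ω) * (Y t ω / B t ω - X t ω / B t ω)) μ := by
        apply integrable_of_bdd (C := Ca * Cd)
        · exact (ha_aesm t ht).mul
            (((hD_meas t ht).mono (hℱle t) le_rfl).aestronglyMeasurable)
        · filter_upwards [hCa, hCd] with ω h1 h2
          rw [abs_mul]
          exact mul_le_mul h1 h2 (abs_nonneg _) hCa0
      have hptw : ∀ᵐ ω ∂μ, u t (Y t ω / B t ω) ≤ u t (X t ω / B t ω) +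
          deriv (u t) (X t ω / B t ω) * (Y t ω / B t ω - X t ω / B t ω) := by
        filter_upwards with ω
        exact tangent_le (hu_concave t ht) (hu_diffble t ht) _ _
      have h1 : (∫ ω, u t (Y t ω / B t ω) ∂μ) ≤ (∫ ω, u t (X t ω / B t ω) ∂μ) +
          ∫ ω, deriv (u t) (X t ω / B t ω) * (Y t ω / B t ω - X t ω / B t ω) ∂μ := by
        have := integral_mono_ae (hint_u Y hY t ht) ((hint_u X hX t ht).add haD_int) hptw
        exact this.trans (le_of_eq (integral_add (hint_u X hX t ht) haD_int))
      have h2 : lam t * ∫ ω, deriv (u t) (X t ω / B t ω) *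
          (Y t ω / B t ω - X t ω / B t ω) ∂μ =
          ∫ ω, (lam t * deriv (u t) (X t ω / B t ω)) *
            (Y t ω / B t ω - X t ω / B t ω) ∂μ := by
        rw [← MeasureTheory.integral_const_mul]
        congr 1
        ext ω
        ring
      rw [← h2]
      have := hlam t ht
      nlinarith [this, h1]
    -- Step B: ∫ M t * D t = ∫ M T * D t (tower property)
    have stepB : ∀ t ∈ Finset.Icc 1 T,
        ∫ ω, (lam t * deriv (u t) (X t ω / B t ω)) * (Y t ω / B t ω - X t ω / B t ω) ∂μ =
        ∫ ω, (lam T * deriv (u T) (X T ω / B T ω)) * (Y t ω / B t ω - X t ω / B t ω) ∂μ := by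
      intro t ht
      have htT : t ≤ T := (Finset.mem_Icc.1 ht).2
      obtain ⟨Cd, hCd0, hCd⟩ := hD_bdd t ht
      obtain ⟨CM, hCM0, hCM⟩ := hMT_bdd
      have hDsm : StronglyMeasurable[ℱ t] fun ω => Y t ω / B t ω - X t ω / B t ω :=
        (hD_meas t ht).stronglyMeasurable
      have hprod_int : Integrable ((fun ω => Y t ω / B t ω - X t ω / B t ω) *
          fun ω => lam T * deriv (u T) (X T ω / B T ω)) μ := by
        apply integrable_of_bdd (C := Cd * CM)
        · exact (((hD_meas t ht).mono (hℱle t) le_rfl).aestronglyMeasurable).mul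
            hMT_int.aestronglyMeasurable
        · filter_upwards [hCd, hCM] with ω h1 h2
          rw [Pi.mul_apply, abs_mul]
          exact mul_le_mul h1 h2 (abs_nonneg _) hCd0
      have hpull := condExp_mul_of_stronglyMeasurable_left (μ := μ) (m := ℱ t) hDsm hprod_int hMT_int
      have hmart' := hmart t ht T hTmem htT
      have e1 : ∫ ω, ((fun ω => Y t ω / B t ω - X t ω / B t ω) *
          fun ω => lam T * deriv (u T) (X T ω / B T ω)) ω ∂μ =
          ∫ ω, (μ[(fun ω => Y t ω / B t ω - X t ω / B t ω) *
            fun ω => lam T * deriv (u T) (X T ω / B T ω)|ℱ t]) ω ∂μ :=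
        (integral_condExp (hℱle t)).symm
      have e2 : ∫ ω, (μ[(fun ω => Y t ω / B t ω - X t ω / B t ω) *
            fun ω => lam T * deriv (u T) (X T ω / B T ω)|ℱ t]) ω ∂μ =
          ∫ ω, (Y t ω / B t ω - X t ω / B t ω) *
            (μ[fun ω => lam T * deriv (u T) (X T ω / B T ω)|ℱ t]) ω ∂μ :=
        integral_congr_ae (by filter_upwards [hpull] with ω hω; exact hω)
      have e3 : ∫ ω, (Y t ω / B t ω - X t ω / B t ω) *
            (μ[fun ω => lam T * deriv (u T) (X T ω / B T ω)|ℱ t]) ω ∂μ =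
          ∫ ω, (Y t ω / B t ω - X t ω / B t ω) *
            (lam t * deriv (u t) (X t ω / B t ω)) ∂μ :=
        integral_congr_ae (by filter_upwards [hmart'] with ω hω; rw [hω])
      have e0 : ∫ ω, (lam T * deriv (u T) (X T ω / B T ω)) *
            (Y t ω / B t ω - X t ω / B t ω) ∂μ =
          ∫ ω, ((fun ω => Y t ω / B t ω - X t ω / B t ω) *
            fun ω => lam T * deriv (u T) (X T ω / B T ω)) ω ∂μ := by
        congr 1; ext ω; simp [mul_comm]
      have e4 : ∫ ω, (Y t ω / B t ω - X t ω / B t ω) *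
            (lam t * deriv (u t) (X t ω / B t ω)) ∂μ =
          ∫ ω, (lam t * deriv (u t) (X t ω / B t ω)) *
            (Y t ω / B t ω - X t ω / B t ω) ∂μ := by
        congr 1; ext ω; ring
      rw [e0, e1, e2, e3, e4]
    -- Step C: ∑ ∫ M T * D t = 0
    have hprod_int' : ∀ t ∈ Finset.Icc 1 T, Integrable
        (fun ω => (lam T * deriv (u T) (X T ω / B T ω)) *
          (Y t ω / B t ω - X t ω / B t ω)) μ := by
      intro t ht
      obtain ⟨Cd, hCd0, hCd⟩ := hD_bdd t ht
      obtain ⟨CM, hCM0, hCM⟩ := hMT_bdd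
      apply integrable_of_bdd (C := CM * Cd)
      · exact hMT_int.aestronglyMeasurable.mul
          (((hD_meas t ht).mono (hℱle t) le_rfl).aestronglyMeasurable)
      · filter_upwards [hCd, hCM] with ω h1 h2
        rw [abs_mul]
        exact mul_le_mul h2 h1 (abs_nonneg _) hCM0
    have stepC : ∑ t ∈ Finset.Icc 1 T, ∫ ω, (lam T * deriv (u T) (X T ω / B T ω)) *
        (Y t ω / B t ω - X t ω / B t ω) ∂μ = 0 := by
      rw [← integral_finset_sum _ hprod_int']
      have hzero : ∀ᵐ ω ∂μ, ∑ t ∈ Finset.Icc 1 T, (lam T * deriv (u T) (X T ω / B T ω)) *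
          (Y t ω / B t ω - X t ω / B t ω) = 0 := by
        filter_upwards [hX.2, hY.2] with ω h1 h2
        rw [← Finset.mul_sum, Finset.sum_sub_distrib, h1, h2]
        ring
      rw [integral_congr_ae hzero, integral_zero]
    -- combine
    have hsum_pos : 0 < ∑ t ∈ Finset.Icc 1 T,
        lam t * ((∫ ω, u t (Y t ω / B t ω) ∂μ) - ∫ ω, u t (X t ω / B t ω) ∂μ) := by
      apply Finset.sum_pos'
      · intro t ht
        have h1 := hge t ht
        have h2 := hlam t ht
        nlinarith
      · refine ⟨t₀, ht₀, ?_⟩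
        have h2 := hlam t₀ ht₀
        nlinarith [hgt]
    have hsum_le : ∑ t ∈ Finset.Icc 1 T,
        lam t * ((∫ ω, u t (Y t ω / B t ω) ∂μ) - ∫ ω, u t (X t ω / B t ω) ∂μ) ≤ 0 := by
      calc ∑ t ∈ Finset.Icc 1 T,
          lam t * ((∫ ω, u t (Y t ω / B t ω) ∂μ) - ∫ ω, u t (X t ω / B t ω) ∂μ)
          ≤ ∑ t ∈ Finset.Icc 1 T, ∫ ω, (lam t * deriv (u t) (X t ω / B t ω)) *
            (Y t ω / B t ω - X t ω / B t ω) ∂μ := Finset.sum_le_sum stepA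
        _ = ∑ t ∈ Finset.Icc 1 T, ∫ ω, (lam T * deriv (u T) (X T ω / B T ω)) *
            (Y t ω / B t ω - X t ω / B t ω) ∂μ := Finset.sum_congr rfl stepB
        _ = 0 := stepC
    linarith
end
end

section
/- Solution of the martingale problem M: for W ∈ L^∞ and α = (α_1,...,α_T) ∈ (0,∞)^T, the process (M_t(α,W))_{t∈𝕋} is a positive (F_t)-martingale satisfying ∏_{t∈𝕋} M_t(α,W)^{1/α_t} = exp(−W) a.s., and it is the unique such process: any positive (F_t)-martingale (M_t)_{t∈𝕋} with ∏_{t∈𝕋} M_t^{1/α_t} = exp(−W) a.s. satisfies M_t = M_t(α,W) for all t ∈ 𝕋. -/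
open MeasureTheory Finset Real

noncomputable section

namespace MartAux

variable {Ω : Type*} {m : MeasurableSpace Ω} [m0 : MeasurableSpace Ω] {μ : Measure Ω}

lemma rpow_bounds {a b x : ℝ} (r : ℝ) (ha : 0 < a) (hax : a ≤ x) (hxb : x ≤ b) :
    min (a ^ r) (b ^ r) ≤ x ^ r ∧ x ^ r ≤ max (a ^ r) (b ^ r) := by
  rcases le_or_gt 0 r with hr | hr
  · exact ⟨(min_le_left _ _).trans (Real.rpow_le_rpow ha.le hax hr),
      (Real.rpow_le_rpow (ha.trans_le hax).le hxb hr).trans (le_max_right _ _)⟩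
  · exact ⟨(min_le_right _ _).trans (Real.rpow_le_rpow_of_nonpos (ha.trans_le hax) hxb hr.le),
      (Real.rpow_le_rpow_of_nonpos ha hax hr.le).trans (le_max_left _ _)⟩

lemma aesm_rpow {f : Ω → ℝ} (hf : AEStronglyMeasurable[m] f μ)
    (hpos : ∀ᵐ ω ∂μ, 0 < f ω) (r : ℝ) :
    AEStronglyMeasurable[m] (fun ω => f ω ^ r) μ := by
  obtain ⟨g, hg, hfg⟩ := hf
  refine ⟨fun ω => Real.exp (Real.log (g ω) * r), ?_, ?_⟩
  · exact (Real.measurable_exp.comp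
      ((Real.measurable_log.comp hg.measurable).mul_const r)).stronglyMeasurable
  · filter_upwards [hfg, hpos] with ω h1 h2
    rw [← h1, Real.rpow_def_of_pos h2]

lemma aesm_fun_mul {f g : Ω → ℝ} (hf : AEStronglyMeasurable[m] f μ)
    (hg : AEStronglyMeasurable[m] g μ) :
    AEStronglyMeasurable[m] (fun ω => f ω * g ω) μ := by
  obtain ⟨f', hf', hff'⟩ := hf
  obtain ⟨g', hg', hgg'⟩ := hg
  exact ⟨fun ω => f' ω * g' ω, hf'.mul hg', by
    filter_upwards [hff', hgg'] with ω h1 h2; rw [h1, h2]⟩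

lemma aesm_prod (s : Finset ℕ) (f : ℕ → Ω → ℝ)
    (h : ∀ k ∈ s, AEStronglyMeasurable[m] (f k) μ) :
    AEStronglyMeasurable[m] (fun ω => ∏ k ∈ s, f k ω) μ := by
  classical
  revert h
  induction s using Finset.induction_on with
  | empty => exact fun _ => ⟨fun _ => 1, stronglyMeasurable_const, by simp⟩
  | @insert a s ha ih =>
    intro h
    have := aesm_fun_mul (h a (Finset.mem_insert_self a s))
      (ih fun k hk => h k (Finset.mem_insert_of_mem hk))
    refine this.congr ?_
    filter_upwards with ω
    rw [Finset.prod_insert ha]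

lemma aesm_ambient {f : Ω → ℝ} (hle : m ≤ m0) (h : AEStronglyMeasurable[m] f μ) :
    AEStronglyMeasurable f μ := by
  obtain ⟨g, hg, hfg⟩ := h
  exact ⟨g, hg.mono hle, hfg⟩

lemma prod_bounds (s : Finset ℕ) (f : ℕ → Ω → ℝ)
    (h : ∀ k ∈ s, ∃ a b : ℝ, 0 < a ∧ ∀ᵐ ω ∂μ, a ≤ f k ω ∧ f k ω ≤ b) :
    ∃ a b : ℝ, 0 < a ∧ ∀ᵐ ω ∂μ, a ≤ ∏ k ∈ s, f k ω ∧ ∏ k ∈ s, f k ω ≤ b := by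
  classical
  revert h
  induction s using Finset.induction_on with
  | empty => exact fun _ => ⟨1, 1, one_pos, by simp⟩
  | @insert a s ha ih =>
    intro h
    obtain ⟨a1, b1, ha1, h1⟩ := h a (Finset.mem_insert_self a s)
    obtain ⟨a2, b2, ha2, h2⟩ := ih fun k hk => h k (Finset.mem_insert_of_mem hk)
    refine ⟨a1 * a2, b1 * b2, mul_pos ha1 ha2, ?_⟩
    filter_upwards [h1, h2] with ω hω1 hω2
    rw [Finset.prod_insert ha]
    exact ⟨mul_le_mul hω1.1 hω2.1 ha2.le (ha1.le.trans hω1.1),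
      mul_le_mul hω1.2 hω2.2 (ha2.le.trans hω2.1) ((ha1.le.trans hω1.1).trans hω1.2)⟩

lemma integrable_of_aesm_bounds [IsProbabilityMeasure μ] {f : Ω → ℝ}
    (hf : AEStronglyMeasurable f μ) {a b : ℝ} (h : ∀ᵐ ω ∂μ, a ≤ f ω ∧ f ω ≤ b) :
    Integrable f μ := by
  refine Integrable.mono' (integrable_const (max |a| |b|)) hf ?_
  filter_upwards [h] with ω hω
  rw [Real.norm_eq_abs, abs_le]
  exact ⟨le_trans (neg_le_neg (le_max_left |a| |b|)) (le_trans (neg_abs_le a) hω.1),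
    hω.2.trans ((le_abs_self b).trans (le_max_right _ _))⟩

lemma prod_rpow_eq_exp (s : Finset ℕ) (f e : ℕ → ℝ) (h : ∀ k ∈ s, 0 < f k) :
    ∏ k ∈ s, f k ^ e k = Real.exp (∑ k ∈ s, e k * Real.log (f k)) := by
  rw [Real.exp_sum]
  exact Finset.prod_congr rfl fun k hk => by
    rw [Real.rpow_def_of_pos (h k hk), mul_comm]

lemma sum_invariant (T : ℕ) (α β : ℕ → ℝ) (l m : ℕ → ℝ)
    (hα : ∀ t ∈ Finset.Icc 1 T, α t ≠ 0) (hβ : ∀ t ∈ Finset.Icc 1 T, β t ≠ 0)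
    (hchain : ∀ t, 2 ≤ t → t ≤ T → 1 / β (t - 1) = 1 / α (t - 1) + 1 / β t)
    (hm : ∀ t ∈ Finset.Icc 1 T, m t = l t - ∑ k ∈ Finset.Icc 1 (t - 1), β (k + 1) / α k * l k) :
    ∀ u, 1 ≤ u → u ≤ T →
      ∑ t ∈ Finset.Icc 1 u, m t / α t
        = l u / α u + (1 / β u - 1 / α u) * ∑ k ∈ Finset.Icc 1 (u - 1), β (k + 1) / α k * l k := by
  intro u hu1
  induction u, hu1 using Nat.le_induction with
  | base =>
    intro hT1
    have h1 := hm 1 (Finset.mem_Icc.mpr ⟨le_rfl, hT1⟩)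
    have he : Finset.Icc 1 (1 - 1) = (∅ : Finset ℕ) := by
      rw [Finset.Icc_eq_empty]; omega
    rw [Finset.Icc_self, Finset.sum_singleton, he, Finset.sum_empty, mul_zero, add_zero]
    rw [he, Finset.sum_empty, sub_zero] at h1
    rw [h1]
  | succ u hu ih =>
    intro huT
    have hu1T : u ≤ T := by omega
    have hih := ih hu1T
    have hmu := hm (u + 1) (Finset.mem_Icc.mpr ⟨by omega, huT⟩)
    simp only [Nat.add_sub_cancel] at hmu
    have hch : 1 / β u = 1 / α u + 1 / β (u + 1) := by
      have := hchain (u + 1) (by omega) huT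
      simpa using this
    obtain ⟨v, rfl⟩ : ∃ v, u = v + 1 := ⟨u - 1, by omega⟩
    rw [Finset.sum_Icc_succ_top (by omega : 1 ≤ v + 1 + 1)]
    simp only [Nat.add_sub_cancel] at hih ⊢
    rw [hih, hmu, hch]
    rw [Finset.sum_Icc_succ_top (by omega : 1 ≤ v + 1)]
    have hβ2 : β (v + 1 + 1) ≠ 0 := hβ _ (Finset.mem_Icc.mpr ⟨by omega, huT⟩)
    have hα1 : α (v + 1) ≠ 0 := hα _ (Finset.mem_Icc.mpr ⟨by omega, by omega⟩)
    have hα2 : α (v + 1 + 1) ≠ 0 := hα _ (Finset.mem_Icc.mpr ⟨by omega, huT⟩)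
    field_simp
    ring

lemma sum_neg_mul (s : Finset ℕ) (b : ℝ) (c g : ℕ → ℝ) :
    ∑ t ∈ s, -(b / c t) * g t = -(b * ∑ t ∈ s, 1 / c t * g t) := by
  rw [Finset.mul_sum, ← Finset.sum_neg_distrib]
  exact Finset.sum_congr rfl fun t _ => by ring

lemma Jstep {αs βs b n l S : ℝ} (hα : αs ≠ 0) (hβ : βs ≠ 0) (hb : b ≠ 0)
    (hch : 1 / βs = 1 / αs + 1 / b)
    (hA : n = -(b * S) + -(b / αs) * n + b / βs * l) :
    n * (1 / βs) + S = l * (1 / βs) := by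
  have h1 : αs * b = βs * b + βs * αs := by
    field_simp at hch
    linarith
  field_simp at hA
  have hB' : n * (αs * b) = (l - βs * S) * (αs * b) := by linear_combination hA + n * h1
  have hB : n = l - βs * S := mul_right_cancel₀ (mul_ne_zero hα hb) hB'
  rw [hB]
  field_simp
  ring

end MartAux
/-- Solution of the martingale problem M (Theorem 3.1): the process `(M_t(α,W))` built
from the backward recursion `(L1)` and formula `(M)` is the unique positive
`(F_t)`-martingale with `∏_{t∈𝕋} M_t^{1/α_t} = exp(-W)` a.s. -/
theorem martingale_problem_solution
    {Ω : Type*} [mΩ : MeasurableSpace Ω] (μ : Measure Ω) [IsProbabilityMeasure μ]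
    (T : ℕ) (hT : 1 ≤ T)
    (ℱ : ℕ → MeasurableSpace Ω) (hℱmono : Monotone ℱ) (hℱle : ∀ t, ℱ t ≤ mΩ)
    (α β : ℕ → ℝ) (hα : ∀ t ∈ Finset.Icc 1 T, 0 < α t)
    (hβ : ∀ t ∈ Finset.Icc 1 T, 1 / β t = ∑ k ∈ Finset.Icc t T, 1 / α k)
    (W : Ω → ℝ) (hWmeas : Measurable[ℱ T] W) (hWbdd : ∃ C : ℝ, ∀ᵐ ω ∂μ, |W ω| ≤ C)
    (L M : ℕ → Ω → ℝ)
    (hLT : L T =ᵐ[μ] fun ω => Real.exp (-(α T) * W ω))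
    (hLstep : ∀ t ∈ Finset.Icc 2 T,
      L (t - 1) =ᵐ[μ] fun ω => ((μ[L t | ℱ (t - 1)]) ω) ^ (β (t - 1) / β t))
    (hM1 : M 1 =ᵐ[μ] L 1)
    (hMt : ∀ t ∈ Finset.Icc 2 T,
      M t =ᵐ[μ] fun ω =>
        L t ω * ∏ k ∈ Finset.Icc 1 (t - 1), (L k ω) ^ (-(β (k + 1) / α k))) :
    ((∀ t ∈ Finset.Icc 1 T, ∀ᵐ ω ∂μ, 0 < M t ω) ∧
     (∀ t ∈ Finset.Icc 1 T, AEStronglyMeasurable[ℱ t] (M t) μ) ∧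
     (∀ t ∈ Finset.Icc 1 T, Integrable (M t) μ) ∧
     (∀ s ∈ Finset.Icc 1 T, ∀ t ∈ Finset.Icc 1 T, s ≤ t → μ[M t | ℱ s] =ᵐ[μ] M s) ∧
     (∀ᵐ ω ∂μ, ∏ t ∈ Finset.Icc 1 T, (M t ω) ^ (1 / α t) = Real.exp (-W ω))) ∧
    (∀ N : ℕ → Ω → ℝ,
      (∀ t ∈ Finset.Icc 1 T, ∀ᵐ ω ∂μ, 0 < N t ω) →
      (∀ t ∈ Finset.Icc 1 T, AEStronglyMeasurable[ℱ t] (N t) μ) →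
      (∀ t ∈ Finset.Icc 1 T, Integrable (N t) μ) →
      (∀ s ∈ Finset.Icc 1 T, ∀ t ∈ Finset.Icc 1 T, s ≤ t → μ[N t | ℱ s] =ᵐ[μ] N s) →
      (∀ᵐ ω ∂μ, ∏ t ∈ Finset.Icc 1 T, (N t ω) ^ (1 / α t) = Real.exp (-W ω)) →
      ∀ t ∈ Finset.Icc 1 T, N t =ᵐ[μ] M t) := by
  classical
  obtain ⟨C0, hC0⟩ := hWbdd
  have hC : ∀ᵐ ω ∂μ, |W ω| ≤ |C0| := hC0.mono fun ω h => h.trans (le_abs_self C0)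
  set C := |C0| with hCdef
  have hCnn : 0 ≤ C := abs_nonneg C0
  -- basic facts about α, β
  have hαpos : ∀ t, 1 ≤ t → t ≤ T → 0 < α t := fun t h1 h2 => hα t (Finset.mem_Icc.mpr ⟨h1, h2⟩)
  have hβpos : ∀ t, 1 ≤ t → t ≤ T → 0 < β t := by
    intro t h1 h2
    have h := hβ t (Finset.mem_Icc.mpr ⟨h1, h2⟩)
    have hpos : 0 < ∑ k ∈ Finset.Icc t T, 1 / α k := by
      apply Finset.sum_pos
      · intro k hk
        have hk' := Finset.mem_Icc.mp hk
        have := hαpos k (le_trans h1 hk'.1) hk'.2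
        positivity
      · exact ⟨t, Finset.mem_Icc.mpr ⟨le_rfl, h2⟩⟩
    rw [← h] at hpos
    exact one_div_pos.mp hpos
  have hβT : β T = α T := by
    have h := hβ T (Finset.mem_Icc.mpr ⟨hT, le_rfl⟩)
    rw [Finset.Icc_self, Finset.sum_singleton] at h
    have h1 : (β T)⁻¹ = (α T)⁻¹ := by rw [← one_div, ← one_div, h]
    exact inv_injective h1
  have hchain : ∀ t, 2 ≤ t → t ≤ T → 1 / β (t - 1) = 1 / α (t - 1) + 1 / β t := by
    intro t h2 hTT
    have ha := hβ (t - 1) (Finset.mem_Icc.mpr ⟨by omega, by omega⟩)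
    have hb := hβ t (Finset.mem_Icc.mpr ⟨by omega, hTT⟩)
    have hsplit : Finset.Icc (t - 1) T = insert (t - 1) (Finset.Icc t T) := by
      ext x; simp only [Finset.mem_Icc, Finset.mem_insert]; omega
    rw [ha, hsplit, Finset.sum_insert (by simp only [Finset.mem_Icc]; omega), ← hb]
  -- the L package : measurability and two-sided positive bounds
  have hLaux : ∀ d t, t + d = T → 1 ≤ t →
      AEStronglyMeasurable[ℱ t] (L t) μ ∧
      ∃ a b : ℝ, 0 < a ∧ a ≤ b ∧ ∀ᵐ ω ∂μ, a ≤ L t ω ∧ L t ω ≤ b := by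
    intro d
    induction d with
    | zero =>
      intro t ht _
      have htT : t = T := by omega
      subst htT
      have hsm : StronglyMeasurable[ℱ t] fun ω => Real.exp (-α t * W ω) :=
        (Real.measurable_exp.comp (hWmeas.const_mul (-α t))).stronglyMeasurable
      have hat : 0 < α t := hαpos t hT le_rfl
      refine ⟨⟨_, hsm, hLT⟩, Real.exp (-(α t * C)), Real.exp (α t * C), Real.exp_pos _, ?_, ?_⟩
      · apply Real.exp_le_exp.mpr; nlinarith
      · filter_upwards [hC, hLT] with ω h1 h2
        rw [h2]
        have h3 := abs_le.mp h1
        constructor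
        · apply Real.exp_le_exp.mpr; nlinarith [h3.2]
        · apply Real.exp_le_exp.mpr; nlinarith [h3.1]
    | succ d ih =>
      intro t ht ht1
      obtain ⟨hm1, a, b, hapos, hab, hbd⟩ := ih (t + 1) (by omega) (by omega)
      have hint1 : Integrable (L (t + 1)) μ :=
        MartAux.integrable_of_aesm_bounds (MartAux.aesm_ambient (hℱle (t + 1)) hm1) hbd
      have hXsm : StronglyMeasurable[ℱ t] (μ[L (t + 1) | ℱ t]) := stronglyMeasurable_condExp
      have hXbd : ∀ᵐ ω ∂μ, a ≤ (μ[L (t + 1) | ℱ t]) ω ∧ (μ[L (t + 1) | ℱ t]) ω ≤ b := by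
        have hup : μ[L (t + 1) | ℱ t] ≤ᵐ[μ] fun _ => b := by
          have h := condExp_mono (μ := μ) (m := ℱ t) hint1 (integrable_const b)
            (hbd.mono fun ω h => h.2)
          rwa [condExp_const (hℱle t)] at h
        have hlo : (fun _ : Ω => a) ≤ᵐ[μ] μ[L (t + 1) | ℱ t] := by
          have h := condExp_mono (μ := μ) (m := ℱ t) (integrable_const a) hint1
            (hbd.mono fun ω h => h.1)
          rwa [condExp_const (hℱle t)] at h
        filter_upwards [hup, hlo] with ω h1 h2 using ⟨h2, h1⟩
      have hstep := hLstep (t + 1) (Finset.mem_Icc.mpr ⟨by omega, by omega⟩)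
      simp only [Nat.add_sub_cancel] at hstep
      constructor
      · refine ⟨fun ω => Real.exp (Real.log ((μ[L (t + 1) | ℱ t]) ω) * (β t / β (t + 1))), ?_, ?_⟩
        · exact (Real.measurable_exp.comp
            ((Real.measurable_log.comp hXsm.measurable).mul_const _)).stronglyMeasurable
        · filter_upwards [hstep, hXbd] with ω h1 h2
          rw [h1, Real.rpow_def_of_pos (lt_of_lt_of_le hapos h2.1)]
      · refine ⟨min (a ^ (β t / β (t + 1))) (b ^ (β t / β (t + 1))),
          max (a ^ (β t / β (t + 1))) (b ^ (β t / β (t + 1))),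
          lt_min (Real.rpow_pos_of_pos hapos _)
            (Real.rpow_pos_of_pos (lt_of_lt_of_le hapos hab) _),
          (min_le_left _ _).trans (le_max_left _ _), ?_⟩
        filter_upwards [hstep, hXbd] with ω h1 h2
        rw [h1]
        exact MartAux.rpow_bounds _ hapos h2.1 h2.2
  have hLm : ∀ t, 1 ≤ t → t ≤ T → AEStronglyMeasurable[ℱ t] (L t) μ :=
    fun t h1 h2 => (hLaux (T - t) t (by omega) h1).1
  have hLbd : ∀ t, 1 ≤ t → t ≤ T →
      ∃ a b : ℝ, 0 < a ∧ a ≤ b ∧ ∀ᵐ ω ∂μ, a ≤ L t ω ∧ L t ω ≤ b :=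
    fun t h1 h2 => (hLaux (T - t) t (by omega) h1).2
  have hLint : ∀ t, 1 ≤ t → t ≤ T → Integrable (L t) μ := by
    intro t h1 h2
    obtain ⟨a, b, ha, hab, hbd⟩ := hLbd t h1 h2
    exact MartAux.integrable_of_aesm_bounds (MartAux.aesm_ambient (hℱle t) (hLm t h1 h2)) hbd
  have hLpos : ∀ t, 1 ≤ t → t ≤ T → ∀ᵐ ω ∂μ, 0 < L t ω := by
    intro t h1 h2
    obtain ⟨a, b, ha, hab, hbd⟩ := hLbd t h1 h2
    filter_upwards [hbd] with ω h using lt_of_lt_of_le ha h.1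
  have hLposAll : ∀ᵐ ω ∂μ, ∀ t ∈ Finset.Icc 1 T, 0 < L t ω :=
    (Finset.eventually_all _).mpr fun t ht =>
      hLpos t (Finset.mem_Icc.mp ht).1 (Finset.mem_Icc.mp ht).2
  have hLcond : ∀ t, 2 ≤ t → t ≤ T →
      μ[L t | ℱ (t - 1)] =ᵐ[μ] fun ω => L (t - 1) ω ^ (β t / β (t - 1)) := by
    intro t h2 hTT
    obtain ⟨a, b, ha, hab, hbd⟩ := hLbd t (by omega) hTT
    have hint := hLint t (by omega) hTT
    have hXlo : ∀ᵐ ω ∂μ, a ≤ (μ[L t | ℱ (t - 1)]) ω := by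
      have h := condExp_mono (μ := μ) (m := ℱ (t - 1)) (integrable_const a) hint
        (hbd.mono fun ω h => h.1)
      rwa [condExp_const (hℱle (t - 1))] at h
    have hstep := hLstep t (Finset.mem_Icc.mpr ⟨h2, hTT⟩)
    have hβt := hβpos t (by omega) hTT
    have hβt1 := hβpos (t - 1) (by omega) (by omega)
    filter_upwards [hstep, hXlo] with ω h1 hx
    rw [h1, ← Real.rpow_mul (le_trans ha.le hx),
      show β (t - 1) / β t * (β t / β (t - 1)) = 1 by field_simp, Real.rpow_one]
  -- representation of M, valid also at t = 1
  have hMrep : ∀ t, 1 ≤ t → t ≤ T →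
      M t =ᵐ[μ] fun ω => L t ω * ∏ k ∈ Finset.Icc 1 (t - 1), L k ω ^ (-(β (k + 1) / α k)) := by
    intro t h1 h2
    rcases eq_or_lt_of_le h1 with h | h
    · have hemp : Finset.Icc 1 (t - 1) = (∅ : Finset ℕ) := by
        rw [Finset.Icc_eq_empty]; omega
      have hM1' : M t =ᵐ[μ] L t := by rw [← h]; exact hM1
      filter_upwards [hM1'] with ω hω
      rw [hω, hemp, Finset.prod_empty, mul_one]
    · exact hMt t (Finset.mem_Icc.mpr ⟨h, h2⟩)
  -- representation as a single product over Icc 1 t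
  have hMrep' : ∀ t, 1 ≤ t → t ≤ T →
      M t =ᵐ[μ] fun ω => ∏ k ∈ Finset.Icc 1 t,
        L k ω ^ (if k = t then (1 : ℝ) else -(β (k + 1) / α k)) := by
    intro t h1 h2
    refine (hMrep t h1 h2).trans ?_
    filter_upwards with ω
    obtain ⟨v, rfl⟩ : ∃ v, t = v + 1 := ⟨t - 1, by omega⟩
    rw [Finset.prod_Icc_succ_top (by omega : 1 ≤ v + 1), if_pos rfl, Real.rpow_one,
      Nat.add_sub_cancel]
    have hco : ∏ k ∈ Finset.Icc 1 v, L k ω ^ (if k = v + 1 then (1 : ℝ) else -(β (k + 1) / α k))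
        = ∏ k ∈ Finset.Icc 1 v, L k ω ^ (-(β (k + 1) / α k)) :=
      Finset.prod_congr rfl fun k hk => by
        rw [if_neg (by have := (Finset.mem_Icc.mp hk).2; omega)]
    rw [hco, mul_comm]
  have hMmeas : ∀ t, 1 ≤ t → t ≤ T → AEStronglyMeasurable[ℱ t] (M t) μ := by
    intro t h1 h2
    have hp : AEStronglyMeasurable[ℱ t] (fun ω => ∏ k ∈ Finset.Icc 1 t,
        L k ω ^ (if k = t then (1 : ℝ) else -(β (k + 1) / α k))) μ := by
      apply MartAux.aesm_prod
      intro k hk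
      have hk' := Finset.mem_Icc.mp hk
      exact MartAux.aesm_rpow ((hLm k hk'.1 (le_trans hk'.2 h2)).mono (hℱmono hk'.2))
        (hLpos k hk'.1 (le_trans hk'.2 h2)) _
    exact hp.congr (hMrep' t h1 h2).symm
  have hMbd : ∀ t, 1 ≤ t → t ≤ T →
      ∃ a b : ℝ, 0 < a ∧ ∀ᵐ ω ∂μ, a ≤ M t ω ∧ M t ω ≤ b := by
    intro t h1 h2
    have hfac : ∀ k ∈ Finset.Icc 1 t, ∃ a b : ℝ, 0 < a ∧ ∀ᵐ ω ∂μ,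
        a ≤ L k ω ^ (if k = t then (1 : ℝ) else -(β (k + 1) / α k)) ∧
        L k ω ^ (if k = t then (1 : ℝ) else -(β (k + 1) / α k)) ≤ b := by
      intro k hk
      have hk' := Finset.mem_Icc.mp hk
      obtain ⟨a', b', ha', hab', hbd'⟩ := hLbd k hk'.1 (le_trans hk'.2 h2)
      refine ⟨min (a' ^ (if k = t then (1 : ℝ) else -(β (k + 1) / α k)))
          (b' ^ (if k = t then (1 : ℝ) else -(β (k + 1) / α k))),
        max (a' ^ (if k = t then (1 : ℝ) else -(β (k + 1) / α k)))
          (b' ^ (if k = t then (1 : ℝ) else -(β (k + 1) / α k))),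
        lt_min (Real.rpow_pos_of_pos ha' _) (Real.rpow_pos_of_pos (lt_of_lt_of_le ha' hab') _), ?_⟩
      filter_upwards [hbd'] with ω h
      exact MartAux.rpow_bounds _ ha' h.1 h.2
    obtain ⟨a, b, ha, hbd⟩ := MartAux.prod_bounds (μ := μ) (Finset.Icc 1 t)
      (fun k ω => L k ω ^ (if k = t then (1 : ℝ) else -(β (k + 1) / α k))) hfac
    refine ⟨a, b, ha, ?_⟩
    filter_upwards [hbd, hMrep' t h1 h2] with ω hb hr
    rw [hr]; exact hb
  have hMpos : ∀ t, 1 ≤ t → t ≤ T → ∀ᵐ ω ∂μ, 0 < M t ω := by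
    intro t h1 h2
    obtain ⟨a, b, ha, hbd⟩ := hMbd t h1 h2
    filter_upwards [hbd] with ω h using lt_of_lt_of_le ha h.1
  have hMint : ∀ t, 1 ≤ t → t ≤ T → Integrable (M t) μ := by
    intro t h1 h2
    obtain ⟨a, b, ha, hbd⟩ := hMbd t h1 h2
    exact MartAux.integrable_of_aesm_bounds (MartAux.aesm_ambient (hℱle t) (hMmeas t h1 h2)) hbd
  -- one-step martingale property
  have hmart1 : ∀ t, 2 ≤ t → t ≤ T → μ[M t | ℱ (t - 1)] =ᵐ[μ] M (t - 1) := by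
    intro t h2 hTT
    obtain ⟨v, rfl⟩ : ∃ v, t = v + 1 := ⟨t - 1, by omega⟩
    simp only [Nat.add_sub_cancel]
    have hv1 : 1 ≤ v := by omega
    have hvT : v ≤ T := by omega
    have hGm : AEStronglyMeasurable[ℱ v]
        (fun ω => ∏ k ∈ Finset.Icc 1 v, L k ω ^ (-(β (k + 1) / α k))) μ := by
      apply MartAux.aesm_prod
      intro k hk
      have hk' := Finset.mem_Icc.mp hk
      exact MartAux.aesm_rpow ((hLm k hk'.1 (le_trans hk'.2 hvT)).mono (hℱmono hk'.2))
        (hLpos k hk'.1 (le_trans hk'.2 hvT)) _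
    have hrep : M (v + 1) =ᵐ[μ] fun ω =>
        (∏ k ∈ Finset.Icc 1 v, L k ω ^ (-(β (k + 1) / α k))) * L (v + 1) ω := by
      refine (hMrep (v + 1) (by omega) hTT).trans ?_
      simp only [Nat.add_sub_cancel]
      filter_upwards with ω using mul_comm _ _
    have hintGL : Integrable (fun ω =>
        (∏ k ∈ Finset.Icc 1 v, L k ω ^ (-(β (k + 1) / α k))) * L (v + 1) ω) μ :=
      (hMint (v + 1) (by omega) hTT).congr hrep
    have hpull := condExp_mul_of_aestronglyMeasurable_left (m := ℱ v) hGm hintGL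
      (hLint (v + 1) (by omega) hTT)
    have hLc := hLcond (v + 1) (by omega) hTT
    simp only [Nat.add_sub_cancel] at hLc
    have main : μ[M (v + 1) | ℱ v] =ᵐ[μ] fun ω =>
        (∏ k ∈ Finset.Icc 1 v, L k ω ^ (-(β (k + 1) / α k))) * L v ω ^ (β (v + 1) / β v) := by
      refine (condExp_congr_ae hrep).trans (hpull.trans ?_)
      filter_upwards [hLc] with ω h
      simp only [Pi.mul_apply]
      rw [h]
    refine main.trans ?_
    have hch := hchain (v + 1) (by omega) hTT
    simp only [Nat.add_sub_cancel] at hch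
    have hβv := hβpos v hv1 hvT
    have hβv1 := hβpos (v + 1) (by omega) hTT
    have hαv := hαpos v hv1 hvT
    filter_upwards [hMrep v hv1 hvT, hLposAll] with ω hrv hpos
    rw [hrv]
    have hsplit : ∏ k ∈ Finset.Icc 1 v, L k ω ^ (-(β (k + 1) / α k))
        = (∏ k ∈ Finset.Icc 1 (v - 1), L k ω ^ (-(β (k + 1) / α k)))
          * L v ω ^ (-(β (v + 1) / α v)) := by
      obtain ⟨w, rfl⟩ : ∃ w, v = w + 1 := ⟨v - 1, by omega⟩
      rw [Finset.prod_Icc_succ_top (by omega : 1 ≤ w + 1)]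
      simp only [Nat.add_sub_cancel]
    have hLvpos : 0 < L v ω := hpos v (Finset.mem_Icc.mpr ⟨hv1, hvT⟩)
    have hexp : -(β (v + 1) / α v) + β (v + 1) / β v = 1 := by
      have h3 : 1 / β v - 1 / α v = 1 / β (v + 1) := by linarith
      have h4 : -(β (v + 1) / α v) + β (v + 1) / β v = β (v + 1) * (1 / β v - 1 / α v) := by
        ring
      rw [h4, h3, mul_one_div, div_self hβv1.ne']
    rw [hsplit, mul_assoc, ← Real.rpow_add hLvpos, hexp, Real.rpow_one, mul_comm]
  -- full martingale property
  have hmart : ∀ s, 1 ≤ s → s ≤ T → ∀ t, s ≤ t → t ≤ T → μ[M t | ℱ s] =ᵐ[μ] M s := by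
    intro s hs1 hsT t hst
    induction t, hst using Nat.le_induction with
    | base =>
      exact fun _ =>
        condExp_of_aestronglyMeasurable' (hℱle s) (hMmeas s hs1 hsT) (hMint s hs1 hsT)
    | succ t h ih =>
      intro h1
      have h2 : t ≤ T := by omega
      have e1 : μ[μ[M (t + 1) | ℱ t] | ℱ s] =ᵐ[μ] μ[M (t + 1) | ℱ s] :=
        condExp_condExp_of_le (hℱmono h) (hℱle t)
      have e2 := hmart1 (t + 1) (by omega) h1
      simp only [Nat.add_sub_cancel] at e2
      exact (e1.symm.trans (condExp_congr_ae e2)).trans (ih h2)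
  have hαne : ∀ t ∈ Finset.Icc 1 T, α t ≠ 0 := fun t ht =>
    (hαpos t (Finset.mem_Icc.mp ht).1 (Finset.mem_Icc.mp ht).2).ne'
  have hβne : ∀ t ∈ Finset.Icc 1 T, β t ≠ 0 := fun t ht =>
    (hβpos t (Finset.mem_Icc.mp ht).1 (Finset.mem_Icc.mp ht).2).ne'
  have haT : α T ≠ 0 := (hαpos T hT le_rfl).ne'
  -- the product identity for M
  have hMrepAll : ∀ᵐ ω ∂μ, ∀ t ∈ Finset.Icc 1 T,
      M t ω = L t ω * ∏ k ∈ Finset.Icc 1 (t - 1), L k ω ^ (-(β (k + 1) / α k)) :=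
    (Finset.eventually_all _).mpr fun t ht =>
      hMrep t (Finset.mem_Icc.mp ht).1 (Finset.mem_Icc.mp ht).2
  have hprodM : ∀ᵐ ω ∂μ, ∏ t ∈ Finset.Icc 1 T, M t ω ^ (1 / α t) = Real.exp (-W ω) := by
    filter_upwards [hMrepAll, hLposAll, hLT] with ω hrep hpos hLTω
    have hMposω : ∀ t ∈ Finset.Icc 1 T, 0 < M t ω := by
      intro t ht
      rw [hrep t ht]
      exact mul_pos (hpos t ht) (Finset.prod_pos fun k hk => Real.rpow_pos_of_pos
        (hpos k (Finset.mem_Icc.mpr ⟨(Finset.mem_Icc.mp hk).1, by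
          have h1 := (Finset.mem_Icc.mp hk).2
          have h2 := (Finset.mem_Icc.mp ht).2
          omega⟩)) _)
    have hlog : ∀ t ∈ Finset.Icc 1 T, Real.log (M t ω)
        = Real.log (L t ω) - ∑ k ∈ Finset.Icc 1 (t - 1), β (k + 1) / α k * Real.log (L k ω) := by
      intro t ht
      have hposk : ∀ k ∈ Finset.Icc 1 (t - 1), 0 < L k ω := fun k hk =>
        hpos k (Finset.mem_Icc.mpr ⟨(Finset.mem_Icc.mp hk).1, by
          have h1 := (Finset.mem_Icc.mp hk).2
          have h2 := (Finset.mem_Icc.mp ht).2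
          omega⟩)
      have hprodpos : 0 < ∏ k ∈ Finset.Icc 1 (t - 1), L k ω ^ (-(β (k + 1) / α k)) :=
        Finset.prod_pos fun k hk => Real.rpow_pos_of_pos (hposk k hk) _
      rw [hrep t ht, Real.log_mul (hpos t ht).ne' hprodpos.ne',
        Real.log_prod (fun k hk => (Real.rpow_pos_of_pos (hposk k hk) _).ne')]
      have hsc : (∑ k ∈ Finset.Icc 1 (t - 1), Real.log (L k ω ^ (-(β (k + 1) / α k))))
          = ∑ k ∈ Finset.Icc 1 (t - 1), -(β (k + 1) / α k * Real.log (L k ω)) :=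
        Finset.sum_congr rfl fun k hk => by rw [Real.log_rpow (hposk k hk)]; ring
      rw [hsc, Finset.sum_neg_distrib, sub_eq_add_neg]
    have hsum : ∑ t ∈ Finset.Icc 1 T, Real.log (M t ω) / α t
        = Real.log (L T ω) / α T + (1 / β T - 1 / α T) *
          ∑ k ∈ Finset.Icc 1 (T - 1), β (k + 1) / α k * Real.log (L k ω) :=
      MartAux.sum_invariant T α β _ _ hαne hβne hchain hlog T hT le_rfl
    rw [hβT, sub_self, zero_mul, add_zero] at hsum
    have hPexp : ∏ t ∈ Finset.Icc 1 T, M t ω ^ (1 / α t)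
        = Real.exp (∑ t ∈ Finset.Icc 1 T, 1 / α t * Real.log (M t ω)) :=
      MartAux.prod_rpow_eq_exp _ _ _ hMposω
    have hconv : ∑ t ∈ Finset.Icc 1 T, 1 / α t * Real.log (M t ω)
        = ∑ t ∈ Finset.Icc 1 T, Real.log (M t ω) / α t :=
      Finset.sum_congr rfl fun t ht => by ring
    have hlT : Real.log (L T ω) = -(α T) * W ω := by rw [hLTω]; exact Real.log_exp _
    rw [hPexp, hconv, hsum, hlT, show -(α T) * W ω / α T = -W ω by field_simp]
  -- the backward invariant J for any candidate process
  have hJ : ∀ N : ℕ → Ω → ℝ,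
      (∀ t ∈ Finset.Icc 1 T, ∀ᵐ ω ∂μ, 0 < N t ω) →
      (∀ t ∈ Finset.Icc 1 T, AEStronglyMeasurable[ℱ t] (N t) μ) →
      (∀ t ∈ Finset.Icc 1 T, Integrable (N t) μ) →
      (∀ s ∈ Finset.Icc 1 T, ∀ t ∈ Finset.Icc 1 T, s ≤ t → μ[N t | ℱ s] =ᵐ[μ] N s) →
      (∀ᵐ ω ∂μ, ∏ t ∈ Finset.Icc 1 T, N t ω ^ (1 / α t) = Real.exp (-W ω)) →
      ∀ s, 1 ≤ s → s ≤ T → ∀ᵐ ω ∂μ,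
        N s ω ^ (1 / β s) * ∏ t ∈ Finset.Icc 1 (s - 1), N t ω ^ (1 / α t)
          = L s ω ^ (1 / β s) := by
    intro N hNpos hNmeas hNint hNmart hNprod
    have hNposAll : ∀ᵐ ω ∂μ, ∀ t ∈ Finset.Icc 1 T, 0 < N t ω :=
      (Finset.eventually_all _).mpr hNpos
    have key : ∀ d s, s + d = T → 1 ≤ s → ∀ᵐ ω ∂μ,
        N s ω ^ (1 / β s) * ∏ t ∈ Finset.Icc 1 (s - 1), N t ω ^ (1 / α t)
          = L s ω ^ (1 / β s) := by
      intro d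
      induction d with
      | zero =>
        intro s hsd hs1
        have hsT : s = T := by omega
        subst hsT
        filter_upwards [hNprod, hNposAll, hLT] with ω h1 h2 h3
        have hsplit : ∏ t ∈ Finset.Icc 1 s, N t ω ^ (1 / α t)
            = (∏ t ∈ Finset.Icc 1 (s - 1), N t ω ^ (1 / α t)) * N s ω ^ (1 / α s) := by
          obtain ⟨v, rfl⟩ : ∃ v, s = v + 1 := ⟨s - 1, by omega⟩
          rw [Finset.prod_Icc_succ_top (by omega : 1 ≤ v + 1)]
          simp only [Nat.add_sub_cancel]
        rw [hsplit, mul_comm] at h1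
        rw [hβT, h3, h1, Real.rpow_def_of_pos (Real.exp_pos _), Real.log_exp,
          show -(α s) * W ω * (1 / α s) = -W ω by field_simp]
      | succ d ih =>
        intro s hsd hs1
        have hsT1 : s + 1 ≤ T := by omega
        have hsT : s ≤ T := by omega
        have hJs1 := ih (s + 1) (by omega) (by omega)
        simp only [Nat.add_sub_cancel] at hJs1
        have hβs1 := hβpos (s + 1) (by omega) hsT1
        have hβs := hβpos s hs1 hsT
        have hαs := hαpos s hs1 hsT
        have hch : 1 / β s = 1 / α s + 1 / β (s + 1) := by
          have := hchain (s + 1) (by omega) hsT1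
          simpa using this
        have hGmeas : AEStronglyMeasurable[ℱ s]
            (fun ω => ∏ t ∈ Finset.Icc 1 s, N t ω ^ (-(β (s + 1) / α t))) μ := by
          apply MartAux.aesm_prod
          intro k hk
          have hk' := Finset.mem_Icc.mp hk
          exact MartAux.aesm_rpow
            ((hNmeas k (Finset.mem_Icc.mpr ⟨hk'.1, by omega⟩)).mono (hℱmono hk'.2))
            (hNpos k (Finset.mem_Icc.mpr ⟨hk'.1, by omega⟩)) _
        have hrel : N (s + 1) =ᵐ[μ] fun ω =>
            (∏ t ∈ Finset.Icc 1 s, N t ω ^ (-(β (s + 1) / α t))) * L (s + 1) ω := by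
          filter_upwards [hJs1, hNposAll, hLposAll] with ω h1 h2 h3
          have hLp : 0 < L (s + 1) ω := h3 (s + 1) (Finset.mem_Icc.mpr ⟨by omega, hsT1⟩)
          have hNp : ∀ t ∈ Finset.Icc 1 s, 0 < N t ω := fun t htm =>
            h2 t (Finset.mem_Icc.mpr ⟨(Finset.mem_Icc.mp htm).1, by
              have := (Finset.mem_Icc.mp htm).2; omega⟩)
          have hNs1p : 0 < N (s + 1) ω := h2 (s + 1) (Finset.mem_Icc.mpr ⟨by omega, hsT1⟩)
          have h1' : Real.log (N (s + 1) ω) * (1 / β (s + 1))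
              + ∑ t ∈ Finset.Icc 1 s, 1 / α t * Real.log (N t ω)
              = Real.log (L (s + 1) ω) * (1 / β (s + 1)) := by
            have hc := congrArg Real.log h1
            have hprodpos : 0 < ∏ t ∈ Finset.Icc 1 s, N t ω ^ (1 / α t) :=
              Finset.prod_pos fun t htm => Real.rpow_pos_of_pos (hNp t htm) _
            rw [Real.log_mul (Real.rpow_pos_of_pos hNs1p _).ne' hprodpos.ne',
              Real.log_rpow hNs1p, Real.log_rpow hLp,
              Real.log_prod (fun t htm => (Real.rpow_pos_of_pos (hNp t htm) _).ne')] at hc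
            have hsc : (∑ t ∈ Finset.Icc 1 s, Real.log (N t ω ^ (1 / α t)))
                = ∑ t ∈ Finset.Icc 1 s, 1 / α t * Real.log (N t ω) :=
              Finset.sum_congr rfl fun t htm => Real.log_rpow (hNp t htm) _
            rw [hsc] at hc
            linarith [hc]
          have hGexp : (∏ t ∈ Finset.Icc 1 s, N t ω ^ (-(β (s + 1) / α t)))
              = Real.exp (∑ t ∈ Finset.Icc 1 s, -(β (s + 1) / α t) * Real.log (N t ω)) :=
            MartAux.prod_rpow_eq_exp _ _ _ hNp
          rw [hGexp, ← Real.exp_log hLp, ← Real.exp_add, ← Real.exp_log hNs1p,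
            Real.exp_eq_exp, MartAux.sum_neg_mul]
          have hb : β (s + 1) ≠ 0 := hβs1.ne'
          have h2' := congrArg (fun x : ℝ => x * β (s + 1)) h1'
          simp only [add_mul, mul_assoc, one_div, inv_mul_cancel₀ hb, mul_one] at h2'
          simp only [one_div]
          linarith [h2']
        have hGpos : ∀ᵐ ω ∂μ, 0 < ∏ t ∈ Finset.Icc 1 s, N t ω ^ (-(β (s + 1) / α t)) := by
          filter_upwards [hNposAll] with ω h2
          exact Finset.prod_pos fun t htm => Real.rpow_pos_of_pos
            (h2 t (Finset.mem_Icc.mpr ⟨(Finset.mem_Icc.mp htm).1, by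
              have := (Finset.mem_Icc.mp htm).2; omega⟩)) _
        have hGint : Integrable
            (fun ω => ∏ t ∈ Finset.Icc 1 s, N t ω ^ (-(β (s + 1) / α t))) μ := by
          obtain ⟨a, b, ha, hab, hbdL⟩ := hLbd (s + 1) (by omega) hsT1
          have hNint1 := hNint (s + 1) (Finset.mem_Icc.mpr ⟨by omega, hsT1⟩)
          refine Integrable.mono' (hNint1.const_mul a⁻¹)
            (MartAux.aesm_ambient (hℱle s) hGmeas) ?_
          filter_upwards [hrel, hbdL, hGpos, hNposAll] with ω h1 h2 h3 h4
          have hLp : 0 < L (s + 1) ω := lt_of_lt_of_le ha h2.1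
          have hNs1p : 0 < N (s + 1) ω := h4 (s + 1) (Finset.mem_Icc.mpr ⟨by omega, hsT1⟩)
          rw [Real.norm_eq_abs, abs_of_pos h3]
          have hGval : (∏ t ∈ Finset.Icc 1 s, N t ω ^ (-(β (s + 1) / α t)))
              = N (s + 1) ω / L (s + 1) ω := by
            rw [h1]; field_simp
          rw [hGval, div_eq_inv_mul]
          exact mul_le_mul (inv_anti₀ ha h2.1) le_rfl hNs1p.le (inv_nonneg.mpr ha.le)
        have hmartstep : μ[N (s + 1) | ℱ s] =ᵐ[μ] N s :=
          hNmart s (Finset.mem_Icc.mpr ⟨hs1, hsT⟩) (s + 1)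
            (Finset.mem_Icc.mpr ⟨by omega, hsT1⟩) (by omega)
        have hintGL : Integrable (fun ω =>
            (∏ t ∈ Finset.Icc 1 s, N t ω ^ (-(β (s + 1) / α t))) * L (s + 1) ω) μ :=
          (hNint (s + 1) (Finset.mem_Icc.mpr ⟨by omega, hsT1⟩)).congr hrel
        have hpull := condExp_mul_of_aestronglyMeasurable_left (m := ℱ s) hGmeas hintGL
          (hLint (s + 1) (by omega) hsT1)
        have hLc := hLcond (s + 1) (by omega) hsT1
        simp only [Nat.add_sub_cancel] at hLc
        have hNs_eq : N s =ᵐ[μ] fun ω =>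
            (∏ t ∈ Finset.Icc 1 s, N t ω ^ (-(β (s + 1) / α t)))
              * L s ω ^ (β (s + 1) / β s) := by
          refine hmartstep.symm.trans ((condExp_congr_ae hrel).trans (hpull.trans ?_))
          filter_upwards [hLc] with ω h
          simp only [Pi.mul_apply]
          rw [h]
        filter_upwards [hNs_eq, hNposAll, hLposAll] with ω h1 h2 h3
        have hLsp : 0 < L s ω := h3 s (Finset.mem_Icc.mpr ⟨hs1, hsT⟩)
        have hNsp : 0 < N s ω := h2 s (Finset.mem_Icc.mpr ⟨hs1, hsT⟩)
        have hNp : ∀ t ∈ Finset.Icc 1 s, 0 < N t ω := fun t htm =>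
          h2 t (Finset.mem_Icc.mpr ⟨(Finset.mem_Icc.mp htm).1, by
            have := (Finset.mem_Icc.mp htm).2; omega⟩)
        have hNp' : ∀ t ∈ Finset.Icc 1 (s - 1), 0 < N t ω := fun t htm =>
          hNp t (Finset.mem_Icc.mpr ⟨(Finset.mem_Icc.mp htm).1, by
            have := (Finset.mem_Icc.mp htm).2; omega⟩)
        have hA : Real.log (N s ω)
            = ∑ t ∈ Finset.Icc 1 s, -(β (s + 1) / α t) * Real.log (N t ω)
              + β (s + 1) / β s * Real.log (L s ω) := by
          have hGexp : (∏ t ∈ Finset.Icc 1 s, N t ω ^ (-(β (s + 1) / α t)))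
              = Real.exp (∑ t ∈ Finset.Icc 1 s, -(β (s + 1) / α t) * Real.log (N t ω)) :=
            MartAux.prod_rpow_eq_exp _ _ _ hNp
          rw [hGexp] at h1
          rw [h1, Real.log_mul (Real.exp_pos _).ne' (Real.rpow_pos_of_pos hLsp _).ne',
            Real.log_exp, Real.log_rpow hLsp]
        have hsplitA : ∑ t ∈ Finset.Icc 1 s, -(β (s + 1) / α t) * Real.log (N t ω)
            = ∑ t ∈ Finset.Icc 1 (s - 1), -(β (s + 1) / α t) * Real.log (N t ω)
              + -(β (s + 1) / α s) * Real.log (N s ω) := by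
          obtain ⟨w, rfl⟩ : ∃ w, s = w + 1 := ⟨s - 1, by omega⟩
          rw [Finset.sum_Icc_succ_top (by omega : 1 ≤ w + 1)]
          simp only [Nat.add_sub_cancel]
        rw [hsplitA, MartAux.sum_neg_mul] at hA
        have hPexp : ∏ t ∈ Finset.Icc 1 (s - 1), N t ω ^ (1 / α t)
            = Real.exp (∑ t ∈ Finset.Icc 1 (s - 1), 1 / α t * Real.log (N t ω)) :=
          MartAux.prod_rpow_eq_exp _ _ _ hNp'
        rw [Real.rpow_def_of_pos hNsp, Real.rpow_def_of_pos hLsp, hPexp, ← Real.exp_add,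
          Real.exp_eq_exp]
        exact MartAux.Jstep hαs.ne' hβs.ne' hβs1.ne' hch (by linarith [hA])
    exact fun s hs1 hsT => key (T - s) s (by omega) hs1
  -- assemble the answer
  have hMtotmart : ∀ s ∈ Finset.Icc 1 T, ∀ t ∈ Finset.Icc 1 T, s ≤ t →
      μ[M t | ℱ s] =ᵐ[μ] M s :=
    fun s hs t htm hst => hmart s (Finset.mem_Icc.mp hs).1 (Finset.mem_Icc.mp hs).2 t hst
      (Finset.mem_Icc.mp htm).2
  refine ⟨⟨fun t htm => hMpos t (Finset.mem_Icc.mp htm).1 (Finset.mem_Icc.mp htm).2,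
    fun t htm => hMmeas t (Finset.mem_Icc.mp htm).1 (Finset.mem_Icc.mp htm).2,
    fun t htm => hMint t (Finset.mem_Icc.mp htm).1 (Finset.mem_Icc.mp htm).2,
    hMtotmart, hprodM⟩, ?_⟩
  intro N hNpos hNmeas hNint hNmart hNprod
  have hJN := hJ N hNpos hNmeas hNint hNmart hNprod
  have hJM := hJ M (fun t htm => hMpos t (Finset.mem_Icc.mp htm).1 (Finset.mem_Icc.mp htm).2)
    (fun t htm => hMmeas t (Finset.mem_Icc.mp htm).1 (Finset.mem_Icc.mp htm).2)
    (fun t htm => hMint t (Finset.mem_Icc.mp htm).1 (Finset.mem_Icc.mp htm).2)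
    hMtotmart hprodM
  have hNposAll : ∀ᵐ ω ∂μ, ∀ t ∈ Finset.Icc 1 T, 0 < N t ω :=
    (Finset.eventually_all _).mpr hNpos
  have hMposAll : ∀ᵐ ω ∂μ, ∀ t ∈ Finset.Icc 1 T, 0 < M t ω :=
    (Finset.eventually_all _).mpr fun t htm =>
      hMpos t (Finset.mem_Icc.mp htm).1 (Finset.mem_Icc.mp htm).2
  have main : ∀ s, 1 ≤ s → s ≤ T → N s =ᵐ[μ] M s := by
    intro s
    induction s using Nat.strong_induction_on with
    | _ s ih =>
      intro hs1 hsT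
      have hprev : ∀ᵐ ω ∂μ, ∀ t ∈ Finset.Icc 1 (s - 1), N t ω = M t ω :=
        (Finset.eventually_all _).mpr fun t htm => by
          have h' := Finset.mem_Icc.mp htm
          exact ih t (by omega) h'.1 (by omega)
      filter_upwards [hJN s hs1 hsT, hJM s hs1 hsT, hprev, hNposAll, hMposAll] with
        ω h1 h2 hp hn hm'
      have hPeq : ∏ t ∈ Finset.Icc 1 (s - 1), N t ω ^ (1 / α t)
          = ∏ t ∈ Finset.Icc 1 (s - 1), M t ω ^ (1 / α t) :=
        Finset.prod_congr rfl fun t htm => by rw [hp t htm]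
      rw [hPeq] at h1
      have hMsp : 0 < M s ω := hm' s (Finset.mem_Icc.mpr ⟨hs1, hsT⟩)
      have hNsp : 0 < N s ω := hn s (Finset.mem_Icc.mpr ⟨hs1, hsT⟩)
      have hPpos : 0 < ∏ t ∈ Finset.Icc 1 (s - 1), M t ω ^ (1 / α t) :=
        Finset.prod_pos fun t htm => Real.rpow_pos_of_pos
          (hm' t (Finset.mem_Icc.mpr ⟨(Finset.mem_Icc.mp htm).1, by
            have := (Finset.mem_Icc.mp htm).2; omega⟩)) _
      have h3 : N s ω ^ (1 / β s) = M s ω ^ (1 / β s) :=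
        mul_right_cancel₀ hPpos.ne' (h1.trans h2.symm)
      have hβs := hβpos s hs1 hsT
      have h4 := congrArg Real.log h3
      rw [Real.log_rpow hNsp, Real.log_rpow hMsp] at h4
      have h5 : Real.log (N s ω) = Real.log (M s ω) :=
        mul_left_cancel₀ (one_div_ne_zero hβs.ne') h4
      calc N s ω = Real.exp (Real.log (N s ω)) := (Real.exp_log hNsp).symm
        _ = Real.exp (Real.log (M s ω)) := by rw [h5]
        _ = M s ω := Real.exp_log hMsp
  exact fun t htm => main t (Finset.mem_Icc.mp htm).1 (Finset.mem_Icc.mp htm).2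
end
end

section
/- Optimal allocation for exponential utility: for the exponential utility functions u_t(x) = (1/α_t)(1 − exp(−α_t x)) with α ∈ (0,∞)^T, the optimal intertemporal risk allocation (X_t)_{t∈𝕋} ∈ A(W) of W ∈ L^∞ (i.e. the element of A(W) attaining U(W)) exists, is unique, and is determined by exp(−α_t X̃_t) = M_t(α,W) for all t ∈ 𝕋. -/
open MeasureTheory Finset Real

noncomputable section
namespace ExpAllocHelper


lemma exp_util_tangent {a x y : ℝ} (ha : 0 < a) :
    (1/a) * (1 - Real.exp (-a * y)) ≤ (1/a) * (1 - Real.exp (-a * x)) + Real.exp (-a * x) * (y - x) := by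
  have h1 : Real.exp (-a * y) = Real.exp (-a * x) * Real.exp (-(a * (y - x))) := by
    rw [← Real.exp_add]; ring_nf
  have h2 := Real.add_one_le_exp (-(a * (y - x)))
  have h3 := (Real.exp_pos (-a * x)).le
  have h4 : Real.exp (-a*x) - Real.exp (-a*y) ≤ a * (Real.exp (-a*x) * (y - x)) := by
    rw [h1]; nlinarith
  have h5 : (1/a) * (Real.exp (-a*x) - Real.exp (-a*y)) ≤ (1/a) * (a * (Real.exp (-a*x) * (y-x))) :=
    mul_le_mul_of_nonneg_left h4 (by positivity)
  have h6 : (1/a) * (a * (Real.exp (-a*x)*(y-x))) = Real.exp (-a*x) * (y-x) := by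
    field_simp
  rw [h6] at h5
  nlinarith [h5]

lemma exp_util_tangent_eq {a x y : ℝ} (ha : 0 < a)
    (h : (1/a) * (1 - Real.exp (-a * y)) = (1/a) * (1 - Real.exp (-a * x)) + Real.exp (-a * x) * (y - x)) :
    y = x := by
  by_contra hne
  have hz : -(a * (y - x)) ≠ 0 := by
    intro h0
    apply hne
    have : a * (y - x) = 0 := by linarith
    rcases mul_eq_zero.1 this with h' | h'
    · exact absurd h' ha.ne'
    · linarith
  have h2 := Real.add_one_lt_exp hz
  have h1 : Real.exp (-a * y) = Real.exp (-a * x) * Real.exp (-(a * (y - x))) := by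
    rw [← Real.exp_add]; ring_nf
  have h3 := (Real.exp_pos (-a * x))
  have h4 : Real.exp (-a*x) - Real.exp (-a*y) < a * (Real.exp (-a*x) * (y - x)) := by
    rw [h1]; nlinarith
  have h5 : (1/a) * (Real.exp (-a*x) - Real.exp (-a*y)) < (1/a) * (a * (Real.exp (-a*x) * (y-x))) := by
    apply mul_lt_mul_of_pos_left h4 (by positivity)
  have h6 : (1/a) * (a * (Real.exp (-a*x)*(y-x))) = Real.exp (-a*x) * (y-x) := by
    field_simp
  rw [h6] at h5
  nlinarith [h5]



variable {Ω : Type*} [mΩ : MeasurableSpace Ω] {μ : Measure Ω}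

/-- a.e. bounded between positive constants. -/
def BddPos (μ : Measure Ω) (f : Ω → ℝ) : Prop :=
  ∃ c C : ℝ, 0 < c ∧ ∀ᵐ ω ∂μ, f ω ∈ Set.Icc c C

lemma BddPos.ae_pos {f : Ω → ℝ} (hf : BddPos μ f) : ∀ᵐ ω ∂μ, 0 < f ω := by
  obtain ⟨c, C, hc, h⟩ := hf
  filter_upwards [h] with ω hω
  exact lt_of_lt_of_le hc hω.1

lemma BddPos.abs_le' {f : Ω → ℝ} (hf : BddPos μ f) : ∃ C, ∀ᵐ ω ∂μ, |f ω| ≤ C := by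
  obtain ⟨c, C, hc, h⟩ := hf
  refine ⟨C, ?_⟩
  filter_upwards [h] with ω hω
  rw [abs_of_pos (lt_of_lt_of_le hc hω.1)]; exact hω.2

lemma BddPos.log_abs_le {f : Ω → ℝ} (hf : BddPos μ f) :
    ∃ K, 0 ≤ K ∧ ∀ᵐ ω ∂μ, |Real.log (f ω)| ≤ K := by
  obtain ⟨c, C, hc, h⟩ := hf
  refine ⟨max |Real.log c| |Real.log C|, le_trans (abs_nonneg _) (le_max_left _ _), ?_⟩
  filter_upwards [h] with ω hω
  have hpos : 0 < f ω := lt_of_lt_of_le hc hω.1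
  rw [_root_.abs_le]
  constructor
  · have h1 : Real.log c ≤ Real.log (f ω) := Real.log_le_log hc hω.1
    have : -|Real.log c| ≤ Real.log c := neg_abs_le _
    have h2 : -max |Real.log c| |Real.log C| ≤ -|Real.log c| := by
      simp [le_max_left]
    linarith
  · have h1 : Real.log (f ω) ≤ Real.log C := Real.log_le_log hpos hω.2
    have : Real.log C ≤ |Real.log C| := le_abs_self _
    have h2 : |Real.log C| ≤ max |Real.log c| |Real.log C| := le_max_right _ _
    linarith

lemma BddPos.rpow {f : Ω → ℝ} (hf : BddPos μ f) (e : ℝ) :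
    BddPos μ (fun ω => f ω ^ e) := by
  obtain ⟨K, hK0, hK⟩ := hf.log_abs_le
  obtain ⟨c, C, hc, h⟩ := hf
  refine ⟨Real.exp (-(K * |e|)), Real.exp (K * |e|), Real.exp_pos _, ?_⟩
  filter_upwards [h, hK] with ω hω hKω
  have hpos : 0 < f ω := lt_of_lt_of_le hc hω.1
  rw [Set.mem_Icc, Real.rpow_def_of_pos hpos]
  have habs : |Real.log (f ω) * e| ≤ K * |e| := by
    rw [abs_mul]
    exact mul_le_mul_of_nonneg_right hKω (abs_nonneg e)
  rw [_root_.abs_le] at habs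
  exact ⟨Real.exp_le_exp.2 habs.1, Real.exp_le_exp.2 habs.2⟩

lemma BddPos.mul {f g : Ω → ℝ} (hf : BddPos μ f) (hg : BddPos μ g) :
    BddPos μ (fun ω => f ω * g ω) := by
  obtain ⟨c, C, hc, h⟩ := hf
  obtain ⟨c', C', hc', h'⟩ := hg
  refine ⟨c * c', C * C', mul_pos hc hc', ?_⟩
  filter_upwards [h, h'] with ω h1 h2
  constructor
  · exact mul_le_mul h1.1 h2.1 hc'.le (le_trans hc.le h1.1)
  · exact mul_le_mul h1.2 h2.2 (le_trans hc'.le h2.1) (le_trans (le_trans hc.le h1.1) h1.2)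

lemma BddPos.prod {s : Finset ℕ} {F : ℕ → Ω → ℝ} (h : ∀ k ∈ s, BddPos μ (F k)) :
    BddPos μ (fun ω => ∏ k ∈ s, F k ω) := by
  classical
  induction s using Finset.induction_on with
  | empty => exact ⟨1, 1, one_pos, Filter.Eventually.of_forall (by simp)⟩
  | @insert a s' hx ih =>
    simp only [Finset.prod_insert hx]
    exact (h a (Finset.mem_insert_self a s')).mul
      (ih fun k hk => h k (Finset.mem_insert_of_mem hk))

lemma integrable_of_ae_bdd [IsFiniteMeasure μ] {f : Ω → ℝ}
    (hm : AEStronglyMeasurable f μ) (h : ∃ C, ∀ᵐ ω ∂μ, |f ω| ≤ C) : Integrable f μ := by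
  obtain ⟨C, hC⟩ := h
  exact (integrable_const C).mono' hm (by simpa [Real.norm_eq_abs] using hC)

lemma BddPos.integrable [IsFiniteMeasure μ] {f : Ω → ℝ}
    (hf : BddPos μ f) (hm : AEStronglyMeasurable f μ) : Integrable f μ :=
  integrable_of_ae_bdd hm hf.abs_le'


lemma sum_Icc_swap (T : ℕ) (f : ℕ → ℕ → ℝ) :
    ∑ t ∈ Finset.Icc 1 T, ∑ k ∈ Finset.Icc 1 (t-1), f t k
      = ∑ k ∈ Finset.Icc 1 T, ∑ t ∈ Finset.Icc (k+1) T, f t k := by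
  rw [Finset.sum_sigma', Finset.sum_sigma']
  refine Finset.sum_nbij' (fun p => ⟨p.2, p.1⟩) (fun p => ⟨p.2, p.1⟩) ?_ ?_ ?_ ?_ ?_ <;>
    simp only [Finset.mem_sigma, Finset.mem_Icc] <;> intros <;> first | omega | rfl | trivial

lemma telescope_sum (T : ℕ) (hT : 1 ≤ T) (α β : ℕ → ℝ)
    (hα : ∀ t ∈ Finset.Icc 1 T, 0 < α t)
    (hβ : ∀ t ∈ Finset.Icc 1 T, 1 / β t = ∑ k ∈ Finset.Icc t T, 1 / α k)
    (ℓ : ℕ → ℝ) :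
    ∑ t ∈ Finset.Icc 1 T, (1 / α t) *
        (ℓ t + ∑ k ∈ Finset.Icc 1 (t-1), (-(β (k+1) / α k)) * ℓ k)
      = (1 / α T) * ℓ T := by
  have hβpos : ∀ t ∈ Finset.Icc 1 T, 0 < β t := by
    intro t ht
    rw [Finset.mem_Icc] at ht
    have h1 : 0 < 1 / β t := by
      rw [hβ t (Finset.mem_Icc.2 ht)]
      apply Finset.sum_pos
      · intro k hk
        rw [Finset.mem_Icc] at hk
        exact one_div_pos.2 (hα k (Finset.mem_Icc.2 ⟨le_trans ht.1 hk.1, hk.2⟩))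
      · exact ⟨t, Finset.mem_Icc.2 ⟨le_refl t, ht.2⟩⟩
    exact one_div_pos.1 h1
  simp_rw [mul_add, Finset.sum_add_distrib, Finset.mul_sum]
  rw [sum_Icc_swap T (fun t k => 1 / α t * ((-(β (k+1) / α k)) * ℓ k))]
  have hinner : ∀ k ∈ Finset.Icc 1 T,
      ∑ t ∈ Finset.Icc (k+1) T, 1 / α t * ((-(β (k+1) / α k)) * ℓ k)
        = if k = T then 0 else -((1 / α k) * ℓ k) := by
    intro k hk
    rw [Finset.mem_Icc] at hk
    by_cases hkT : k = T
    · subst hkT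
      rw [Finset.Icc_eq_empty (by omega)]
      simp
    · have hk1 : k + 1 ∈ Finset.Icc 1 T := Finset.mem_Icc.2 ⟨Nat.le_add_left 1 k, by omega⟩
      rw [if_neg hkT, ← Finset.sum_mul, ← hβ (k+1) hk1]
      have hβne : β (k+1) ≠ 0 := (hβpos (k+1) hk1).ne'
      have hαne : α k ≠ 0 := (hα k (Finset.mem_Icc.2 ⟨hk.1, hk.2⟩)).ne'
      field_simp
  rw [Finset.sum_congr rfl hinner]
  have : ∀ t ∈ Finset.Icc 1 T,
      1 / α t * ℓ t + (if t = T then 0 else -((1 / α t) * ℓ t))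
        = if t = T then (1 / α T) * ℓ T else 0 := by
    intro t _
    by_cases h : t = T <;> simp [h]
  rw [← Finset.sum_add_distrib, Finset.sum_congr rfl this, Finset.sum_ite_eq' (Finset.Icc 1 T)]
  simp [Finset.mem_Icc, hT]


noncomputable def Laux {Ω : Type*} [mΩ : MeasurableSpace Ω] (μ : Measure Ω)
    (ℱ : ℕ → MeasurableSpace Ω) (α β : ℕ → ℝ) (W : Ω → ℝ) (T : ℕ) : ℕ → Ω → ℝ
  | 0 => fun ω => Real.exp (-(α T) * W ω)
  | n+1 => fun ω => ((μ[Laux μ ℱ α β W T n | ℱ (T - (n+1))]) ω) ^ (β (T - (n+1)) / β (T - n))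

end ExpAllocHelper

/-- Optimal allocation for exponential utility (Theorem 3.2): for
`u_t(x) = (1/α_t)(1 - exp(-α_t x))`, the optimal allocation of `W` exists, is
unique, and is determined by `exp(-α_t X̃_t) = M_t(α,W)`. -/
theorem exponential_optimal_allocation
    {Ω : Type*} [mΩ : MeasurableSpace Ω] (μ : Measure Ω) [IsProbabilityMeasure μ]
    (T : ℕ) (hT : 1 ≤ T)
    (ℱ : ℕ → MeasurableSpace Ω) (hℱmono : Monotone ℱ) (hℱle : ∀ t, ℱ t ≤ mΩ)
    (r : ℕ → Ω → ℝ)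
    (hr_meas : ∀ t ∈ Finset.Icc 1 T, Measurable[ℱ (t - 1)] (r t))
    (hr_nonneg : ∀ t ∈ Finset.Icc 1 T, ∀ ω, 0 ≤ r t ω)
    (hr_bdd : ∀ t ∈ Finset.Icc 1 T, ∃ C : ℝ, ∀ ω, r t ω ≤ C)
    (B : ℕ → Ω → ℝ) (hB : ∀ t ω, B t ω = ∏ k ∈ Finset.Icc 1 t, (1 + r k ω))
    (α β : ℕ → ℝ) (hα : ∀ t ∈ Finset.Icc 1 T, 0 < α t)
    (hβ : ∀ t ∈ Finset.Icc 1 T, 1 / β t = ∑ k ∈ Finset.Icc t T, 1 / α k)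
    (W : Ω → ℝ) (hWmeas : Measurable[ℱ T] W) (hWbdd : ∃ C : ℝ, ∀ᵐ ω ∂μ, |W ω| ≤ C)
    (L M : ℕ → Ω → ℝ)
    (hLT : L T =ᵐ[μ] fun ω => Real.exp (-(α T) * W ω))
    (hLstep : ∀ t ∈ Finset.Icc 2 T,
      L (t - 1) =ᵐ[μ] fun ω => ((μ[L t | ℱ (t - 1)]) ω) ^ (β (t - 1) / β t))
    (hM1 : M 1 =ᵐ[μ] L 1)
    (hMt : ∀ t ∈ Finset.Icc 2 T,
      M t =ᵐ[μ] fun ω =>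
        L t ω * ∏ k ∈ Finset.Icc 1 (t - 1), (L k ω) ^ (-(β (k + 1) / α k)))
    (u : ℕ → ℝ → ℝ)
    (hu : ∀ t x, u t x = (1 / α t) * (1 - Real.exp (-(α t) * x))) :
    ∃ X : ℕ → Ω → ℝ,
      (IsAlloc μ T ℱ B W X ∧
        (∀ Y, IsAlloc μ T ℱ B W Y → allocVal μ T u B Y ≤ allocVal μ T u B X)) ∧
      (∀ t ∈ Finset.Icc 1 T, ∀ᵐ ω ∂μ,
        Real.exp (-(α t) * (X t ω / B t ω)) = M t ω) ∧
      (∀ X' : ℕ → Ω → ℝ,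
        IsAlloc μ T ℱ B W X' →
        (∀ Y, IsAlloc μ T ℱ B W Y → allocVal μ T u B Y ≤ allocVal μ T u B X') →
        ∀ t ∈ Finset.Icc 1 T, X' t =ᵐ[μ] X t) := by
  classical
  set LL : ℕ → Ω → ℝ := fun t => ExpAllocHelper.Laux μ ℱ α β W T (T - t) with hLLdef
  have hβpos : ∀ t ∈ Finset.Icc 1 T, 0 < β t := by
    intro t ht
    rw [Finset.mem_Icc] at ht
    have h1 : 0 < 1 / β t := by
      rw [hβ t (Finset.mem_Icc.2 ht)]
      apply Finset.sum_pos
      · intro k hk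
        rw [Finset.mem_Icc] at hk
        exact one_div_pos.2 (hα k (Finset.mem_Icc.2 ⟨le_trans ht.1 hk.1, hk.2⟩))
      · exact ⟨t, Finset.mem_Icc.2 ⟨le_refl t, ht.2⟩⟩
    exact one_div_pos.1 h1
  have hLL_T : LL T = fun ω => Real.exp (-(α T) * W ω) := by
    simp only [hLLdef, Nat.sub_self]
    rfl
  have hLL_step : ∀ t, 1 ≤ t → t < T →
      LL t = fun ω => ((μ[LL (t+1) | ℱ t]) ω) ^ (β t / β (t+1)) := by
    intro t h1 h2
    have e1 : T - t = (T - (t+1)) + 1 := by omega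
    have e2 : T - (T - (t+1) + 1) = t := by omega
    have e3 : T - (T - (t+1)) = t + 1 := by omega
    simp only [hLLdef]
    rw [e1]
    show (fun ω => ((μ[ExpAllocHelper.Laux μ ℱ α β W T (T - (t+1)) | ℱ (T - (T - (t+1) + 1))]) ω)
        ^ (β (T - (T - (t+1) + 1)) / β (T - (T - (t+1))))) = _
    rw [e2, e3]
  have keyP : ∀ n, ∀ t, 1 ≤ t → t + n = T →
      StronglyMeasurable[ℱ t] (LL t) ∧ ExpAllocHelper.BddPos μ (LL t) ∧ LL t =ᵐ[μ] L t := by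
    intro n
    induction n with
    | zero =>
      intro t h1 h2
      obtain rfl : T = t := by omega
      refine ⟨?_, ?_, ?_⟩
      · rw [hLL_T]
        exact (Real.measurable_exp.comp (hWmeas.const_mul (-(α T)))).stronglyMeasurable
      · obtain ⟨C, hC⟩ := hWbdd
        have hαT := hα T (Finset.mem_Icc.2 ⟨hT, le_refl T⟩)
        refine ⟨Real.exp (-(α T * C)), Real.exp (α T * C), Real.exp_pos _, ?_⟩
        rw [hLL_T]
        filter_upwards [hC] with ω hω
        rw [_root_.abs_le] at hω
        constructor
        · exact Real.exp_le_exp.2 (by nlinarith)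
        · exact Real.exp_le_exp.2 (by nlinarith)
      · rw [hLL_T]; exact hLT.symm
    | succ n ih =>
      intro t h1 h2
      obtain ⟨ihm, ihb, ihe⟩ := ih (t+1) (by omega) (by omega)
      have htT : t < T := by omega
      have hstep := hLL_step t h1 htT
      have hint : Integrable (LL (t+1)) μ :=
        ihb.integrable ((ihm.mono (hℱle (t+1))).aestronglyMeasurable)
      obtain ⟨c, C, hc, hcC⟩ := ihb
      have hcond : ∀ᵐ ω ∂μ, (μ[LL (t+1)|ℱ t]) ω ∈ Set.Icc c C := by
        have hlow : (fun _ : Ω => c) ≤ᵐ[μ] LL (t+1) := hcC.mono fun ω h => h.1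
        have hhigh : LL (t+1) ≤ᵐ[μ] (fun _ : Ω => C) := hcC.mono fun ω h => h.2
        have h1' := condExp_mono (m := ℱ t) (integrable_const c) hint hlow
        have h2' := condExp_mono (m := ℱ t) hint (integrable_const C) hhigh
        rw [condExp_const (hℱle t)] at h1' h2'
        filter_upwards [h1', h2'] with ω hω1 hω2
        exact ⟨hω1, hω2⟩
      refine ⟨?_, ?_, ?_⟩
      · rw [hstep]
        exact (stronglyMeasurable_condExp.measurable.pow_const _).stronglyMeasurable
      · rw [hstep]
        exact (ExpAllocHelper.BddPos.rpow ⟨c, C, hc, hcond⟩ _ : ExpAllocHelper.BddPos μ _)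
      · rw [hstep]
        have h1' := condExp_congr_ae (m := ℱ t) ihe
        have h2' := hLstep (t+1) (Finset.mem_Icc.2 ⟨by omega, by omega⟩)
        simp only [Nat.add_sub_cancel] at h2'
        refine Filter.EventuallyEq.trans ?_ h2'.symm
        filter_upwards [h1'] with ω hω
        rw [hω]
  have keyLL : ∀ t ∈ Finset.Icc 1 T,
      StronglyMeasurable[ℱ t] (LL t) ∧ ExpAllocHelper.BddPos μ (LL t) ∧ LL t =ᵐ[μ] L t := by
    intro t ht
    rw [Finset.mem_Icc] at ht
    exact keyP (T - t) t ht.1 (by omega)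
  -- MM: exact version of M
  set MM : ℕ → Ω → ℝ := fun t ω =>
    LL t ω * ∏ k ∈ Finset.Icc 1 (t-1), (LL k ω) ^ (-(β (k+1) / α k)) with hMMdef
  have keyMM : ∀ t ∈ Finset.Icc 1 T,
      StronglyMeasurable[ℱ t] (MM t) ∧ ExpAllocHelper.BddPos μ (MM t) ∧ MM t =ᵐ[μ] M t := by
    intro t ht
    obtain ⟨h1t, h2t⟩ := Finset.mem_Icc.1 ht
    have hmemk : ∀ k ∈ Finset.Icc 1 (t-1), k ∈ Finset.Icc 1 T := by
      intro k hk; rw [Finset.mem_Icc] at hk ⊢; omega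
    refine ⟨?_, ?_, ?_⟩
    · apply Measurable.stronglyMeasurable
      apply Measurable.mul
      · exact (keyLL t ht).1.measurable
      · apply Finset.measurable_prod
        intro k hk
        have hkt : ℱ k ≤ ℱ t := hℱmono (by rw [Finset.mem_Icc] at hk; omega)
        exact (((keyLL k (hmemk k hk)).1.mono hkt).measurable.pow_const _)
    · exact ((keyLL t ht).2.1).mul
        (ExpAllocHelper.BddPos.prod fun k hk => ((keyLL k (hmemk k hk)).2.1).rpow _)
    · rcases Nat.lt_or_ge t 2 with h2 | h2
      · obtain rfl : t = 1 := by omega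
        have : Finset.Icc 1 (1-1) = (∅ : Finset ℕ) := by decide
        filter_upwards [(keyLL 1 ht).2.2, hM1] with ω hω hω'
        simp only [hMMdef, this, Finset.prod_empty, mul_one, hω, hω']
      · have hMt' := hMt t (Finset.mem_Icc.2 ⟨h2, h2t⟩)
        have hall : ∀ᵐ ω ∂μ, ∀ k ∈ Finset.Icc 1 T, LL k ω = L k ω := by
          rw [Filter.eventually_all_finset]
          intro k hk
          exact (keyLL k hk).2.2
        filter_upwards [hMt', hall] with ω hω hω'
        simp only [hMMdef]
        rw [hω, hω' t ht]
        congr 1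
        apply Finset.prod_congr rfl
        intro k hk
        rw [hω' k (hmemk k hk)]
  have hint_LL : ∀ t ∈ Finset.Icc 1 T, Integrable (LL t) μ := fun t ht =>
    (keyLL t ht).2.1.integrable (((keyLL t ht).1.mono (hℱle t)).aestronglyMeasurable)
  have hint_MM : ∀ t ∈ Finset.Icc 1 T, Integrable (MM t) μ := fun t ht =>
    (keyMM t ht).2.1.integrable (((keyMM t ht).1.mono (hℱle t)).aestronglyMeasurable)
  -- one-step martingale property
  have hmart1 : ∀ s, 1 ≤ s → s + 1 ≤ T → μ[MM (s+1)|ℱ s] =ᵐ[μ] MM s := by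
    intro s h1s hsT
    have hsmem : s ∈ Finset.Icc 1 T := Finset.mem_Icc.2 ⟨h1s, by omega⟩
    have hs1mem : s + 1 ∈ Finset.Icc 1 T := Finset.mem_Icc.2 ⟨by omega, hsT⟩
    set P : Ω → ℝ := fun ω => ∏ k ∈ Finset.Icc 1 s, (LL k ω) ^ (-(β (k+1) / α k)) with hPdef
    have hPSM : StronglyMeasurable[ℱ s] P := by
      apply Measurable.stronglyMeasurable
      apply Finset.measurable_prod
      intro k hk
      have hks : ℱ k ≤ ℱ s := hℱmono (by rw [Finset.mem_Icc] at hk; omega)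
      exact ((keyLL k (by rw [Finset.mem_Icc] at hk ⊢; omega)).1.mono hks).measurable.pow_const _
    have hPbdd : ExpAllocHelper.BddPos μ P :=
      ExpAllocHelper.BddPos.prod fun k hk =>
        ((keyLL k (by rw [Finset.mem_Icc] at hk ⊢; omega)).2.1).rpow _
    obtain ⟨CP, hCP⟩ := hPbdd.abs_le'
    have hMMs1 : MM (s+1) = fun ω => P ω * LL (s+1) ω := by
      funext ω
      simp only [hMMdef, hPdef, Nat.add_sub_cancel]
      ring
    have hpull : μ[MM (s+1)|ℱ s] =ᵐ[μ] fun ω => P ω * (μ[LL (s+1)|ℱ s]) ω := by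
      rw [hMMs1]
      have := condExp_stronglyMeasurable_mul_of_bound (hℱle s) hPSM
        (hint_LL (s+1) hs1mem) CP (by simpa [Real.norm_eq_abs] using hCP)
      exact this
    -- conditional expectation of LL (s+1) equals LL s ^ (β (s+1) / β s)
    obtain ⟨c, C, hc, hcC⟩ := (keyLL (s+1) hs1mem).2.1
    have hcond_bdd : ∀ᵐ ω ∂μ, c ≤ (μ[LL (s+1)|ℱ s]) ω := by
      have hlow : (fun _ : Ω => c) ≤ᵐ[μ] LL (s+1) := hcC.mono fun ω h => h.1
      have h1' := condExp_mono (m := ℱ s) (integrable_const c) (hint_LL (s+1) hs1mem) hlow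
      rw [condExp_const (hℱle s)] at h1'
      exact h1'
    have hβs := hβpos s hsmem
    have hβs1 := hβpos (s+1) hs1mem
    have hstep := hLL_step s h1s (by omega)
    have hcondeq : (fun ω => (μ[LL (s+1)|ℱ s]) ω) =ᵐ[μ] fun ω => LL s ω ^ (β (s+1) / β s) := by
      filter_upwards [hcond_bdd] with ω hω
      have hpos : (0:ℝ) < (μ[LL (s+1)|ℱ s]) ω := lt_of_lt_of_le hc hω
      have h0 : LL s ω = ((μ[LL (s+1)|ℱ s]) ω) ^ (β s / β (s+1)) := by rw [hstep]
      have he : β s / β (s+1) * (β (s+1) / β s) = 1 := by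
        field_simp
      rw [h0, ← Real.rpow_mul hpos.le, he, Real.rpow_one]
    -- split off the top factor of P
    have hsplit : ∀ ω, P ω = (∏ k ∈ Finset.Icc 1 (s-1), (LL k ω) ^ (-(β (k+1) / α k)))
        * (LL s ω) ^ (-(β (s+1) / α s)) := by
      intro ω
      simp only [hPdef]
      have : s = (s - 1) + 1 := by omega
      rw [this, Finset.prod_Icc_succ_top (by omega)]
      congr 2 <;> omega
    -- exponent identity : β (s+1) / β s - β (s+1) / α s = 1
    have hexp : β (s+1) / β s - β (s+1) / α s = 1 := by
      have hsum : 1 / β s = 1 / α s + 1 / β (s+1) := by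
        rw [hβ s hsmem, hβ (s+1) hs1mem,
          Finset.Icc_eq_cons_Ioc (by omega : s ≤ T), Finset.sum_cons, ← Finset.Icc_add_one_left_eq_Ioc]
      have hαs := hα s hsmem
      field_simp at hsum ⊢
      nlinarith [hsum]
    refine hpull.trans ?_
    have hLLpos : ∀ᵐ ω ∂μ, 0 < LL s ω := (keyLL s hsmem).2.1.ae_pos
    filter_upwards [hcondeq, hLLpos] with ω hω hpos
    simp only [hMMdef]
    rw [hω, hsplit ω, mul_assoc, ← Real.rpow_add hpos,
      (show -(β (s+1) / α s) + β (s+1) / β s = 1 by linarith [hexp]), Real.rpow_one, mul_comm]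
  -- multi-step martingale property
  have hmart : ∀ s, 1 ≤ s → ∀ n, s + n ≤ T → μ[MM (s+n)|ℱ s] =ᵐ[μ] MM s := by
    intro s h1s n
    induction n with
    | zero =>
      intro h
      rw [Nat.add_zero, condExp_of_stronglyMeasurable (hℱle s)
        (keyMM s (Finset.mem_Icc.2 ⟨h1s, by omega⟩)).1
        (hint_MM s (Finset.mem_Icc.2 ⟨h1s, by omega⟩))]
    | succ n ih =>
      intro h
      have h1 : μ[MM (s+n+1)|ℱ s] =ᵐ[μ] μ[μ[MM (s+n+1)|ℱ (s+n)]|ℱ s] :=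
        (condExp_condExp_of_le (hℱmono (by omega : s ≤ s + n)) (hℱle (s+n))).symm
      refine h1.trans ?_
      have h2 := hmart1 (s+n) (by omega) (by omega)
      refine (condExp_congr_ae (m := ℱ s) h2).trans (ih (by omega))
  have hmartT : ∀ t ∈ Finset.Icc 1 T, μ[MM T|ℱ t] =ᵐ[μ] MM t := by
    intro t ht
    obtain ⟨h1, h2⟩ := Finset.mem_Icc.1 ht
    have := hmart t h1 (T - t) (by omega)
    rwa [(show t + (T - t) = T by omega)] at this
  -- facts about B
  have hB1 : ∀ t, t ≤ T → ∀ ω, 1 ≤ B t ω := by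
    intro t ht ω
    rw [hB]
    calc (1:ℝ) = ∏ k ∈ Finset.Icc 1 t, 1 := by simp
      _ ≤ ∏ k ∈ Finset.Icc 1 t, (1 + r k ω) := by
          apply Finset.prod_le_prod (fun k hk => by norm_num)
          intro k hk
          have := hr_nonneg k (by rw [Finset.mem_Icc] at hk ⊢; omega) ω
          linarith
  have hBmeas : ∀ t, t ≤ T → Measurable[ℱ t] (B t) := by
    intro t ht
    have : B t = fun ω => ∏ k ∈ Finset.Icc 1 t, (1 + r k ω) := by funext ω; exact hB t ω
    rw [this]
    apply Finset.measurable_prod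
    intro k hk
    rw [Finset.mem_Icc] at hk
    exact measurable_const.add
      ((hr_meas k (by rw [Finset.mem_Icc]; omega)).mono (hℱmono (by omega)) le_rfl)
  -- key integral identity
  have hEsum : ∀ (Y : ℕ → Ω → ℝ), IsAlloc μ T ℱ B W Y →
      ∑ t ∈ Finset.Icc 1 T, ∫ ω, MM t ω * (Y t ω / B t ω) ∂μ
        = ∫ ω, W ω * MM T ω ∂μ := by
    intro Y hY
    obtain ⟨hYm, hYsum⟩ := hY
    have hTmem : T ∈ Finset.Icc 1 T := Finset.mem_Icc.2 ⟨hT, le_refl T⟩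
    -- properties of Z t = Y t / B t
    have hZ : ∀ t ∈ Finset.Icc 1 T, Measurable[ℱ t] (fun ω => Y t ω / B t ω) ∧
        ∃ C, 0 ≤ C ∧ ∀ᵐ ω ∂μ, |Y t ω / B t ω| ≤ C := by
      intro t ht
      obtain ⟨h1, h2⟩ := Finset.mem_Icc.1 ht
      obtain ⟨hYmeas, CY, hCY⟩ := hYm t ht
      refine ⟨hYmeas.div (hBmeas t h2), max CY 0, le_max_right _ _, ?_⟩
      filter_upwards [hCY] with ω hω
      rw [abs_div, abs_of_pos (lt_of_lt_of_le one_pos (hB1 t h2 ω))]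
      calc |Y t ω| / B t ω ≤ |Y t ω| := div_le_self (abs_nonneg _) (hB1 t h2 ω)
          _ ≤ max CY 0 := le_trans hω (le_max_left _ _)
    have hstep1 : ∀ t ∈ Finset.Icc 1 T,
        ∫ ω, MM t ω * (Y t ω / B t ω) ∂μ = ∫ ω, (Y t ω / B t ω) * MM T ω ∂μ := by
      intro t ht
      obtain ⟨hZm, CZ, hCZ0, hCZ⟩ := hZ t ht
      have hpull := condExp_stronglyMeasurable_mul_of_bound (hℱle t)
        (hZm.stronglyMeasurable) (hint_MM T hTmem) CZ (by simpa only [Real.norm_eq_abs] using hCZ)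
      calc ∫ ω, MM t ω * (Y t ω / B t ω) ∂μ
          = ∫ ω, (Y t ω / B t ω) * (μ[MM T|ℱ t]) ω ∂μ := by
            apply integral_congr_ae
            filter_upwards [hmartT t ht] with ω hω
            rw [hω]; ring
        _ = ∫ ω, (μ[(fun ω => Y t ω / B t ω) * MM T|ℱ t]) ω ∂μ := by
            apply integral_congr_ae
            filter_upwards [hpull] with ω hω
            simpa using hω.symm
        _ = ∫ ω, ((fun ω => Y t ω / B t ω) * MM T) ω ∂μ := integral_condExp (hℱle t)
        _ = ∫ ω, (Y t ω / B t ω) * MM T ω ∂μ := by simp only [Pi.mul_apply]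
    have hintZT : ∀ t ∈ Finset.Icc 1 T,
        Integrable (fun ω => (Y t ω / B t ω) * MM T ω) μ := by
      intro t ht
      obtain ⟨hZm, CZ, hCZ0, hCZ⟩ := hZ t ht
      exact (hint_MM T hTmem).bdd_mul
        ((hZm.mono (hℱle t) le_rfl).aestronglyMeasurable)
        (by simpa only [Real.norm_eq_abs] using hCZ)
    rw [Finset.sum_congr rfl hstep1, ← integral_finset_sum _ hintZT]
    apply integral_congr_ae
    filter_upwards [hYsum] with ω hω
    rw [← Finset.sum_mul, hω]
  -- the candidate optimal allocation
  set X : ℕ → Ω → ℝ := fun t ω => -(B t ω / α t) * Real.log (MM t ω) with hXdef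
  have hXtilde : ∀ t ∈ Finset.Icc 1 T, ∀ ω, X t ω / B t ω = -(1 / α t) * Real.log (MM t ω) := by
    intro t ht ω
    obtain ⟨h1, h2⟩ := Finset.mem_Icc.1 ht
    have hBpos : (0:ℝ) < B t ω := lt_of_lt_of_le one_pos (hB1 t h2 ω)
    have hαne := (hα t ht).ne'
    simp only [hXdef]
    field_simp
  have hMMexp : ∀ t ∈ Finset.Icc 1 T, ∀ᵐ ω ∂μ,
      Real.exp (-(α t) * (X t ω / B t ω)) = MM t ω := by
    intro t ht
    filter_upwards [(keyMM t ht).2.1.ae_pos] with ω hω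
    rw [hXtilde t ht ω]
    have he : -(α t) * (-(1 / α t) * Real.log (MM t ω)) = Real.log (MM t ω) := by
      have := (hα t ht).ne'
      field_simp
    rw [he, Real.exp_log hω]
  have hXmeas : ∀ t ∈ Finset.Icc 1 T, Measurable[ℱ t] (X t) := by
    intro t ht
    obtain ⟨h1, h2⟩ := Finset.mem_Icc.1 ht
    exact ((hBmeas t h2).div_const (α t)).neg.mul
      (Real.measurable_log.comp (keyMM t ht).1.measurable)
  have hXbdd : ∀ t ∈ Finset.Icc 1 T, ∃ C, ∀ᵐ ω ∂μ, |X t ω| ≤ C := by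
    intro t ht
    obtain ⟨h1, h2⟩ := Finset.mem_Icc.1 ht
    obtain ⟨K, hK0, hK⟩ := (keyMM t ht).2.1.log_abs_le
    choose! Cr hCr using hr_bdd
    set CB : ℝ := ∏ k ∈ Finset.Icc 1 t, (1 + max (Cr k) 0) with hCBdef
    have hCB1 : (1:ℝ) ≤ CB := by
      rw [hCBdef]
      calc (1:ℝ) = ∏ k ∈ Finset.Icc 1 t, 1 := by simp
        _ ≤ ∏ k ∈ Finset.Icc 1 t, (1 + max (Cr k) 0) := by
            apply Finset.prod_le_prod (fun k hk => by norm_num)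
            intro k hk
            have := le_max_right (Cr k) 0
            linarith
    have hCB : ∀ ω, B t ω ≤ CB := by
      intro ω
      rw [hB, hCBdef]
      apply Finset.prod_le_prod
      · intro k hk
        have := hr_nonneg k (by rw [Finset.mem_Icc] at hk ⊢; omega) ω
        linarith
      · intro k hk
        have h3 := hCr k (by rw [Finset.mem_Icc] at hk ⊢; omega) ω
        have := le_max_left (Cr k) 0
        linarith
    have hαpos := hα t ht
    refine ⟨CB / α t * K, ?_⟩
    filter_upwards [hK] with ω hω
    have hBpos : (0:ℝ) < B t ω := lt_of_lt_of_le one_pos (hB1 t h2 ω)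
    simp only [hXdef]
    rw [abs_mul, abs_neg, abs_div, abs_of_pos hBpos, abs_of_pos hαpos]
    apply mul_le_mul _ hω (abs_nonneg _) _
    · exact (div_le_div_iff_of_pos_right hαpos).2 (hCB ω)
    · positivity
  have hXsum : ∀ᵐ ω ∂μ, ∑ t ∈ Finset.Icc 1 T, X t ω / B t ω = W ω := by
    have hallpos : ∀ᵐ ω ∂μ, ∀ k ∈ Finset.Icc 1 T, 0 < LL k ω := by
      rw [Filter.eventually_all_finset]
      exact fun k hk => (keyLL k hk).2.1.ae_pos
    filter_upwards [hallpos] with ω hω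
    have hlog : ∀ t ∈ Finset.Icc 1 T, Real.log (MM t ω)
        = Real.log (LL t ω)
          + ∑ k ∈ Finset.Icc 1 (t-1), (-(β (k+1) / α k)) * Real.log (LL k ω) := by
      intro t ht
      obtain ⟨h1, h2⟩ := Finset.mem_Icc.1 ht
      have hsub : ∀ k ∈ Finset.Icc 1 (t-1), k ∈ Finset.Icc 1 T := fun k hk => by
        rw [Finset.mem_Icc] at *; omega
      simp only [hMMdef]
      rw [Real.log_mul (hω t ht).ne'
        (Finset.prod_ne_zero_iff.2 fun k hk => (Real.rpow_pos_of_pos (hω k (hsub k hk)) _).ne'),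
        Real.log_prod (fun k hk => (Real.rpow_pos_of_pos (hω k (hsub k hk)) _).ne')]
      congr 1
      apply Finset.sum_congr rfl
      intro k hk
      rw [Real.log_rpow (hω k (hsub k hk))]
    calc ∑ t ∈ Finset.Icc 1 T, X t ω / B t ω
        = ∑ t ∈ Finset.Icc 1 T, -((1 / α t) * (Real.log (LL t ω)
            + ∑ k ∈ Finset.Icc 1 (t-1), (-(β (k+1) / α k)) * Real.log (LL k ω))) := by
          apply Finset.sum_congr rfl
          intro t ht
          rw [hXtilde t ht ω, hlog t ht]
          ring
      _ = -((1 / α T) * Real.log (LL T ω)) := by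
          rw [Finset.sum_neg_distrib,
            ExpAllocHelper.telescope_sum T hT α β hα hβ (fun k => Real.log (LL k ω))]
      _ = W ω := by
          rw [hLL_T]
          simp only [Real.log_exp]
          have := (hα T (Finset.mem_Icc.2 ⟨hT, le_refl T⟩)).ne'
          field_simp
  have hXalloc : IsAlloc μ T ℱ B W X := ⟨fun t ht => ⟨hXmeas t ht, hXbdd t ht⟩, hXsum⟩
  -- measurability/boundedness of discounted allocations
  have hZfacts : ∀ (Y : ℕ → Ω → ℝ), IsAlloc μ T ℱ B W Y → ∀ t ∈ Finset.Icc 1 T,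
      Measurable[ℱ t] (fun ω => Y t ω / B t ω) ∧ ∃ C, ∀ᵐ ω ∂μ, |Y t ω / B t ω| ≤ C := by
    intro Y hY t ht
    obtain ⟨h1, h2⟩ := Finset.mem_Icc.1 ht
    obtain ⟨hYmeas, CY, hCY⟩ := hY.1 t ht
    refine ⟨hYmeas.div (hBmeas t h2), CY, ?_⟩
    filter_upwards [hCY] with ω hω
    rw [abs_div, abs_of_pos (lt_of_lt_of_le one_pos (hB1 t h2 ω))]
    calc |Y t ω| / B t ω ≤ |Y t ω| := div_le_self (abs_nonneg _) (hB1 t h2 ω)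
      _ ≤ CY := hω
  -- integrability of utility terms
  have hu_int : ∀ t ∈ Finset.Icc 1 T, ∀ (Z : Ω → ℝ), Measurable[ℱ t] Z →
      (∃ C, ∀ᵐ ω ∂μ, |Z ω| ≤ C) → Integrable (fun ω => u t (Z ω)) μ := by
    rintro t ht Z hZm ⟨C, hC⟩
    have hαpos := hα t ht
    have heq : (fun ω => u t (Z ω)) = fun ω => (1 / α t) * (1 - Real.exp (-(α t) * Z ω)) := by
      funext ω; exact hu t (Z ω)
    rw [heq]
    apply ExpAllocHelper.integrable_of_ae_bdd
    · exact ((measurable_const.sub (Real.measurable_exp.comp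
        ((hZm.mono (hℱle t) le_rfl).const_mul (-(α t))))).const_mul (1 / α t)).aestronglyMeasurable
    · refine ⟨(1 / α t) * (1 + Real.exp (α t * C)), ?_⟩
      filter_upwards [hC] with ω hω
      rw [abs_mul, abs_of_pos (by positivity : (0:ℝ) < 1 / α t)]
      apply mul_le_mul_of_nonneg_left _ (by positivity)
      have h1 : Real.exp (-(α t) * Z ω) ≤ Real.exp (α t * C) :=
        Real.exp_le_exp.2 (by nlinarith [(_root_.abs_le.1 hω).1, (_root_.abs_le.1 hω).2])
      have h2 : (0:ℝ) < Real.exp (-(α t) * Z ω) := Real.exp_pos _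
      rw [_root_.abs_le]
      constructor <;> nlinarith [Real.exp_pos (α t * C)]
  -- integrability of MM times discounted allocation
  have hintMZ : ∀ (Y : ℕ → Ω → ℝ), IsAlloc μ T ℱ B W Y → ∀ t ∈ Finset.Icc 1 T,
      Integrable (fun ω => MM t ω * (Y t ω / B t ω)) μ := by
    intro Y hY t ht
    obtain ⟨hZm, CZ, hCZ⟩ := hZfacts Y hY t ht
    exact (hint_MM t ht).bdd_mul ((hZm.mono (hℱle t) le_rfl).aestronglyMeasurable)
      (by simpa only [Real.norm_eq_abs] using hCZ) |>.congr
      (Filter.Eventually.of_forall fun ω => by ring)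
  -- tangent-line inequality, integrated
  have hopt : ∀ Y, IsAlloc μ T ℱ B W Y → allocVal μ T u B Y ≤ allocVal μ T u B X := by
    intro Y hY
    have hptwise : ∀ t ∈ Finset.Icc 1 T, ∀ᵐ ω ∂μ,
        u t (Y t ω / B t ω) ≤ u t (X t ω / B t ω)
          + MM t ω * (Y t ω / B t ω - X t ω / B t ω) := by
      intro t ht
      filter_upwards [hMMexp t ht] with ω hω
      rw [hu t _, hu t _, ← hω]
      exact ExpAllocHelper.exp_util_tangent (hα t ht)
    have int1 : ∀ t ∈ Finset.Icc 1 T, Integrable (fun ω => u t (Y t ω / B t ω)) μ :=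
      fun t ht => hu_int t ht _ (hZfacts Y hY t ht).1 (hZfacts Y hY t ht).2
    have int2 : ∀ t ∈ Finset.Icc 1 T, Integrable (fun ω => u t (X t ω / B t ω)) μ :=
      fun t ht => hu_int t ht _ (hZfacts X hXalloc t ht).1 (hZfacts X hXalloc t ht).2
    have intMMdiff : ∀ t ∈ Finset.Icc 1 T,
        Integrable (fun ω => MM t ω * (Y t ω / B t ω - X t ω / B t ω)) μ := by
      intro t ht
      exact ((hintMZ Y hY t ht).sub (hintMZ X hXalloc t ht)).congr
        (Filter.Eventually.of_forall fun ω => by simp; ring)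
    have hIle : ∀ t ∈ Finset.Icc 1 T, ∫ ω, u t (Y t ω / B t ω) ∂μ
        ≤ ∫ ω, u t (X t ω / B t ω) ∂μ
          + ∫ ω, MM t ω * (Y t ω / B t ω - X t ω / B t ω) ∂μ := by
      intro t ht
      rw [← integral_add (int2 t ht) (intMMdiff t ht)]
      exact integral_mono_ae (int1 t ht) ((int2 t ht).add (intMMdiff t ht)) (hptwise t ht)
    have hzero : ∑ t ∈ Finset.Icc 1 T,
        ∫ ω, MM t ω * (Y t ω / B t ω - X t ω / B t ω) ∂μ = 0 := by
      have hsplit : ∀ t ∈ Finset.Icc 1 T,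
          ∫ ω, MM t ω * (Y t ω / B t ω - X t ω / B t ω) ∂μ
            = ∫ ω, MM t ω * (Y t ω / B t ω) ∂μ - ∫ ω, MM t ω * (X t ω / B t ω) ∂μ := by
        intro t ht
        rw [← integral_sub (hintMZ Y hY t ht) (hintMZ X hXalloc t ht)]
        apply integral_congr_ae
        exact Filter.Eventually.of_forall fun ω => by simp; ring
      rw [Finset.sum_congr rfl hsplit, Finset.sum_sub_distrib,
        hEsum Y hY, hEsum X hXalloc, sub_self]
    have hfinal : allocVal μ T u B Y ≤ allocVal μ T u B X
        + ∑ t ∈ Finset.Icc 1 T, ∫ ω, MM t ω * (Y t ω / B t ω - X t ω / B t ω) ∂μ := by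
      unfold allocVal
      rw [← Finset.sum_add_distrib]
      exact Finset.sum_le_sum hIle
    rw [hzero, add_zero] at hfinal
    exact hfinal
  refine ⟨X, ⟨hXalloc, hopt⟩, ?_, ?_⟩
  · intro t ht
    filter_upwards [hMMexp t ht, (keyMM t ht).2.2] with ω h1 h2
    exact h1.trans h2
  · -- uniqueness
    intro X' hX'alloc hX'opt t ht
    obtain ⟨ht1, ht2⟩ := Finset.mem_Icc.1 ht
    have heqval : allocVal μ T u B X' = allocVal μ T u B X :=
      le_antisymm (hopt X' hX'alloc) (hX'opt X hXalloc)
    set g : ℕ → Ω → ℝ := fun s ω => MM s ω * (X' s ω / B s ω - X s ω / B s ω)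
      + u s (X s ω / B s ω) - u s (X' s ω / B s ω) with hgdef
    have hg_nonneg : ∀ s ∈ Finset.Icc 1 T, ∀ᵐ ω ∂μ, 0 ≤ g s ω := by
      intro s hs
      filter_upwards [hMMexp s hs] with ω hω
      have h1 : u s (X' s ω / B s ω) ≤ u s (X s ω / B s ω)
          + MM s ω * (X' s ω / B s ω - X s ω / B s ω) := by
        rw [hu s _, hu s _, ← hω]
        exact ExpAllocHelper.exp_util_tangent (hα s hs)
      simp only [hgdef]
      linarith
    have intMMdiff : ∀ s ∈ Finset.Icc 1 T,
        Integrable (fun ω => MM s ω * (X' s ω / B s ω - X s ω / B s ω)) μ := by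
      intro s hs
      exact ((hintMZ X' hX'alloc s hs).sub (hintMZ X hXalloc s hs)).congr
        (Filter.Eventually.of_forall fun ω => by simp; ring)
    have intuX : ∀ s ∈ Finset.Icc 1 T, Integrable (fun ω => u s (X s ω / B s ω)) μ :=
      fun s hs => hu_int s hs _ (hZfacts X hXalloc s hs).1 (hZfacts X hXalloc s hs).2
    have intuX' : ∀ s ∈ Finset.Icc 1 T, Integrable (fun ω => u s (X' s ω / B s ω)) μ :=
      fun s hs => hu_int s hs _ (hZfacts X' hX'alloc s hs).1 (hZfacts X' hX'alloc s hs).2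
    have hg_int : ∀ s ∈ Finset.Icc 1 T, Integrable (g s) μ := by
      intro s hs
      have := ((intMMdiff s hs).add (intuX s hs)).sub (intuX' s hs)
      exact this.congr (Filter.Eventually.of_forall fun ω => by simp [hgdef])
    have hg_split : ∀ s ∈ Finset.Icc 1 T, ∫ ω, g s ω ∂μ
        = (∫ ω, MM s ω * (X' s ω / B s ω) ∂μ - ∫ ω, MM s ω * (X s ω / B s ω) ∂μ)
          + ∫ ω, u s (X s ω / B s ω) ∂μ - ∫ ω, u s (X' s ω / B s ω) ∂μ := by
      intro s hs
      have hadd : ∫ ω, (MM s ω * (X' s ω / B s ω - X s ω / B s ω) + u s (X s ω / B s ω)) ∂μ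
          = ∫ ω, MM s ω * (X' s ω / B s ω - X s ω / B s ω) ∂μ
            + ∫ ω, u s (X s ω / B s ω) ∂μ :=
        integral_add (intMMdiff s hs) (intuX s hs)
      have hsub : ∫ ω, ((MM s ω * (X' s ω / B s ω - X s ω / B s ω) + u s (X s ω / B s ω))
            - u s (X' s ω / B s ω)) ∂μ
          = ∫ ω, (MM s ω * (X' s ω / B s ω - X s ω / B s ω) + u s (X s ω / B s ω)) ∂μ
            - ∫ ω, u s (X' s ω / B s ω) ∂μ :=
        integral_sub ((intMMdiff s hs).add (intuX s hs)) (intuX' s hs)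
      have e1 : ∫ ω, g s ω ∂μ = ∫ ω, MM s ω * (X' s ω / B s ω - X s ω / B s ω) ∂μ
          + ∫ ω, u s (X s ω / B s ω) ∂μ - ∫ ω, u s (X' s ω / B s ω) ∂μ := by
        simp only [hgdef]
        rw [hsub, hadd]
      rw [e1]
      congr 1
      rw [← integral_sub (hintMZ X' hX'alloc s hs) (hintMZ X hXalloc s hs)]
      congr 1
      apply integral_congr_ae
      exact Filter.Eventually.of_forall fun ω => by simp; ring
    have hg_sum : ∑ s ∈ Finset.Icc 1 T, ∫ ω, g s ω ∂μ = 0 := by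
      rw [Finset.sum_congr rfl hg_split]
      have e2 : ∀ s ∈ Finset.Icc 1 T,
          (∫ ω, MM s ω * (X' s ω / B s ω) ∂μ - ∫ ω, MM s ω * (X s ω / B s ω) ∂μ)
            + ∫ ω, u s (X s ω / B s ω) ∂μ - ∫ ω, u s (X' s ω / B s ω) ∂μ
          = ((∫ ω, MM s ω * (X' s ω / B s ω) ∂μ - ∫ ω, MM s ω * (X s ω / B s ω) ∂μ)
            + (∫ ω, u s (X s ω / B s ω) ∂μ - ∫ ω, u s (X' s ω / B s ω) ∂μ)) := by
        intro s hs; ring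
      rw [Finset.sum_congr rfl e2, Finset.sum_add_distrib, Finset.sum_sub_distrib,
        Finset.sum_sub_distrib, hEsum X' hX'alloc, hEsum X hXalloc, sub_self]
      have : ∑ s ∈ Finset.Icc 1 T, ∫ ω, u s (X s ω / B s ω) ∂μ
          - ∑ s ∈ Finset.Icc 1 T, ∫ ω, u s (X' s ω / B s ω) ∂μ
          = allocVal μ T u B X - allocVal μ T u B X' := rfl
      rw [zero_add, this, heqval, sub_self]
    have hg_each : ∫ ω, g t ω ∂μ = 0 := by
      have h0 : ∀ s ∈ Finset.Icc 1 T, 0 ≤ ∫ ω, g s ω ∂μ :=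
        fun s hs => integral_nonneg_of_ae (hg_nonneg s hs)
      exact (Finset.sum_eq_zero_iff_of_nonneg h0).1 hg_sum t ht
    rw [integral_eq_zero_iff_of_nonneg_ae (hg_nonneg t ht) (hg_int t ht)] at hg_each
    filter_upwards [hg_each, hMMexp t ht] with ω h0 hMe
    have h0' : g t ω = 0 := h0
    have hd : X' t ω / B t ω = X t ω / B t ω := by
      apply ExpAllocHelper.exp_util_tangent_eq (hα t ht)
      simp only [hgdef, hu, ← hMe] at h0'
      linarith
    have hBne : B t ω ≠ 0 := (lt_of_lt_of_le one_pos (hB1 t ht2 ω)).ne'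
    exact (div_left_inj' hBne).1 hd
end
end
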